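/- arXiv:1009.5581 — 7 statements merged into one kernel-verified Lean document; each statement's English description precedes it below -/
import Mathlib

section
/- Let μ satisfy μ(t) = b t^ρ + O(t^α) as t → ∞, with 0 < α < ρ < 1 and b > 0, and let K(z) = ∫₀^∞ dμ(t)/(z+t). Then K(z) = (bπρ/sin(πρ)) z^{ρ−1} + O(|z|^{α−1}) as |z| → ∞, uniformly in any sector |arg z| < π − δ. -/
open MeasureTheory Complex Real Set Filter Metric
set_option maxHeartbeats 1000000

/-- Sector lower bound: in the sector `|arg z| ≤ π - δ`, `|z+t| ≥ sin(δ/2)(|z|+t)`. -/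
lemma sector_bound {δ : ℝ} (hδ0 : 0 < δ) (hδπ : δ ≤ π) {z : ℂ} (hz : |z.arg| ≤ π - δ)
    {t : ℝ} (ht : 0 ≤ t) :
    Real.sin (δ/2) * (‖z‖ + t) ≤ ‖z + (t : ℂ)‖ := by
  have hs0 : 0 ≤ Real.sin (δ/2) := Real.sin_nonneg_of_nonneg_of_le_pi (by linarith) (by
    have := Real.pi_pos; linarith)
  have hs1 : Real.sin (δ/2) ≤ 1 := Real.sin_le_one _
  rcases eq_or_ne z 0 with rfl | hz0
  · simp only [norm_zero, zero_add]
    rw [Complex.norm_real, Real.norm_eq_abs, _root_.abs_of_nonneg ht]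
    nlinarith
  · have hcos : Real.cos (π - δ) * ‖z‖ ≤ z.re := by
      have h1 : Real.cos (π - δ) ≤ Real.cos |z.arg| := by
        apply Real.cos_le_cos_of_nonneg_of_le_pi (abs_nonneg _) (by linarith) hz
      have h2 : Real.cos |z.arg| = z.re / ‖z‖ := by
        rw [Real.cos_abs, Complex.cos_arg hz0]
      have h3 : (0:ℝ) < ‖z‖ := by
        exact norm_pos_iff.mpr hz0
      rw [h2] at h1
      calc Real.cos (π - δ) * ‖z‖ ≤ (z.re / ‖z‖) * ‖z‖ := by
            exact mul_le_mul_of_nonneg_right h1 h3.le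
        _ = z.re := by field_simp
    rw [Real.cos_pi_sub] at hcos
    -- square both sides
    have hsq : (Real.sin (δ/2) * (‖z‖ + t))^2 ≤ (‖z + (t:ℂ)‖)^2 := by
      have habs2 : (‖z + (t:ℂ)‖)^2 = (z.re + t)^2 + z.im^2 := by
        rw [Complex.sq_norm, Complex.normSq_apply]
        simp [Complex.add_re, Complex.add_im]
        ring
      have hz2 : (‖z‖)^2 = z.re^2 + z.im^2 := by
        rw [Complex.sq_norm, Complex.normSq_apply]; ring
      have hs2 : Real.sin (δ/2)^2 = 1/2 - Real.cos δ / 2 := by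
        have h := Real.cos_sq (δ/2)
        have h2 := Real.sin_sq_add_cos_sq (δ/2)
        rw [show 2*(δ/2) = δ by ring] at h
        linarith
      have hc1 : -1 ≤ Real.cos δ := Real.neg_one_le_cos δ
      have hc2 : Real.cos δ ≤ 1 := Real.cos_le_one δ
      have ha0 : 0 ≤ ‖z‖ := norm_nonneg z
      rw [habs2]
      nlinarith [sq_nonneg (‖z‖ - t), sq_nonneg (‖z‖ + t),
        mul_nonneg ht ha0, mul_le_mul_of_nonneg_right hcos ht]
    calc Real.sin (δ/2) * (‖z‖ + t)
        = √((Real.sin (δ/2) * (‖z‖ + t))^2) := by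
          rw [Real.sqrt_sq (by positivity)]
      _ ≤ √((‖z + (t:ℂ)‖)^2) := Real.sqrt_le_sqrt hsq
      _ = ‖z + (t:ℂ)‖ := Real.sqrt_sq (norm_nonneg _)

/-- integrability and value of `∫_{Ioi t} (a+s)^{-2} ds = (a+t)⁻¹`. -/
lemma inv_sq_facts {a : ℝ} (ha : 0 < a) {t : ℝ} (ht : 0 ≤ t) :
    IntegrableOn (fun s : ℝ => ((a + s)^2)⁻¹) (Set.Ioi t) volume ∧
      ∫ s in Set.Ioi t, ((a + s)^2)⁻¹ = (a + t)⁻¹ := by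
  have hderiv : ∀ x ∈ Set.Ioi t, HasDerivAt (fun s : ℝ => -(a + s)⁻¹) (((a + x)^2)⁻¹) x := by
    intro x hx
    have hax : a + x ≠ 0 := by have : (0:ℝ) < x := lt_of_le_of_lt ht hx; positivity
    have h1 : HasDerivAt (fun s : ℝ => a + s) 1 x := (hasDerivAt_id x).const_add a
    have h2 := h1.inv hax
    exact h2.neg.congr_deriv (by ring)
  have hcont : ContinuousWithinAt (fun s : ℝ => -(a + s)⁻¹) (Set.Ici t) t := by
    have hax : a + t ≠ 0 := by positivity
    exact (((continuous_const.add continuous_id).continuousAt).inv₀ hax).neg.continuousWithinAt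
  have hnonneg : ∀ x ∈ Set.Ioi t, 0 ≤ ((a + x)^2)⁻¹ := fun x _ => by positivity
  have htend : Tendsto (fun s : ℝ => -(a + s)⁻¹) atTop (nhds 0) := by
    rw [show (0:ℝ) = -0 by ring]
    apply Tendsto.neg
    exact (tendsto_atTop_add_const_left _ a tendsto_id).inv_tendsto_atTop
  constructor
  · exact integrableOn_Ioi_deriv_of_nonneg hcont hderiv hnonneg htend
  · rw [integral_Ioi_of_hasDerivAt_of_nonneg hcont hderiv hnonneg htend]
    ring


lemma rpow_int_aux {β a : ℝ} (hβ0 : 0 < β) (hβ1 : β < 1) (ha : 0 < a) :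
    IntegrableOn (fun s : ℝ => s ^ β * ((a + s)^2)⁻¹) (Set.Ioi 0) volume ∧
      ∫ s in Set.Ioi 0, s ^ β * ((a + s)^2)⁻¹ ≤ (1/(β+1) + 1/(1-β)) * a ^ (β - 1) := by
  have hmeas : ∀ u : Set ℝ, AEStronglyMeasurable (fun s : ℝ => s ^ β * ((a + s)^2)⁻¹)
      (volume.restrict u) := by
    intro u
    apply Measurable.aestronglyMeasurable
    have h1 : Measurable (fun s : ℝ => s ^ β) := by fun_prop
    exact h1.mul (((measurable_const.add measurable_id).pow_const 2).inv)
  -- on Ioc 0 a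
  have hint1 : IntegrableOn (fun s : ℝ => s ^ β * (a^2)⁻¹) (Set.Ioc 0 a) volume := by
    have h : IntegrableOn (fun s : ℝ => s ^ β) (Set.Ioc 0 a) volume := by
      rw [← intervalIntegrable_iff_integrableOn_Ioc_of_le ha.le]
      exact intervalIntegral.intervalIntegrable_rpow' (by linarith)
    exact h.mul_const _
  have hb1 : ∀ s ∈ Set.Ioc (0:ℝ) a, ‖s ^ β * ((a + s)^2)⁻¹‖ ≤ s ^ β * (a^2)⁻¹ := by
    intro s hs
    rw [Real.norm_of_nonneg (mul_nonneg (Real.rpow_nonneg hs.1.le _) (by positivity))]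
    apply mul_le_mul_of_nonneg_left _ (Real.rpow_nonneg hs.1.le β)
    apply inv_anti₀ (by positivity)
    nlinarith [hs.1.le]
  have hI1 : IntegrableOn (fun s : ℝ => s ^ β * ((a + s)^2)⁻¹) (Set.Ioc 0 a) volume := by
    apply Integrable.mono' hint1 (hmeas _)
    filter_upwards [ae_restrict_mem measurableSet_Ioc] with s hs using hb1 s hs
  -- on Ioi a
  have hint2 : IntegrableOn (fun s : ℝ => s ^ (β - 2)) (Set.Ioi a) volume :=
    integrableOn_Ioi_rpow_of_lt (by linarith) ha
  have hb2 : ∀ s ∈ Set.Ioi a, ‖s ^ β * ((a + s)^2)⁻¹‖ ≤ s ^ (β - 2) := by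
    intro s hs
    have hs0 : (0:ℝ) < s := lt_trans ha hs
    rw [Real.norm_of_nonneg (mul_nonneg (Real.rpow_nonneg hs0.le _) (by positivity))]
    have h1 : ((a + s)^2)⁻¹ ≤ (s^2)⁻¹ := by
      apply inv_anti₀ (by positivity)
      nlinarith
    calc s ^ β * ((a + s)^2)⁻¹ ≤ s ^ β * (s^2)⁻¹ :=
          mul_le_mul_of_nonneg_left h1 (by positivity)
      _ = s ^ (β - 2) := by
          rw [Real.rpow_sub hs0, Real.rpow_two]
          rw [div_eq_mul_inv]
  have hI2 : IntegrableOn (fun s : ℝ => s ^ β * ((a + s)^2)⁻¹) (Set.Ioi a) volume := by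
    apply Integrable.mono' hint2 (hmeas _)
    filter_upwards [ae_restrict_mem measurableSet_Ioi] with s hs using hb2 s hs
  have hunion : Set.Ioc (0:ℝ) a ∪ Set.Ioi a = Set.Ioi 0 := Set.Ioc_union_Ioi_eq_Ioi ha.le
  have hI : IntegrableOn (fun s : ℝ => s ^ β * ((a + s)^2)⁻¹) (Set.Ioi 0) volume := by
    rw [← hunion]; exact hI1.union hI2
  refine ⟨hI, ?_⟩
  have hdisj : Disjoint (Set.Ioc (0:ℝ) a) (Set.Ioi a) := Set.Ioc_disjoint_Ioi le_rfl
  have hsplit : ∫ s in Set.Ioi 0, s ^ β * ((a + s)^2)⁻¹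
      = (∫ s in Set.Ioc 0 a, s ^ β * ((a + s)^2)⁻¹) + ∫ s in Set.Ioi a, s ^ β * ((a + s)^2)⁻¹ := by
    rw [← hunion, setIntegral_union hdisj measurableSet_Ioi hI1 hI2]
  have hval1 : (∫ s in Set.Ioc 0 a, s ^ β * ((a + s)^2)⁻¹) ≤ 1/(β+1) * a ^ (β - 1) := by
    have h1 : (∫ s in Set.Ioc 0 a, s ^ β * ((a + s)^2)⁻¹) ≤ ∫ s in Set.Ioc 0 a, s ^ β * (a^2)⁻¹ := by
      apply setIntegral_mono_on hI1 hint1 measurableSet_Ioc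
      intro s hs
      calc s ^ β * ((a + s)^2)⁻¹ ≤ ‖s ^ β * ((a + s)^2)⁻¹‖ := le_norm_self _
        _ ≤ s ^ β * (a^2)⁻¹ := hb1 s hs
    have h2 : (∫ s in Set.Ioc 0 a, s ^ β * (a^2)⁻¹) = (a ^ (β+1) / (β+1)) * (a^2)⁻¹ := by
      rw [integral_mul_const]
      congr 1
      rw [← intervalIntegral.integral_of_le ha.le]
      rw [integral_rpow (Or.inl (by linarith))]
      rw [Real.zero_rpow (by linarith : β + 1 ≠ 0)]
      ring
    have h3 : (a ^ (β+1) / (β+1)) * (a^2)⁻¹ = 1/(β+1) * a ^ (β - 1) := by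
      have : (a^2)⁻¹ = a ^ (-2 : ℝ) := by
        rw [Real.rpow_neg ha.le, Real.rpow_two]
      rw [this, div_mul_eq_mul_div, ← Real.rpow_add ha]
      rw [show β + 1 + -2 = β - 1 by ring]
      ring
    linarith
  have hval2 : (∫ s in Set.Ioi a, s ^ β * ((a + s)^2)⁻¹) ≤ 1/(1-β) * a ^ (β - 1) := by
    have h1 : (∫ s in Set.Ioi a, s ^ β * ((a + s)^2)⁻¹) ≤ ∫ s in Set.Ioi a, s ^ (β - 2) := by
      apply setIntegral_mono_on hI2 hint2 measurableSet_Ioi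
      intro s hs
      calc s ^ β * ((a + s)^2)⁻¹ ≤ ‖s ^ β * ((a + s)^2)⁻¹‖ := le_norm_self _
        _ ≤ s ^ (β - 2) := hb2 s hs
    have h2 : (∫ s in Set.Ioi a, s ^ (β - 2)) = 1/(1-β) * a ^ (β - 1) := by
      rw [integral_Ioi_rpow_of_lt (by linarith) ha]
      rw [show β - 2 + 1 = β - 1 by ring]
      have h1 : β - 1 ≠ 0 := by linarith
      have h2 : (1:ℝ) - β ≠ 0 := by linarith
      field_simp
      ring
    linarith
  linarith


lemma beta_value {ρ : ℝ} (hρ0 : 0 < ρ) (hρ1 : ρ < 1) :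
    ∫ s in Set.Ioo (0:ℝ) 1, s ^ ρ * (1 - s) ^ (-ρ) = π * ρ / Real.sin (π * ρ) := by
  have hρC : (ρ : ℂ) ≠ 0 := by exact_mod_cast hρ0.ne'
  have h1 : Complex.Gamma ((ρ:ℂ) + 1) * Complex.Gamma (1 - (ρ:ℂ))
      = Complex.Gamma (((ρ:ℂ)+1) + (1 - (ρ:ℂ))) * Complex.betaIntegral ((ρ:ℂ)+1) (1-(ρ:ℂ)) := by
    apply Complex.Gamma_mul_Gamma_eq_betaIntegral
    · simp [hρ0.le]; linarith
    · simp; linarith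
  have h2 : ((ρ:ℂ)+1) + (1 - (ρ:ℂ)) = 2 := by ring
  have h3 : Complex.Gamma 2 = 1 := by
    rw [show (2:ℂ) = 1 + 1 by ring, Complex.Gamma_add_one 1 one_ne_zero, Complex.Gamma_one]
    ring
  rw [h2, h3, one_mul] at h1
  have h4 : Complex.Gamma ((ρ:ℂ) + 1) = (ρ:ℂ) * Complex.Gamma (ρ:ℂ) :=
    Complex.Gamma_add_one _ hρC
  have h5 : Complex.Gamma (ρ:ℂ) * Complex.Gamma (1 - (ρ:ℂ)) = (π:ℂ) / Complex.sin ((π:ℂ) * ρ) :=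
    Complex.Gamma_mul_Gamma_one_sub ρ
  have hbeta : Complex.betaIntegral ((ρ:ℂ)+1) (1-(ρ:ℂ)) = (ρ:ℂ) * ((π:ℂ) / Complex.sin ((π:ℂ) * ρ)) := by
    rw [← h1, h4]
    rw [mul_assoc, h5]
  -- now express betaIntegral as a real integral
  have hreal : Complex.betaIntegral ((ρ:ℂ)+1) (1-(ρ:ℂ))
      = ((∫ s in Set.Ioo (0:ℝ) 1, s ^ ρ * (1 - s) ^ (-ρ) : ℝ) : ℂ) := by
    rw [Complex.betaIntegral]
    rw [intervalIntegral.integral_of_le zero_le_one, MeasureTheory.integral_Ioc_eq_integral_Ioo]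
    have hc : ∫ t in Set.Ioo (0:ℝ) 1, ((t:ℂ) ^ ((ρ:ℂ) + 1 - 1) * (1 - (t:ℂ)) ^ (1 - (ρ:ℂ) - 1))
        = ∫ t in Set.Ioo (0:ℝ) 1, ((t ^ ρ * (1 - t) ^ (-ρ) : ℝ) : ℂ) := by
      apply setIntegral_congr_fun measurableSet_Ioo
      intro x hx
      have hx0 : (0:ℝ) ≤ x := hx.1.le
      have hx1 : (0:ℝ) ≤ 1 - x := by linarith [hx.2]
      simp only [Complex.ofReal_mul]
      rw [Complex.ofReal_cpow hx0, Complex.ofReal_cpow hx1]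
      push_cast
      try ring_nf
    rw [hc]
    exact integral_ofReal
  rw [hreal] at hbeta
  have hsin : Complex.sin ((π:ℂ) * ρ) = ((Real.sin (π * ρ) : ℝ) : ℂ) := by
    rw [Complex.ofReal_sin]
    push_cast
    ring_nf
  rw [hsin] at hbeta
  have hsinne : Real.sin (π * ρ) ≠ 0 := by
    apply ne_of_gt
    apply Real.sin_pos_of_pos_of_lt_pi (by positivity)
    have := Real.pi_pos
    nlinarith
  have : ((∫ s in Set.Ioo (0:ℝ) 1, s ^ ρ * (1 - s) ^ (-ρ) : ℝ) : ℂ)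
      = (((π * ρ / Real.sin (π * ρ) : ℝ)) : ℂ) := by
    rw [hbeta]
    push_cast
    field_simp
  exact_mod_cast this

lemma real_case {ρ : ℝ} (hρ0 : 0 < ρ) (hρ1 : ρ < 1) {x : ℝ} (hx : 0 < x) :
    ∫ t in Set.Ioi (0:ℝ), t ^ ρ * ((x + t)^2)⁻¹
      = (π * ρ / Real.sin (π * ρ)) * x ^ (ρ - 1) := by
  set φ : ℝ → ℝ := fun s => x * s / (1 - s) with hφ
  have himg : φ '' Set.Ioo 0 1 = Set.Ioi 0 := by
    ext y
    constructor
    · rintro ⟨s, hs, rfl⟩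
      have h1 : 0 < 1 - s := by linarith [hs.2]
      exact div_pos (mul_pos hx hs.1) h1
    · intro hy
      have hy0 : (0:ℝ) < y := hy
      refine ⟨y / (x + y), ⟨by positivity, ?_⟩, ?_⟩
      · rw [div_lt_one (by positivity)]; linarith
      · rw [hφ]
        have hxy : x + y ≠ 0 := by positivity
        field_simp [hx.ne']
        try ring
  have hderiv : ∀ s ∈ Set.Ioo (0:ℝ) 1, HasDerivWithinAt φ (x / (1 - s)^2) (Set.Ioo 0 1) s := by
    intro s hs
    have h1s : (1:ℝ) - s ≠ 0 := by nlinarith [hs.2]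
    have h1 : HasDerivAt (fun s : ℝ => x * s) x s := by
      simpa using (hasDerivAt_id s).const_mul x
    have h2 : HasDerivAt (fun s : ℝ => 1 - s) (-1) s := by
      simpa using ((hasDerivAt_id s).const_sub 1)
    have h3 := h1.div h2 h1s
    have : (x * (1 - s) - x * s * (-1)) / (1 - s)^2 = x / (1 - s)^2 := by
      field_simp
      ring
    rw [this] at h3
    exact h3.hasDerivWithinAt
  have hinj : Set.InjOn φ (Set.Ioo 0 1) := by
    intro s₁ hs₁ s₂ hs₂ h
    have h1 : (1:ℝ) - s₁ ≠ 0 := by nlinarith [hs₁.2]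
    have h2 : (1:ℝ) - s₂ ≠ 0 := by nlinarith [hs₂.2]
    rw [hφ] at h
    field_simp at h
    nlinarith [h]
  rw [← himg, integral_image_eq_integral_abs_deriv_smul measurableSet_Ioo hderiv hinj]
  have hcongr : ∀ s ∈ Set.Ioo (0:ℝ) 1,
      |x / (1 - s)^2| • (φ s ^ ρ * ((x + φ s)^2)⁻¹)
        = x ^ (ρ - 1) * (s ^ ρ * (1 - s) ^ (-ρ)) := by
    intro s hs
    have h0s : 0 < s := hs.1
    have h1s : (0:ℝ) < 1 - s := by linarith [hs.2]
    have habs : |x / (1 - s)^2| = x / (1 - s)^2 := abs_of_pos (by positivity)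
    have e1 : x + φ s = x / (1 - s) := by
      rw [hφ]; field_simp; ring
    have e2 : φ s ^ ρ = x ^ ρ * s ^ ρ * ((1 - s) ^ ρ)⁻¹ := by
      rw [hφ]
      show (x * s / (1 - s)) ^ ρ = _
      rw [Real.div_rpow (by positivity) h1s.le, Real.mul_rpow hx.le h0s.le]
      rw [div_eq_mul_inv]
    have e4 : (1 - s) ^ (-ρ) = ((1 - s) ^ ρ)⁻¹ := Real.rpow_neg h1s.le ρ
    have e5 : x ^ (ρ - 1) = x ^ ρ / x := by
      rw [Real.rpow_sub hx, Real.rpow_one]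
    rw [habs, smul_eq_mul, e1, e2, e4, e5]
    have hx2 : ((x / (1-s))^2)⁻¹ = (1-s)^2 / x^2 := by
      rw [div_pow]
      rw [inv_div]
    rw [hx2]
    have hxρ : (0:ℝ) < x ^ ρ := Real.rpow_pos_of_pos hx ρ
    have hsρ : (0:ℝ) < (1-s) ^ ρ := Real.rpow_pos_of_pos h1s ρ
    field_simp
  rw [setIntegral_congr_fun measurableSet_Ioo hcongr]
  rw [MeasureTheory.integral_const_mul]
  rw [beta_value hρ0 hρ1]
  ring


lemma abs_arg_lt_pi_of_slitPlane {z : ℂ} (hz : z ∈ Complex.slitPlane) : |z.arg| < π := by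
  rcases lt_or_eq_of_le (Complex.arg_le_pi z) with h | h
  · rw [abs_lt]; exact ⟨Complex.neg_pi_lt_arg z, h⟩
  · exfalso
    rw [Complex.arg_eq_pi_iff] at h
    rw [Complex.mem_slitPlane_iff] at hz
    rcases hz with h' | h'
    · linarith [h.1]
    · exact h' h.2

/-- Differentiability of the parameter integral on the slit plane. -/
lemma F_differentiableAt {ρ : ℝ} (hρ0 : 0 < ρ) (hρ1 : ρ < 1) {z₀ : ℂ}
    (hz : z₀ ∈ Complex.slitPlane) :
    DifferentiableAt ℂ
      (fun z : ℂ => ∫ t in Set.Ioi (0:ℝ), ((t ^ ρ : ℝ) : ℂ) * (((z + (t:ℂ))^2)⁻¹)) z₀ := by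
  have hz0 : z₀ ≠ 0 := Complex.slitPlane_ne_zero hz
  have habs0 : 0 < ‖z₀‖ := norm_pos_iff.mpr hz0
  set θ := |z₀.arg| with hθdef
  have hθ : θ < π := abs_arg_lt_pi_of_slitPlane hz
  set δ' := (π - θ)/2 with hδ'def
  have hθ0 : 0 ≤ θ := abs_nonneg _
  have hδ'0 : 0 < δ' := by rw [hδ'def]; linarith
  have hδ'π : δ' ≤ π := by rw [hδ'def]; have := Real.pi_pos; linarith
  set r₀ := ‖z₀‖ / 2 with hr₀def
  have hr₀ : 0 < r₀ := half_pos habs0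
  set c := Real.sin (δ'/2) with hcdef
  have hc0 : 0 < c := by
    rw [hcdef]
    apply Real.sin_pos_of_pos_of_lt_pi (by linarith)
    have := Real.pi_pos; linarith
  -- eventually property
  have hev : ∀ᶠ w in nhds z₀, |w.arg| ≤ π - δ' ∧ r₀ ≤ ‖w‖ := by
    have h1 : ∀ᶠ w in nhds z₀, |w.arg| < π - δ' := by
      apply Tendsto.eventually_lt_const _ ((Complex.continuousAt_arg hz).abs)
      rw [hδ'def]; linarith
    have h2 : ∀ᶠ w in nhds z₀, r₀ < ‖w‖ := by
      apply Tendsto.eventually_const_lt _ (continuous_norm.continuousAt)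
      rw [hr₀def]; linarith
    filter_upwards [h1, h2] with w hw1 hw2 using ⟨hw1.le, hw2.le⟩
  rw [Metric.eventually_nhds_iff] at hev
  obtain ⟨ε, hε0, hε⟩ := hev
  -- key lower bound on the ball
  have hlow : ∀ w : ℂ, dist w z₀ < ε → ∀ t : ℝ, 0 < t → c * (r₀ + t) ≤ ‖w + (t:ℂ)‖ := by
    intro w hw t ht
    obtain ⟨hw1, hw2⟩ := hε hw
    calc c * (r₀ + t) ≤ c * (‖w‖ + t) := by
          apply mul_le_mul_of_nonneg_left _ hc0.le
          linarith
      _ ≤ ‖w + (t:ℂ)‖ := sector_bound hδ'0 hδ'π hw1 ht.le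
  have hmeasF : ∀ w : ℂ, AEStronglyMeasurable (fun t : ℝ => ((t ^ ρ : ℝ) : ℂ) * (((w + (t:ℂ))^2)⁻¹))
      (volume.restrict (Set.Ioi 0)) := by
    intro w
    apply Measurable.aestronglyMeasurable
    have h1 : Measurable (fun t : ℝ => t ^ ρ) := by fun_prop
    apply (Complex.measurable_ofReal.comp h1).mul
    apply Measurable.inv
    apply Measurable.pow_const
    exact (measurable_const.add Complex.measurable_ofReal)
  have hIr : IntegrableOn (fun t : ℝ => t ^ ρ * ((r₀ + t)^2)⁻¹) (Set.Ioi 0) volume :=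
    (rpow_int_aux hρ0 hρ1 hr₀).1
  -- apply dominated differentiation
  have key := hasDerivAt_integral_of_dominated_loc_of_deriv_le (𝕜 := ℂ)
    (μ := volume.restrict (Set.Ioi (0:ℝ)))
    (F := fun w (t : ℝ) => ((t ^ ρ : ℝ) : ℂ) * (((w + (t:ℂ))^2)⁻¹))
    (F' := fun w (t : ℝ) => ((t ^ ρ : ℝ) : ℂ) * (-(2*(w + (t:ℂ))) / ((w + (t:ℂ))^2)^2))
    (x₀ := z₀) (bound := fun t => (2 * (c^3)⁻¹ * r₀⁻¹) * (t ^ ρ * ((r₀ + t)^2)⁻¹))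
    (Metric.ball_mem_nhds z₀ hε0) (Eventually.of_forall (fun w => hmeasF w)) ?_ ?_ ?_ ?_ ?_
  · exact key.2.differentiableAt
  · -- integrability at z₀
    apply Integrable.mono' (hIr.const_mul ((c^2)⁻¹)) (hmeasF z₀)
    filter_upwards [ae_restrict_mem measurableSet_Ioi] with t ht
    have ht0 : (0:ℝ) < t := ht
    have hlb := hlow z₀ (by simpa using hε0) t ht0
    have habs : (0:ℝ) < ‖z₀ + (t:ℂ)‖ := lt_of_lt_of_le (by positivity) hlb
    rw [norm_mul, norm_inv, norm_pow]
    rw [Complex.norm_real, Real.norm_eq_abs, _root_.abs_of_nonneg (Real.rpow_nonneg ht0.le _)]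
    have h2 : (c * (r₀ + t))^2 ≤ (‖z₀ + (t:ℂ)‖)^2 := by
      apply pow_le_pow_left₀ (by positivity) hlb
    calc t ^ ρ * (‖z₀ + (t:ℂ)‖ ^ 2)⁻¹
        ≤ t ^ ρ * ((c * (r₀ + t))^2)⁻¹ := by
          apply mul_le_mul_of_nonneg_left _ (Real.rpow_nonneg ht0.le _)
          exact inv_anti₀ (by positivity) h2
      _ = (c^2)⁻¹ * (t ^ ρ * ((r₀ + t)^2)⁻¹) := by
          rw [mul_pow]
          rw [mul_inv]
          ring
  · -- measurability of F' z₀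
    apply Measurable.aestronglyMeasurable
    have h1 : Measurable (fun t : ℝ => t ^ ρ) := by fun_prop
    apply (Complex.measurable_ofReal.comp h1).mul
    apply Measurable.div
    · exact ((measurable_const.add Complex.measurable_ofReal).const_mul 2).neg
    · exact ((measurable_const.add Complex.measurable_ofReal).pow_const 2).pow_const 2
  · -- bound
    filter_upwards [ae_restrict_mem measurableSet_Ioi] with t ht
    intro w hw
    have ht0 : (0:ℝ) < t := ht
    rw [Metric.mem_ball] at hw
    have hlb := hlow w hw t ht0
    have hpos : (0:ℝ) < c * (r₀ + t) := by positivity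
    have habs : 0 < ‖w + (t:ℂ)‖ := lt_of_lt_of_le hpos hlb
    rw [norm_mul, Complex.norm_real, Real.norm_eq_abs,
      _root_.abs_of_nonneg (Real.rpow_nonneg ht0.le _), norm_div, norm_neg, norm_mul, norm_pow,
      norm_pow]
    have e1 : ‖(2:ℂ)‖ = 2 := by norm_num
    rw [e1]
    have hh : 2 * ‖w + (t:ℂ)‖ / (‖w + (t:ℂ)‖ ^ 2)^2
        = 2 / ‖w + (t:ℂ)‖ ^ 3 := by
      field_simp
    rw [hh]
    have h3 : (c * (r₀ + t))^3 ≤ ‖w + (t:ℂ)‖ ^ 3 :=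
      pow_le_pow_left₀ hpos.le hlb 3
    calc t ^ ρ * (2 / ‖w + (t:ℂ)‖ ^ 3)
        ≤ t ^ ρ * (2 / (c * (r₀ + t))^3) := by
          apply mul_le_mul_of_nonneg_left _ (Real.rpow_nonneg ht0.le _)
          apply div_le_div_of_nonneg_left (by norm_num) (by positivity) h3
      _ ≤ 2 * (c^3)⁻¹ * r₀⁻¹ * (t ^ ρ * ((r₀ + t)^2)⁻¹) := by
          rw [mul_pow]
          have hr3 : (r₀ + t)^3 = (r₀ + t) * (r₀ + t)^2 := by ring
          have hkey : 2 / (c^3 * (r₀+t)^3) ≤ 2 / (c^3 * (r₀ * (r₀+t)^2)) := by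
            apply div_le_div_of_nonneg_left (by norm_num) (by positivity)
            apply mul_le_mul_of_nonneg_left _ (by positivity)
            rw [hr3]
            apply mul_le_mul_of_nonneg_right _ (by positivity)
            linarith
          calc t ^ ρ * (2 / (c^3 * (r₀+t)^3)) ≤ t ^ ρ * (2 / (c^3 * (r₀ * (r₀+t)^2))) := by
                apply mul_le_mul_of_nonneg_left hkey (Real.rpow_nonneg ht0.le _)
            _ = 2 * (c^3)⁻¹ * r₀⁻¹ * (t ^ ρ * ((r₀ + t)^2)⁻¹) := by
                field_simp
  · exact (hIr.const_mul _)
  · -- differentiability pointwise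
    filter_upwards [ae_restrict_mem measurableSet_Ioi] with t ht
    intro w hw
    have ht0 : (0:ℝ) < t := ht
    rw [Metric.mem_ball] at hw
    have hlb := hlow w hw t ht0
    have hne : w + (t:ℂ) ≠ 0 := by
      intro hcon
      rw [hcon] at hlb
      simp only [norm_zero] at hlb
      nlinarith [hlb]
    have h1 : HasDerivAt (fun w : ℂ => w + (t:ℂ)) 1 w := (hasDerivAt_id w).add_const _
    have h2 : HasDerivAt (fun w : ℂ => (w + (t:ℂ))^2) (2*(w + (t:ℂ))) w := by
      have := h1.pow 2
      exact this.congr_deriv (by push_cast; ring)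
    have h3 : HasDerivAt (fun w : ℂ => ((w + (t:ℂ))^2)⁻¹)
        (-(2*(w + (t:ℂ))) / ((w + (t:ℂ))^2)^2) w := by
      exact h2.inv (pow_ne_zero 2 hne)
    exact h3.const_mul _


lemma complex_case {ρ : ℝ} (hρ0 : 0 < ρ) (hρ1 : ρ < 1) {z : ℂ} (hzmem : z ∈ Complex.slitPlane) :
    ∫ t in Set.Ioi (0:ℝ), ((t ^ ρ : ℝ) : ℂ) * (((z + (t:ℂ))^2)⁻¹)
      = ((π * ρ / Real.sin (π * ρ) : ℝ) : ℂ) * z ^ ((ρ:ℂ) - 1) := by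
  set F : ℂ → ℂ := fun z => ∫ t in Set.Ioi (0:ℝ), ((t ^ ρ : ℝ) : ℂ) * (((z + (t:ℂ))^2)⁻¹) with hF
  set G : ℂ → ℂ := fun z => ((π * ρ / Real.sin (π * ρ) : ℝ) : ℂ) * z ^ ((ρ:ℂ) - 1) with hG
  have hFdiff : AnalyticOnNhd ℂ F Complex.slitPlane := by
    apply DifferentiableOn.analyticOnNhd _ Complex.isOpen_slitPlane
    intro w hw
    exact (F_differentiableAt hρ0 hρ1 hw).differentiableWithinAt
  have hGdiff : AnalyticOnNhd ℂ G Complex.slitPlane := by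
    apply DifferentiableOn.analyticOnNhd _ Complex.isOpen_slitPlane
    intro w hw
    apply DifferentiableAt.differentiableWithinAt
    exact (((hasDerivAt_id w).cpow_const hw).differentiableAt).const_mul _
  have hpre : IsPreconnected Complex.slitPlane := by
    apply isPreconnected_of_forall (1 : ℂ)
    intro y hy
    exact ⟨segment ℝ 1 y, Complex.starConvex_one_slitPlane.segment_subset hy,
      left_mem_segment ℝ 1 y, right_mem_segment ℝ 1 y, (convex_segment 1 y).isPreconnected⟩
  have heq : ∀ x : ℝ, 0 < x → F (x:ℂ) = G (x:ℂ) := by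
    intro x hx
    have hFx : F (x:ℂ) = ((∫ t in Set.Ioi (0:ℝ), t ^ ρ * ((x + t)^2)⁻¹ : ℝ) : ℂ) := by
      have hc : ∀ t ∈ Set.Ioi (0:ℝ), ((t ^ ρ : ℝ) : ℂ) * ((((x:ℂ) + (t:ℂ))^2)⁻¹)
          = ((t ^ ρ * ((x + t)^2)⁻¹ : ℝ) : ℂ) := by
        intro t _
        push_cast
        ring
      show (∫ t in Set.Ioi (0:ℝ), ((t ^ ρ : ℝ) : ℂ) * ((((x:ℂ)) + (t:ℂ))^2)⁻¹) = _
      rw [setIntegral_congr_fun measurableSet_Ioi hc]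
      exact integral_ofReal
    have hGx : G (x:ℂ) = ((((π * ρ / Real.sin (π * ρ)) * x ^ (ρ - 1)) : ℝ) : ℂ) := by
      rw [hG]
      rw [Complex.ofReal_mul, Complex.ofReal_cpow hx.le]
      push_cast
      ring
    rw [hFx, hGx, real_case hρ0 hρ1 hx]
  have hfreq : ∃ᶠ w in nhdsWithin (1:ℂ) {(1:ℂ)}ᶜ, F w = G w := by
    have htend : Tendsto (fun n : ℕ => ((1 + (1/((n:ℝ)+1)) : ℝ) : ℂ)) atTop
        (nhdsWithin (1:ℂ) {(1:ℂ)}ᶜ) := by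
      apply tendsto_nhdsWithin_of_tendsto_nhds_of_eventually_within
      · have h0 : Tendsto (fun n : ℕ => (1 + (1/((n:ℝ)+1)) : ℝ)) atTop (nhds 1) := by
          have := tendsto_one_div_add_atTop_nhds_zero_nat (𝕜 := ℝ)
          have h2 := this.const_add (1:ℝ)
          simpa using h2
        have h1 := (Complex.continuous_ofReal.tendsto (1:ℝ)).comp h0
        exact Filter.Tendsto.congr (fun n => rfl) h1
      · apply Eventually.of_forall
        intro n
        simp only [Set.mem_compl_iff, Set.mem_singleton_iff]
        intro hcon
        have : (1 + (1/((n:ℝ)+1)) : ℝ) = 1 := by exact_mod_cast hcon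
        have hpos : 0 < 1/((n:ℝ)+1) := by positivity
        linarith
    apply htend.frequently
    apply Frequently.of_forall
    intro n
    apply heq
    positivity
  exact hFdiff.eqOn_of_preconnected_of_frequently_eq hGdiff hpre Complex.one_mem_slitPlane hfreq hzmem
lemma fubini_ibp (f : StieltjesFunction ℝ) {z : ℂ} {c M₁ C₂ b α ρ : ℝ} (hc : 0 < c)
    (hA : 0 < ‖z‖)
    (hlow : ∀ t : ℝ, 0 ≤ t → c * (‖z‖ + t) ≤ ‖z + (t:ℂ)‖)
    (hα0 : 0 < α) (hα1 : α < 1) (hρ0 : 0 < ρ) (hρ1 : ρ < 1)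
    (hbnd : ∀ s : ℝ, 0 < s → f s - f 0 ≤ M₁ + C₂ * s^α + b * s^ρ) :
    Integrable (fun s : ℝ => ((f s - f 0 : ℝ)) • (((z + (s:ℂ))^2)⁻¹))
        (volume.restrict (Set.Ioi 0)) ∧
      ∫ t in Set.Ioi (0:ℝ), (z + (t:ℂ))⁻¹ ∂f.measure
        = ∫ s in Set.Ioi (0:ℝ), ((f s - f 0 : ℝ)) • (((z + (s:ℂ))^2)⁻¹) := by
  set A := ‖z‖ with hAdef
  set N := f.measure.restrict (Set.Ioi (0:ℝ)) with hN
  set ν := volume.restrict (Set.Ioi (0:ℝ)) with hν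
  set K : ℝ → ℂ := fun s => ((z + (s:ℂ))^2)⁻¹ with hK
  have hKmeas : Measurable K := by
    apply Measurable.inv
    exact ((measurable_const.add Complex.measurable_ofReal).pow_const 2)
  have hzne : ∀ s : ℝ, 0 ≤ s → z + (s:ℂ) ≠ 0 := by
    intro s hs hcon
    have := hlow s hs
    rw [hcon] at this
    simp only [norm_zero] at this
    nlinarith
  have hKbound : ∀ s : ℝ, 0 ≤ s → ‖K s‖ ≤ (c^2)⁻¹ * ((A + s)^2)⁻¹ := by
    intro s hs
    rw [hK]
    simp only [norm_inv, norm_pow]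
    have h1 : (c * (A + s))^2 ≤ ‖z + (s:ℂ)‖^2 :=
      pow_le_pow_left₀ (by positivity) (hlow s hs) 2
    calc (‖z + (s:ℂ)‖^2)⁻¹ ≤ ((c * (A+s))^2)⁻¹ := inv_anti₀ (by positivity) h1
      _ = (c^2)⁻¹ * ((A + s)^2)⁻¹ := by rw [mul_pow, mul_inv]
  have hKint : ∀ t : ℝ, 0 ≤ t → IntegrableOn K (Set.Ioi t) volume := by
    intro t ht
    apply Integrable.mono' (((inv_sq_facts hA ht).1).const_mul ((c^2)⁻¹))
      hKmeas.aestronglyMeasurable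
    filter_upwards [ae_restrict_mem measurableSet_Ioi] with s hs
    exact hKbound s (le_trans ht (le_of_lt hs))
  have hKval : ∀ t : ℝ, 0 ≤ t → ∫ s in Set.Ioi t, K s = (z + (t:ℂ))⁻¹ := by
    intro t ht
    have hderiv : ∀ x ∈ Set.Ioi t, HasDerivAt (fun s : ℝ => -(z + (s:ℂ))⁻¹) (K x) x := by
      intro x hx
      have hx0 : (0:ℝ) ≤ x := le_trans ht (le_of_lt hx)
      have hne := hzne x hx0
      have h1 : HasDerivAt (fun w : ℂ => -(z + w)⁻¹) (((z + (x:ℂ))^2)⁻¹) ((x:ℝ):ℂ) := by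
        have h2 : HasDerivAt (fun w : ℂ => z + w) 1 ((x:ℝ):ℂ) := (hasDerivAt_id _).const_add z
        have h3 := (h2.inv hne).neg
        exact h3.congr_deriv (by ring)
      exact h1.comp_ofReal
    have hcont : ContinuousWithinAt (fun s : ℝ => -(z + (s:ℂ))⁻¹) (Set.Ici t) t := by
      exact (((continuous_const.add Complex.continuous_ofReal).continuousAt).inv₀
        (hzne t ht)).neg.continuousWithinAt
    have htends : Tendsto (fun s : ℝ => -(z + (s:ℂ))⁻¹) atTop (nhds 0) := by
      apply squeeze_zero_norm' (a := fun s : ℝ => (c * (A + s))⁻¹)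
      · filter_upwards [eventually_ge_atTop (0:ℝ)] with s hs
        rw [norm_neg, norm_inv]
        exact inv_anti₀ (by positivity) (hlow s hs)
      · apply Filter.Tendsto.inv_tendsto_atTop
        apply Filter.Tendsto.const_mul_atTop hc
        exact tendsto_atTop_add_const_left _ A tendsto_id
    rw [integral_Ioi_of_hasDerivAt_of_tendsto hcont hderiv (hKint t ht) htends]
    simp
  set Fk : ℝ → ℝ → ℂ := fun t s => if t ≤ s then K s else 0 with hFk
  have hFk_eq1 : ∀ t : ℝ, (fun s => Fk t s) = Set.indicator (Set.Ici t) K := by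
    intro t
    funext s
    rw [Set.indicator_apply, hFk]
    simp [Set.mem_Ici]
  have hFk_eq2 : ∀ s : ℝ, (fun t => Fk t s) = Set.indicator (Set.Iic s) (fun _ => K s) := by
    intro s
    funext t
    rw [Set.indicator_apply, hFk]
    simp [Set.mem_Iic]
  have hmeasFk : AEStronglyMeasurable (Function.uncurry Fk) (N.prod ν) := by
    apply Measurable.aestronglyMeasurable
    apply Measurable.ite (measurableSet_le measurable_fst measurable_snd)
    · exact (hKmeas.comp measurable_snd)
    · exact measurable_const
  have hNIic : ∀ s : ℝ, N (Set.Iic s) = f.measure (Set.Ioc 0 s) := by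
    intro s
    rw [hN, Measure.restrict_apply measurableSet_Iic, Set.inter_comm, Set.Ioi_inter_Iic]
  have hNfin : ∀ s : ℝ, N (Set.Iic s) ≠ ⊤ := by
    intro s
    rw [hNIic s, f.measure_Ioc]
    exact ENNReal.ofReal_ne_top
  have hNtoReal : ∀ s : ℝ, 0 < s → (N (Set.Iic s)).toReal = f s - f 0 := by
    intro s hs
    rw [hNIic s, f.measure_Ioc, ENNReal.toReal_ofReal]
    exact sub_nonneg.mpr (f.mono hs.le)
  have hbig : Integrable (fun s : ℝ =>
      (M₁ + C₂ * s^α + b * s^ρ) * ((c^2)⁻¹ * ((A + s)^2)⁻¹)) ν := by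
    have h1 : Integrable (fun s : ℝ => ((A + s)^2)⁻¹) ν := (inv_sq_facts hA le_rfl).1
    have h2 : Integrable (fun s : ℝ => s^α * ((A + s)^2)⁻¹) ν := (rpow_int_aux hα0 hα1 hA).1
    have h3 : Integrable (fun s : ℝ => s^ρ * ((A + s)^2)⁻¹) ν := (rpow_int_aux hρ0 hρ1 hA).1
    have h4 : Integrable (fun s : ℝ => (M₁ * (c^2)⁻¹) * ((A + s)^2)⁻¹
        + (C₂ * (c^2)⁻¹) * (s^α * ((A + s)^2)⁻¹) + (b * (c^2)⁻¹) * (s^ρ * ((A + s)^2)⁻¹)) ν :=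
      ((h1.const_mul _).add (h2.const_mul _)).add (h3.const_mul _)
    apply h4.congr
    apply Eventually.of_forall
    intro s
    ring
  -- pointwise bound for (f s - f 0) * ‖K s‖
  have hptbnd : ∀ s : ℝ, 0 < s → (f s - f 0) * ‖K s‖
      ≤ (M₁ + C₂ * s^α + b * s^ρ) * ((c^2)⁻¹ * ((A + s)^2)⁻¹) := by
    intro s hs
    have hfs : 0 ≤ f s - f 0 := sub_nonneg.mpr (f.mono hs.le)
    apply mul_le_mul (hbnd s hs) (hKbound s hs.le) (norm_nonneg _)
    calc (0:ℝ) ≤ f s - f 0 := hfs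
      _ ≤ _ := hbnd s hs
  have hint : Integrable (Function.uncurry Fk) (N.prod ν) := by
    rw [integrable_prod_iff' hmeasFk]
    constructor
    · filter_upwards [ae_restrict_mem measurableSet_Ioi] with s hs
      show Integrable (fun t => Function.uncurry Fk (t, s)) N
      have he : (fun t => Function.uncurry Fk (t, s)) = Set.indicator (Set.Iic s) (fun _ => K s) :=
        hFk_eq2 s
      rw [he, integrable_indicator_iff measurableSet_Iic]
      exact integrableOn_const (hNfin s)
    · have hnormeq : (fun s : ℝ => ∫ t, ‖Function.uncurry Fk (t, s)‖ ∂N)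
          = fun s : ℝ => (N (Set.Iic s)).toReal * ‖K s‖ := by
        funext s
        have he : (fun t : ℝ => ‖Function.uncurry Fk (t, s)‖)
            = Set.indicator (Set.Iic s) (fun _ => ‖K s‖) := by
          funext t
          rw [Set.indicator_apply]
          show ‖Fk t s‖ = _
          rw [hFk]
          by_cases h : t ≤ s <;> simp [h, Set.mem_Iic]
        rw [he, integral_indicator_const _ measurableSet_Iic, smul_eq_mul]
        rfl
      rw [hnormeq]
      have hm1 : Measurable (fun s : ℝ => (N (Set.Iic s)).toReal) := by
        apply Monotone.measurable
        intro s₁ s₂ h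
        exact ENNReal.toReal_mono (hNfin s₂) (measure_mono (Set.Iic_subset_Iic.mpr h))
      apply Integrable.mono' hbig ((hm1.mul hKmeas.norm).aestronglyMeasurable)
      filter_upwards [ae_restrict_mem measurableSet_Ioi] with s hs
      have hs0 : (0:ℝ) < s := hs
      simp only [Pi.mul_apply]
      rw [Real.norm_of_nonneg (mul_nonneg ENNReal.toReal_nonneg (norm_nonneg _))]
      rw [hNtoReal s hs0]
      exact hptbnd s hs0
  have hswap := integral_integral_swap hint
  have hL : ∫ t, (z + (t:ℂ))⁻¹ ∂N = ∫ t, (∫ s, Fk t s ∂ν) ∂N := by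
    apply integral_congr_ae
    filter_upwards [ae_restrict_mem measurableSet_Ioi] with t ht
    have ht0 : (0:ℝ) < t := ht
    rw [hFk_eq1 t, integral_indicator measurableSet_Ici]
    rw [hν, Measure.restrict_restrict measurableSet_Ici]
    rw [Set.inter_eq_left.mpr (Set.Ici_subset_Ioi.mpr ht0)]
    rw [integral_Ici_eq_integral_Ioi, hKval t ht0.le]
  have hR : ∫ s, (∫ t, Fk t s ∂N) ∂ν = ∫ s, ((f s - f 0 : ℝ)) • K s ∂ν := by
    apply integral_congr_ae
    filter_upwards [ae_restrict_mem measurableSet_Ioi] with s hs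
    have hs0 : (0:ℝ) < s := hs
    rw [hFk_eq2 s, integral_indicator_const _ measurableSet_Iic, measureReal_def, hNtoReal s hs0]
  constructor
  · have hmg : Measurable (fun s : ℝ => ((f s - f 0 : ℝ):ℂ) * K s) := by
      apply Measurable.mul _ hKmeas
      exact Complex.measurable_ofReal.comp ((f.mono.measurable).sub measurable_const)
    have heq : (fun s : ℝ => ((f s - f 0 : ℝ)) • K s)
        = fun s : ℝ => ((f s - f 0 : ℝ):ℂ) * K s := by
      funext s
      exact Complex.real_smul
    rw [heq]
    apply Integrable.mono' hbig hmg.aestronglyMeasurable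
    filter_upwards [ae_restrict_mem measurableSet_Ioi] with s hs
    have hs0 : (0:ℝ) < s := hs
    rw [norm_mul, Complex.norm_real, Real.norm_eq_abs,
      _root_.abs_of_nonneg (sub_nonneg.mpr (f.mono hs0.le))]
    exact hptbnd s hs0
  · calc ∫ t in Set.Ioi (0:ℝ), (z + (t:ℂ))⁻¹ ∂f.measure
        = ∫ t, (z + (t:ℂ))⁻¹ ∂N := rfl
      _ = ∫ t, (∫ s, Fk t s ∂ν) ∂N := hL
      _ = ∫ s, (∫ t, Fk t s ∂N) ∂ν := hswap
      _ = ∫ s, ((f s - f 0 : ℝ)) • K s ∂ν := hR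
      _ = ∫ s in Set.Ioi (0:ℝ), ((f s - f 0 : ℝ)) • (((z + (s:ℂ))^2)⁻¹) := rfl
theorem cauchy_transform_asymptotics_of_distribution
    (f : StieltjesFunction ℝ) (d₀ : ℝ) (hd₀ : 0 < d₀)
    (hsupp : f.measure (Set.Iic d₀) = 0)
    (b ρ α : ℝ) (hb : 0 < b) (hα0 : 0 < α) (hαρ : α < ρ) (hρ1 : ρ < 1)
    (hasymp : ∃ C₀ T : ℝ, 0 < T ∧ ∀ t : ℝ, T ≤ t → |f t - b * t ^ ρ| ≤ C₀ * t ^ α)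
    (δ : ℝ) (hδ : 0 < δ) :
    ∃ C R : ℝ, 0 < C ∧ ∀ z : ℂ, R ≤ ‖z‖ → |Complex.arg z| < Real.pi - δ →
      ‖((∫ t in Set.Ioi (0 : ℝ), (z + (t : ℂ))⁻¹ ∂f.measure) -
          ((b * Real.pi * ρ / Real.sin (Real.pi * ρ) : ℝ) : ℂ) * z ^ ((ρ : ℂ) - 1))‖ ≤
        C * ‖z‖ ^ (α - 1) := by
  have hρ0 : 0 < ρ := lt_trans hα0 hαρ
  have hα1 : α < 1 := lt_trans hαρ hρ1
  by_cases hπδ : π ≤ δ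
  · refine ⟨1, 1, one_pos, ?_⟩
    intro z _ hzarg
    exfalso
    have := abs_nonneg z.arg
    linarith
  push_neg at hπδ
  obtain ⟨C₀, T, hT, hasym⟩ := hasymp
  set T₁ := max T 1 with hT₁def
  have hT₁1 : (1:ℝ) ≤ T₁ := le_max_right _ _
  have hT₁T : T ≤ T₁ := le_max_left _ _
  have hT₁0 : (0:ℝ) < T₁ := lt_of_lt_of_le one_pos hT₁1
  set M₁ := (f T₁ - f 0) + b * T₁ ^ ρ with hM₁def
  have hM₁0 : 0 ≤ M₁ := by
    have h1 : f 0 ≤ f T₁ := f.mono hT₁0.le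
    have h2 : 0 < T₁ ^ ρ := Real.rpow_pos_of_pos hT₁0 ρ
    rw [hM₁def]; nlinarith
  set C₂ := |C₀| + |(f 0 : ℝ)| with hC₂def
  have hC₂0 : 0 ≤ C₂ := by rw [hC₂def]; positivity
  have hkey : ∀ s : ℝ, 0 < s → |f s - f 0 - b * s ^ ρ| ≤ M₁ + C₂ * s ^ α := by
    intro s hs
    have hsα : 0 ≤ s ^ α := Real.rpow_nonneg hs.le α
    rcases le_or_gt s T₁ with hsT | hsT
    · have h1 : 0 ≤ f s - f 0 := sub_nonneg.mpr (f.mono hs.le)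
      have h2 : f s - f 0 ≤ f T₁ - f 0 := by
        have := f.mono hsT
        linarith
      have h3 : 0 ≤ b * s ^ ρ := by positivity
      have h4 : b * s ^ ρ ≤ b * T₁ ^ ρ :=
        mul_le_mul_of_nonneg_left (Real.rpow_le_rpow hs.le hsT hρ0.le) hb.le
      rw [abs_le]
      constructor
      · rw [hM₁def]; nlinarith [mul_nonneg hC₂0 hsα]
      · rw [hM₁def]; nlinarith [mul_nonneg hC₂0 hsα]
    · have hs1 : (1:ℝ) ≤ s := le_trans hT₁1 hsT.le
      have h1 := hasym s (le_trans hT₁T hsT.le)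
      have h2 : |f s - b * s ^ ρ| ≤ |C₀| * s ^ α := by
        calc |f s - b * s ^ ρ| ≤ C₀ * s ^ α := h1
          _ ≤ |C₀| * s ^ α := mul_le_mul_of_nonneg_right (le_abs_self C₀) hsα
      have h3 : (1:ℝ) ≤ s ^ α := by
        rw [← Real.rpow_zero s]
        exact Real.rpow_le_rpow_of_exponent_le hs1 hα0.le
      calc |f s - f 0 - b * s ^ ρ| = |(f s - b * s ^ ρ) + (- f 0)| := by ring_nf
        _ ≤ |f s - b * s ^ ρ| + |(- f 0 : ℝ)| := abs_add_le _ _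
        _ ≤ |C₀| * s ^ α + |(f 0 : ℝ)| * s ^ α := by
            rw [abs_neg]
            have : |(f 0 : ℝ)| ≤ |(f 0 : ℝ)| * s ^ α := by nlinarith [abs_nonneg (f 0 : ℝ)]
            linarith
        _ = C₂ * s ^ α := by rw [hC₂def]; ring
        _ ≤ M₁ + C₂ * s ^ α := by linarith
  have hbnd : ∀ s : ℝ, 0 < s → f s - f 0 ≤ M₁ + C₂ * s ^ α + b * s ^ ρ := by
    intro s hs
    have h1 := hkey s hs
    have h2 : f s - f 0 - b * s ^ ρ ≤ |f s - f 0 - b * s ^ ρ| := le_abs_self _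
    linarith
  set c := Real.sin (δ/2) with hcdef
  have hc0 : 0 < c := by
    rw [hcdef]
    apply Real.sin_pos_of_pos_of_lt_pi (by linarith)
    have := Real.pi_pos
    linarith
  set Kα := 1/(α+1) + 1/(1-α) with hKαdef
  have hKα0 : 0 ≤ Kα := by
    rw [hKαdef]
    have h1 : (0:ℝ) < α + 1 := by linarith
    have h2 : (0:ℝ) < 1 - α := by linarith
    positivity
  refine ⟨(c^2)⁻¹ * (M₁ + C₂ * Kα) + 1, 1, by positivity, ?_⟩
  intro z hzR hzarg
  set A := ‖z‖ with hAdef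
  have hA1 : (1:ℝ) ≤ A := hzR
  have hA : (0:ℝ) < A := lt_of_lt_of_le one_pos hA1
  have hlow : ∀ t : ℝ, 0 ≤ t → c * (A + t) ≤ ‖z + (t:ℂ)‖ := by
    intro t ht
    exact sector_bound hδ (le_of_lt hπδ) (le_of_lt hzarg) ht
  have hzne0 : z ≠ 0 := by
    intro h
    have h2 : (0:ℝ) < ‖z‖ := by rw [← hAdef]; exact hA
    rw [h] at h2
    simp at h2
  have hargne : z.arg ≠ π := by
    intro h
    rw [h] at hzarg
    rw [_root_.abs_of_nonneg Real.pi_pos.le] at hzarg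
    linarith
  have hslit : z ∈ Complex.slitPlane := by
    rw [Complex.mem_slitPlane_iff]
    by_cases him : z.im = 0
    · left
      rcases lt_trichotomy z.re 0 with h | h | h
      · exact absurd (Complex.arg_eq_pi_iff.mpr ⟨h, him⟩) hargne
      · exact absurd (Complex.ext h him) hzne0
      · exact h
    · right; exact him
  have hfub := fubini_ibp f hc0 hA hlow hα0 hα1 hρ0 hρ1 hbnd
  have hcc := complex_case hρ0 hρ1 hslit
  -- integrability of the ρ-term
  have hIρbase : IntegrableOn (fun s : ℝ => s ^ ρ * ((A + s)^2)⁻¹) (Set.Ioi 0) volume :=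
    (rpow_int_aux hρ0 hρ1 hA).1
  have hKbound : ∀ s : ℝ, 0 ≤ s → ‖(((z + (s:ℂ))^2)⁻¹ : ℂ)‖ ≤ (c^2)⁻¹ * ((A + s)^2)⁻¹ := by
    intro s hs
    simp only [norm_inv, norm_pow]
    have h1 : (c * (A + s))^2 ≤ ‖z + (s:ℂ)‖^2 :=
      pow_le_pow_left₀ (by positivity) (hlow s hs) 2
    calc (‖z + (s:ℂ)‖^2)⁻¹ ≤ ((c * (A+s))^2)⁻¹ := inv_anti₀ (by positivity) h1
      _ = (c^2)⁻¹ * ((A + s)^2)⁻¹ := by rw [mul_pow, mul_inv]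
  have hIρ : Integrable (fun s : ℝ => ((s ^ ρ : ℝ) : ℂ) * (((z + (s:ℂ))^2)⁻¹))
      (volume.restrict (Set.Ioi 0)) := by
    have hm : Measurable (fun s : ℝ => ((s ^ ρ : ℝ) : ℂ) * (((z + (s:ℂ))^2)⁻¹)) := by
      have h1 : Measurable (fun s : ℝ => s ^ ρ) := by fun_prop
      exact (Complex.measurable_ofReal.comp h1).mul
        (((measurable_const.add Complex.measurable_ofReal).pow_const 2).inv)
    apply Integrable.mono' (hIρbase.const_mul ((c^2)⁻¹)) hm.aestronglyMeasurable
    filter_upwards [ae_restrict_mem measurableSet_Ioi] with s hs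
    have hs0 : (0:ℝ) < s := hs
    rw [norm_mul, Complex.norm_real, Real.norm_eq_abs,
      _root_.abs_of_nonneg (Real.rpow_nonneg hs0.le _)]
    calc s ^ ρ * ‖(((z + (s:ℂ))^2)⁻¹ : ℂ)‖ ≤ s ^ ρ * ((c^2)⁻¹ * ((A + s)^2)⁻¹) := by
          apply mul_le_mul_of_nonneg_left (hKbound s hs0.le) (Real.rpow_nonneg hs0.le _)
      _ = (c^2)⁻¹ * (s ^ ρ * ((A + s)^2)⁻¹) := by ring
  -- main identity
  have hmain : (∫ t in Set.Ioi (0 : ℝ), (z + (t : ℂ))⁻¹ ∂f.measure) -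
      ((b * π * ρ / Real.sin (π * ρ) : ℝ) : ℂ) * z ^ ((ρ : ℂ) - 1)
      = ∫ s in Set.Ioi (0:ℝ), ((f s - f 0 - b * s ^ ρ : ℝ) : ℂ) * (((z + (s:ℂ))^2)⁻¹) := by
    rw [hfub.2]
    have h2 : ((b * π * ρ / Real.sin (π * ρ) : ℝ) : ℂ) * z ^ ((ρ:ℂ) - 1)
        = (b:ℂ) * (((π * ρ / Real.sin (π * ρ) : ℝ) : ℂ) * z ^ ((ρ:ℂ) - 1)) := by
      push_cast
      ring
    rw [h2, ← hcc]
    rw [← MeasureTheory.integral_const_mul]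
    rw [← integral_sub hfub.1 (hIρ.const_mul (b:ℂ))]
    apply integral_congr_ae
    filter_upwards [ae_restrict_mem measurableSet_Ioi] with s hs
    rw [Complex.real_smul]
    push_cast
    ring
  rw [hmain]
  -- bound the integral
  have hIsq : IntegrableOn (fun s : ℝ => ((A + s)^2)⁻¹) (Set.Ioi 0) volume :=
    (inv_sq_facts hA (le_refl 0)).1
  have hIα : IntegrableOn (fun s : ℝ => s ^ α * ((A + s)^2)⁻¹) (Set.Ioi 0) volume :=
    (rpow_int_aux hα0 hα1 hA).1
  set gbound : ℝ → ℝ := fun s =>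
    (M₁ * (c^2)⁻¹) * ((A + s)^2)⁻¹ + (C₂ * (c^2)⁻¹) * (s ^ α * ((A + s)^2)⁻¹) with hgdef
  have hgint : Integrable gbound (volume.restrict (Set.Ioi 0)) :=
    (hIsq.const_mul _).add (hIα.const_mul _)
  have hnorm : ‖∫ s in Set.Ioi (0:ℝ), ((f s - f 0 - b * s ^ ρ : ℝ) : ℂ) * (((z + (s:ℂ))^2)⁻¹)‖
      ≤ ∫ s in Set.Ioi (0:ℝ), gbound s := by
    apply norm_integral_le_of_norm_le hgint
    filter_upwards [ae_restrict_mem measurableSet_Ioi] with s hs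
    have hs0 : (0:ℝ) < s := hs
    rw [norm_mul, Complex.norm_real, Real.norm_eq_abs]
    calc |f s - f 0 - b * s ^ ρ| * ‖(((z + (s:ℂ))^2)⁻¹ : ℂ)‖
        ≤ (M₁ + C₂ * s ^ α) * ((c^2)⁻¹ * ((A + s)^2)⁻¹) := by
          apply mul_le_mul (hkey s hs0) (hKbound s hs0.le) (norm_nonneg _)
          have := Real.rpow_nonneg hs0.le α
          nlinarith
      _ = gbound s := by rw [hgdef]; ring
  have hgval : ∫ s in Set.Ioi (0:ℝ), gbound s
      ≤ ((c^2)⁻¹ * (M₁ + C₂ * Kα)) * A ^ (α - 1) := by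
    rw [hgdef]
    rw [integral_add (hIsq.const_mul _) (hIα.const_mul _)]
    rw [MeasureTheory.integral_const_mul, MeasureTheory.integral_const_mul]
    have hv1 : ∫ s in Set.Ioi (0:ℝ), ((A + s)^2)⁻¹ = A⁻¹ := by
      have := (inv_sq_facts hA (le_refl 0)).2
      simpa using this
    have hv2 : ∫ s in Set.Ioi (0:ℝ), s ^ α * ((A + s)^2)⁻¹ ≤ Kα * A ^ (α - 1) :=
      (rpow_int_aux hα0 hα1 hA).2
    rw [hv1]
    have hAinv : A⁻¹ ≤ A ^ (α - 1) := by
      rw [← Real.rpow_neg_one A]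
      exact Real.rpow_le_rpow_of_exponent_le hA1 (by linarith)
    have h1 : M₁ * (c^2)⁻¹ * A⁻¹ ≤ M₁ * (c^2)⁻¹ * A ^ (α-1) :=
      mul_le_mul_of_nonneg_left hAinv (by positivity)
    have h2 : C₂ * (c^2)⁻¹ * ∫ s in Set.Ioi (0:ℝ), s ^ α * ((A + s)^2)⁻¹
        ≤ C₂ * (c^2)⁻¹ * (Kα * A ^ (α-1)) :=
      mul_le_mul_of_nonneg_left hv2 (by positivity)
    calc M₁ * (c^2)⁻¹ * A⁻¹ + C₂ * (c^2)⁻¹ * ∫ s in Set.Ioi (0:ℝ), s ^ α * ((A + s)^2)⁻¹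
        ≤ M₁ * (c^2)⁻¹ * A ^ (α-1) + C₂ * (c^2)⁻¹ * (Kα * A ^ (α-1)) := by linarith
      _ = ((c^2)⁻¹ * (M₁ + C₂ * Kα)) * A ^ (α - 1) := by ring
  have hfinal : ((c^2)⁻¹ * (M₁ + C₂ * Kα)) * A ^ (α - 1)
      ≤ ((c^2)⁻¹ * (M₁ + C₂ * Kα) + 1) * A ^ (α - 1) := by
    apply mul_le_mul_of_nonneg_right _ (Real.rpow_nonneg hA.le _)
    linarith
  calc ‖∫ s in Set.Ioi (0:ℝ), ((f s - f 0 - b * s ^ ρ : ℝ) : ℂ) * (((z + (s:ℂ))^2)⁻¹)‖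
      ≤ ∫ s in Set.Ioi (0:ℝ), gbound s := hnorm
    _ ≤ ((c^2)⁻¹ * (M₁ + C₂ * Kα)) * A ^ (α - 1) := hgval
    _ ≤ ((c^2)⁻¹ * (M₁ + C₂ * Kα) + 1) * A ^ (α - 1) := hfinal
end

section
/- Let μ be a nonzero positive measure on (0,∞) with ∫ dμ(t)/t < ∞, K its Cauchy transform, and n ≥ 1. Then the function F_n(z) = z + n²K(z) has at most one zero in the upper half-plane ℂ₊, and any such zero lies in the open second quadrant {z : Re z < 0, Im z > 0}. -/
open MeasureTheory Complex Set

lemma gp1_key_bound (z : ℂ) (hz : 0 < z.im) :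
    ∃ C : ℝ, 0 < C ∧ ∀ t : ℝ, 0 < t → t ≤ C * ‖z + t‖ := by
  refine ⟨2 * ‖z‖ / z.im + 2, by positivity, fun t ht => ?_⟩
  have habs : z.im ≤ ‖z + t‖ := by
    have h1 : (z + (t : ℂ)).im = z.im := by simp
    have h2 := Complex.abs_im_le_norm (z + t)
    rw [h1] at h2
    exact (le_abs_self _).trans h2
  have hA : (0:ℝ) ≤ ‖z + t‖ := norm_nonneg _
  have hz0 : (0:ℝ) ≤ ‖z‖ := norm_nonneg _
  rcases le_or_gt t (2 * ‖z‖) with h | h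
  · have h3 : 2 * ‖z‖ / z.im * z.im = 2 * ‖z‖ := by field_simp
    nlinarith [mul_le_mul_of_nonneg_left habs (show (0:ℝ) ≤ 2 * ‖z‖ / z.im by positivity), mul_nonneg (show (0:ℝ) ≤ 2 * ‖z‖ / z.im by positivity) hA]
  · have h4 : ‖(z + t) + (-z)‖ ≤ ‖z + t‖ + ‖-z‖ :=
      norm_add_le _ _
    have h5 : ‖(z + t) + (-z)‖ = t := by
      simp [Complex.norm_real, abs_of_pos ht]
    rw [h5, norm_neg] at h4
    nlinarith [mul_nonneg (show (0:ℝ) ≤ 2 * ‖z‖ / z.im by positivity) hA]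

lemma gp1_integrable {μ : Measure ℝ}
    (hint : ∫⁻ t in Set.Ioi (0 : ℝ), ENNReal.ofReal t⁻¹ ∂μ < ⊤)
    {E : Type*} [NormedAddCommGroup E] {f : ℝ → E}
    (hf : AEStronglyMeasurable f (μ.restrict (Set.Ioi 0)))
    {C : ℝ} (hC : 0 ≤ C) (hbound : ∀ t : ℝ, 0 < t → ‖f t‖ ≤ C * t⁻¹) :
    Integrable f (μ.restrict (Set.Ioi 0)) := by
  refine ⟨hf, ?_⟩
  have hmono : ∫⁻ t, ‖f t‖ₑ ∂(μ.restrict (Set.Ioi 0))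
      ≤ ∫⁻ t, ENNReal.ofReal C * ENNReal.ofReal t⁻¹ ∂(μ.restrict (Set.Ioi 0)) := by
    refine lintegral_mono_ae ?_
    filter_upwards [ae_restrict_mem measurableSet_Ioi] with t ht
    rw [← ENNReal.ofReal_mul hC, ← ofReal_norm_eq_enorm]
    exact ENNReal.ofReal_le_ofReal (hbound t ht)
  refine lt_of_le_of_lt hmono ?_
  rw [lintegral_const_mul' _ _ ENNReal.ofReal_ne_top]
  exact ENNReal.mul_lt_top ENNReal.ofReal_lt_top hint

lemma gp1_inv_le {A t C : ℝ} (hA : 0 < A) (ht : 0 < t) (h : t ≤ C * A) :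
    A⁻¹ ≤ C * t⁻¹ := by
  rw [inv_eq_one_div, show C * t⁻¹ = C / t by ring, div_le_div_iff₀ hA ht]
  linarith

lemma gp1_ne (z : ℂ) (hz : 0 < z.im) (t : ℝ) : z + (t : ℂ) ≠ 0 := by
  intro h
  have : (z + (t : ℂ)).im = 0 := by rw [h]; simp
  simp at this
  linarith

lemma gp1_normSq_pos (z : ℂ) (hz : 0 < z.im) (t : ℝ) :
    0 < Complex.normSq (z + t) :=
  Complex.normSq_pos.mpr (gp1_ne z hz t)

lemma gp1_im_le_abs (z : ℂ) (hz : 0 < z.im) (t : ℝ) :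
    z.im ≤ ‖z + t‖ := by
  have h1 : (z + (t : ℂ)).im = z.im := by simp
  have h2 := Complex.abs_im_le_norm (z + t)
  rw [h1] at h2
  exact (le_abs_self _).trans h2

lemma gp1_int1 {μ : Measure ℝ}
    (hint : ∫⁻ t in Set.Ioi (0 : ℝ), ENNReal.ofReal t⁻¹ ∂μ < ⊤)
    (z : ℂ) (hz : 0 < z.im) :
    Integrable (fun t : ℝ => (z + (t : ℂ))⁻¹) (μ.restrict (Set.Ioi 0)) := by
  obtain ⟨C, hC, hCb⟩ := gp1_key_bound z hz
  refine gp1_integrable hint ?_ hC.le (fun t ht => ?_)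
  · exact ((continuous_const.add Complex.continuous_ofReal).inv₀
      (fun t => gp1_ne z hz t)).aestronglyMeasurable
  · rw [norm_inv]
    exact gp1_inv_le (lt_of_lt_of_le hz (gp1_im_le_abs z hz t)) ht (hCb t ht)

lemma gp1_int2 {μ : Measure ℝ}
    (hint : ∫⁻ t in Set.Ioi (0 : ℝ), ENNReal.ofReal t⁻¹ ∂μ < ⊤)
    (z : ℂ) (hz : 0 < z.im) :
    Integrable (fun t : ℝ => (Complex.normSq (z + t))⁻¹) (μ.restrict (Set.Ioi 0)) := by
  obtain ⟨C, hC, hCb⟩ := gp1_key_bound z hz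
  refine gp1_integrable hint ?_ (show (0:ℝ) ≤ z.im⁻¹ * C by positivity) (fun t ht => ?_)
  · exact ((Complex.continuous_normSq.comp
      (continuous_const.add Complex.continuous_ofReal)).inv₀
      (fun t => (gp1_normSq_pos z hz t).ne')).aestronglyMeasurable
  · have hA : 0 < ‖z + t‖ := lt_of_lt_of_le hz (gp1_im_le_abs z hz t)
    have h1 : (‖z + t‖)⁻¹ ≤ C * t⁻¹ := gp1_inv_le hA ht (hCb t ht)
    have h2 : (‖z + t‖)⁻¹ ≤ z.im⁻¹ :=
      inv_anti₀ hz (gp1_im_le_abs z hz t)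
    rw [Real.norm_eq_abs, abs_of_pos (inv_pos.mpr (gp1_normSq_pos z hz t))]
    rw [Complex.normSq_eq_norm_sq, sq, mul_inv]
    calc (‖z + t‖)⁻¹ * (‖z + t‖)⁻¹
        ≤ z.im⁻¹ * (C * t⁻¹) := by
          apply mul_le_mul h2 h1 (by positivity) (by positivity)
      _ = z.im⁻¹ * C * t⁻¹ := by ring

lemma gp1_int3 {μ : Measure ℝ}
    (hint : ∫⁻ t in Set.Ioi (0 : ℝ), ENNReal.ofReal t⁻¹ ∂μ < ⊤)
    (z : ℂ) (hz : 0 < z.im) :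
    Integrable (fun t : ℝ => t * (Complex.normSq (z + t))⁻¹) (μ.restrict (Set.Ioi 0)) := by
  obtain ⟨C, hC, hCb⟩ := gp1_key_bound z hz
  refine gp1_integrable hint ?_ (show (0:ℝ) ≤ C * C by positivity) (fun t ht => ?_)
  · exact (continuous_id.mul ((Complex.continuous_normSq.comp
      (continuous_const.add Complex.continuous_ofReal)).inv₀
      (fun t => (gp1_normSq_pos z hz t).ne'))).aestronglyMeasurable
  · have hA : 0 < ‖z + t‖ := lt_of_lt_of_le hz (gp1_im_le_abs z hz t)
    have h1 : (‖z + t‖)⁻¹ ≤ C * t⁻¹ := gp1_inv_le hA ht (hCb t ht)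
    have hNpos := gp1_normSq_pos z hz t
    rw [Real.norm_eq_abs, abs_of_pos (by positivity)]
    rw [Complex.normSq_eq_norm_sq, sq, mul_inv]
    calc t * ((‖z + t‖)⁻¹ * (‖z + t‖)⁻¹)
        ≤ t * ((C * t⁻¹) * (C * t⁻¹)) := by
          apply mul_le_mul_of_nonneg_left _ ht.le
          apply mul_le_mul h1 h1 (by positivity) (by positivity)
      _ = (t * t⁻¹) * (C * C * t⁻¹) := by ring
      _ = C * C * t⁻¹ := by rw [mul_inv_cancel₀ ht.ne']; ring

lemma gp1_int4 {μ : Measure ℝ}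
    (hint : ∫⁻ t in Set.Ioi (0 : ℝ), ENNReal.ofReal t⁻¹ ∂μ < ⊤)
    (z₁ z₂ : ℂ) (hz₁ : 0 < z₁.im) (hz₂ : 0 < z₂.im) :
    Integrable (fun t : ℝ => ((z₁ + (t : ℂ)) * (z₂ + (t : ℂ)))⁻¹)
      (μ.restrict (Set.Ioi 0)) := by
  obtain ⟨C, hC, hCb⟩ := gp1_key_bound z₁ hz₁
  refine gp1_integrable hint ?_ (show (0:ℝ) ≤ C * z₂.im⁻¹ by positivity) (fun t ht => ?_)
  · exact (((continuous_const.add Complex.continuous_ofReal).mul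
      (continuous_const.add Complex.continuous_ofReal)).inv₀
      (fun t => mul_ne_zero (gp1_ne z₁ hz₁ t) (gp1_ne z₂ hz₂ t))).aestronglyMeasurable
  · have hA₁ : 0 < ‖z₁ + t‖ := lt_of_lt_of_le hz₁ (gp1_im_le_abs z₁ hz₁ t)
    have h1 : (‖z₁ + t‖)⁻¹ ≤ C * t⁻¹ := gp1_inv_le hA₁ ht (hCb t ht)
    have h2 : (‖z₂ + t‖)⁻¹ ≤ z₂.im⁻¹ :=
      inv_anti₀ hz₂ (gp1_im_le_abs z₂ hz₂ t)
    rw [norm_inv, norm_mul, mul_inv]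
    calc (‖z₁ + t‖)⁻¹ * (‖z₂ + t‖)⁻¹
        ≤ (C * t⁻¹) * z₂.im⁻¹ := by
          apply mul_le_mul h1 h2 (by positivity) (by positivity)
      _ = C * z₂.im⁻¹ * t⁻¹ := by ring

lemma gp1_pos_integral {μ : Measure ℝ} (hμ : μ ≠ 0) (hsupp : μ (Set.Iic 0) = 0)
    {f : ℝ → ℝ} (hfi : Integrable f (μ.restrict (Set.Ioi 0)))
    (hf : ∀ t : ℝ, 0 < t → 0 < f t) :
    0 < ∫ t in Set.Ioi (0:ℝ), f t ∂μ := by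
  rw [setIntegral_pos_iff_support_of_nonneg_ae ?h1 hfi]
  · have hsub : (Set.Ioi (0:ℝ)) ⊆ Function.support f ∩ Set.Ioi 0 :=
      fun t ht => ⟨(hf t ht).ne', ht⟩
    refine lt_of_lt_of_le ?_ (measure_mono hsub)
    rw [pos_iff_ne_zero]
    intro h0
    apply hμ
    rw [← Measure.measure_univ_eq_zero]
    have huniv : (Set.univ : Set ℝ) = Set.Iic 0 ∪ Set.Ioi 0 := (Set.Iic_union_Ioi).symm
    rw [huniv]
    exact le_antisymm ((measure_union_le _ _).trans (by simp [hsupp, h0])) zero_le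
  case h1 =>
    filter_upwards [ae_restrict_mem measurableSet_Ioi] with t ht using (hf t ht).le

lemma gp1_Kim {μ : Measure ℝ}
    (hint : ∫⁻ t in Set.Ioi (0 : ℝ), ENNReal.ofReal t⁻¹ ∂μ < ⊤)
    (z : ℂ) (hz : 0 < z.im) :
    (∫ t in Set.Ioi (0:ℝ), (z + (t : ℂ))⁻¹ ∂μ).im
      = -(z.im * ∫ t in Set.Ioi (0:ℝ), (Complex.normSq (z + t))⁻¹ ∂μ) := by
  have h := integral_im (𝕜 := ℂ) (gp1_int1 hint z hz)
  simp only [RCLike.im_to_complex] at h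
  rw [← h, ← integral_const_mul _ _, ← integral_neg]
  refine integral_congr_ae (Filter.Eventually.of_forall (fun t => ?_))
  simp only [Complex.inv_im, Complex.add_im, Complex.ofReal_im, add_zero]
  field_simp

lemma gp1_Kre {μ : Measure ℝ}
    (hint : ∫⁻ t in Set.Ioi (0 : ℝ), ENNReal.ofReal t⁻¹ ∂μ < ⊤)
    (z : ℂ) (hz : 0 < z.im) :
    (∫ t in Set.Ioi (0:ℝ), (z + (t : ℂ))⁻¹ ∂μ).re
      = z.re * (∫ t in Set.Ioi (0:ℝ), (Complex.normSq (z + t))⁻¹ ∂μ)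
        + ∫ t in Set.Ioi (0:ℝ), t * (Complex.normSq (z + t))⁻¹ ∂μ := by
  have h := integral_re (𝕜 := ℂ) (gp1_int1 hint z hz)
  simp only [RCLike.re_to_complex] at h
  rw [← h, ← integral_const_mul _ _,
    ← integral_add ((gp1_int2 hint z hz).const_mul z.re) (gp1_int3 hint z hz)]
  refine integral_congr_ae (Filter.Eventually.of_forall (fun t => ?_))
  simp only [Complex.inv_re, Complex.add_re, Complex.ofReal_re]
  have := (gp1_normSq_pos z hz t).ne'
  field_simp

lemma gp1_eqs {μ : Measure ℝ} (hμ : μ ≠ 0) (hsupp : μ (Set.Iic 0) = 0)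
    (hint : ∫⁻ t in Set.Ioi (0 : ℝ), ENNReal.ofReal t⁻¹ ∂μ < ⊤)
    (n : ℕ) (hn : 1 ≤ n) (z : ℂ) (hz : 0 < z.im)
    (hzero : z + (n : ℂ) ^ 2 * (∫ t in Set.Ioi (0:ℝ), (z + (t : ℂ))⁻¹ ∂μ) = 0) :
    (n : ℝ) ^ 2 * (∫ t in Set.Ioi (0:ℝ), (Complex.normSq (z + t))⁻¹ ∂μ) = 1
      ∧ z.re < 0 := by
  set S := ∫ t in Set.Ioi (0:ℝ), (Complex.normSq (z + t))⁻¹ ∂μ with hS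
  set T := ∫ t in Set.Ioi (0:ℝ), t * (Complex.normSq (z + t))⁻¹ ∂μ with hT
  have him := congrArg Complex.im hzero
  simp only [Complex.add_im, Complex.mul_im, Complex.zero_im] at him
  have hn2re : ((n : ℂ) ^ 2).re = (n : ℝ) ^ 2 := by
    norm_cast
  have hn2im : ((n : ℂ) ^ 2).im = 0 := by
    norm_cast
  rw [hn2re, hn2im, gp1_Kim hint z hz, ← hS] at him
  have hSeq : (n : ℝ) ^ 2 * S = 1 := by
    have hfac : z.im * (1 - (n : ℝ) ^ 2 * S) = 0 := by linear_combination him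
    rcases mul_eq_zero.mp hfac with h | h
    · exact absurd h hz.ne'
    · linarith
  refine ⟨hSeq, ?_⟩
  have hre := congrArg Complex.re hzero
  simp only [Complex.add_re, Complex.mul_re, Complex.zero_re] at hre
  rw [hn2re, hn2im, gp1_Kim hint z hz, gp1_Kre hint z hz, ← hS, ← hT] at hre
  have hTpos : 0 < T := by
    refine gp1_pos_integral hμ hsupp (gp1_int3 hint z hz) (fun t ht => ?_)
    exact mul_pos ht (inv_pos.mpr (gp1_normSq_pos z hz t))
  have hnpos : (0:ℝ) < (n : ℝ) ^ 2 := by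
    have : (1:ℝ) ≤ (n : ℝ) := by exact_mod_cast hn
    nlinarith
  nlinarith [mul_pos hnpos hTpos]

lemma gp1_pointwise (z₁ z₂ : ℂ) (hz₁ : 0 < z₁.im) (hz₂ : 0 < z₂.im) (t : ℝ) :
    (((z₁ + (t:ℂ)) * (z₂ + (t:ℂ)))⁻¹).re
      < (1/2) * ((Complex.normSq (z₁ + t))⁻¹ + (Complex.normSq (z₂ + t))⁻¹) := by
  have hN₁ := gp1_normSq_pos z₁ hz₁ t
  have hN₂ := gp1_normSq_pos z₂ hz₂ t
  have hre : (((z₁ + (t:ℂ)) * (z₂ + (t:ℂ)))⁻¹).re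
      = ((z₁.re + t) * (z₂.re + t) - z₁.im * z₂.im)
        / (Complex.normSq (z₁ + t) * Complex.normSq (z₂ + t)) := by
    rw [mul_inv, Complex.mul_re, Complex.inv_re, Complex.inv_re, Complex.inv_im,
      Complex.inv_im]
    simp only [Complex.add_re, Complex.add_im, Complex.ofReal_re, Complex.ofReal_im, add_zero]
    field_simp
  rw [hre, div_lt_iff₀ (by positivity)]
  have hexp : 1 / 2 * ((Complex.normSq (z₁ + t))⁻¹ + (Complex.normSq (z₂ + t))⁻¹)
      * (Complex.normSq (z₁ + t) * Complex.normSq (z₂ + t))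
      = (Complex.normSq (z₁ + t) + Complex.normSq (z₂ + t)) / 2 := by
    field_simp
    ring
  rw [hexp, Complex.normSq_apply, Complex.normSq_apply]
  simp only [Complex.add_re, Complex.add_im, Complex.ofReal_re, Complex.ofReal_im, add_zero]
  nlinarith [sq_nonneg ((z₁.re + t) - (z₂.re + t)), mul_pos hz₁ hz₂]

lemma gp1_unique {μ : Measure ℝ} (hμ : μ ≠ 0) (hsupp : μ (Set.Iic 0) = 0)
    (hint : ∫⁻ t in Set.Ioi (0 : ℝ), ENNReal.ofReal t⁻¹ ∂μ < ⊤)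
    (n : ℕ) (hn : 1 ≤ n) (z₁ z₂ : ℂ) (hz₁ : 0 < z₁.im) (hz₂ : 0 < z₂.im)
    (h1 : z₁ + (n : ℂ) ^ 2 * (∫ t in Set.Ioi (0:ℝ), (z₁ + (t : ℂ))⁻¹ ∂μ) = 0)
    (h2 : z₂ + (n : ℂ) ^ 2 * (∫ t in Set.Ioi (0:ℝ), (z₂ + (t : ℂ))⁻¹ ∂μ) = 0) :
    z₁ = z₂ := by
  by_contra hne
  set I : ℂ := ∫ t in Set.Ioi (0:ℝ), ((z₁ + (t:ℂ)) * (z₂ + (t:ℂ)))⁻¹ ∂μ with hI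
  have hdiff : (∫ t in Set.Ioi (0:ℝ), (z₁ + (t : ℂ))⁻¹ ∂μ)
      - (∫ t in Set.Ioi (0:ℝ), (z₂ + (t : ℂ))⁻¹ ∂μ) = (z₂ - z₁) * I := by
    rw [← integral_sub (gp1_int1 hint z₁ hz₁) (gp1_int1 hint z₂ hz₂), hI,
      ← integral_const_mul _ _]
    refine integral_congr_ae (Filter.Eventually.of_forall (fun t => ?_))
    have hne₁ := gp1_ne z₁ hz₁ t
    have hne₂ := gp1_ne z₂ hz₂ t
    field_simp
    ring
  have hfac : (z₁ - z₂) * (1 - (n : ℂ) ^ 2 * I) = 0 := by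
    linear_combination h1 - h2 - (n : ℂ)^2 * hdiff
  have hIeq : (n : ℂ) ^ 2 * I = 1 := by
    rcases mul_eq_zero.mp hfac with h | h
    · exact absurd (sub_eq_zero.mp h) hne
    · linear_combination -h
  have hIre : (n : ℝ) ^ 2 * I.re = 1 := by
    have hre' : ((n:ℂ)^2).re = (n:ℝ)^2 := by norm_cast
    have him' : ((n:ℂ)^2).im = 0 := by norm_cast
    have h := congrArg Complex.re hIeq
    rw [Complex.mul_re, hre', him', Complex.one_re] at h
    linarith
  -- I.re as a real integral
  have hIre2 : (∫ t in Set.Ioi (0:ℝ), (((z₁ + (t:ℂ)) * (z₂ + (t:ℂ)))⁻¹).re ∂μ) = I.re := by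
    have h := integral_re (𝕜 := ℂ) (gp1_int4 hint z₁ z₂ hz₁ hz₂)
    simp only [RCLike.re_to_complex] at h
    exact h
  obtain ⟨hS₁, -⟩ := gp1_eqs hμ hsupp hint n hn z₁ hz₁ h1
  obtain ⟨hS₂, -⟩ := gp1_eqs hμ hsupp hint n hn z₂ hz₂ h2
  set S₁ := ∫ t in Set.Ioi (0:ℝ), (Complex.normSq (z₁ + t))⁻¹ ∂μ
  set S₂ := ∫ t in Set.Ioi (0:ℝ), (Complex.normSq (z₂ + t))⁻¹ ∂μ
  -- strict inequality
  have hre_int : Integrable (fun t : ℝ => (((z₁ + (t:ℂ)) * (z₂ + (t:ℂ)))⁻¹).re)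
      (μ.restrict (Set.Ioi 0)) := by
    have h := (gp1_int4 hint z₁ z₂ hz₁ hz₂).re
    simp only [RCLike.re_to_complex] at h
    exact h
  have hint12 : Integrable (fun t : ℝ =>
      (1/2 : ℝ) * ((Complex.normSq (z₁ + t))⁻¹ + (Complex.normSq (z₂ + t))⁻¹))
      (μ.restrict (Set.Ioi 0)) :=
    ((gp1_int2 hint z₁ hz₁).add (gp1_int2 hint z₂ hz₂)).const_mul (1/2)
  have hgpos : 0 < ∫ t in Set.Ioi (0:ℝ),
      ((1/2) * ((Complex.normSq (z₁ + t))⁻¹ + (Complex.normSq (z₂ + t))⁻¹)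
        - (((z₁ + (t:ℂ)) * (z₂ + (t:ℂ)))⁻¹).re) ∂μ := by
    refine gp1_pos_integral hμ hsupp (hint12.sub hre_int) (fun t ht => ?_)
    linarith [gp1_pointwise z₁ z₂ hz₁ hz₂ t]
  rw [integral_sub hint12 hre_int, integral_const_mul _ _,
    integral_add (gp1_int2 hint z₁ hz₁) (gp1_int2 hint z₂ hz₂), hIre2] at hgpos
  -- now: 0 < (1/2)*(S₁+S₂) - I.re, with n²S₁ = n²S₂ = n² I.re = 1
  have hnpos : (0:ℝ) < (n : ℝ) ^ 2 := by
    have : (1:ℝ) ≤ (n : ℝ) := by exact_mod_cast hn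
    nlinarith
  nlinarith [mul_pos hnpos hgpos]

theorem GP1_at_most_one_zero_upper_half_plane
    (μ : Measure ℝ) (hμ : μ ≠ 0) (hsupp : μ (Set.Iic 0) = 0)
    (hint : ∫⁻ t in Set.Ioi (0 : ℝ), ENNReal.ofReal t⁻¹ ∂μ < ⊤)
    (K : ℂ → ℂ) (hK : ∀ z, K z = ∫ t in Set.Ioi (0 : ℝ), (z + (t : ℂ))⁻¹ ∂μ)
    (n : ℕ) (hn : 1 ≤ n) :
    (∀ z₁ z₂ : ℂ, 0 < z₁.im → 0 < z₂.im →
        z₁ + (n : ℂ) ^ 2 * K z₁ = 0 → z₂ + (n : ℂ) ^ 2 * K z₂ = 0 → z₁ = z₂) ∧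
    (∀ z : ℂ, 0 < z.im → z + (n : ℂ) ^ 2 * K z = 0 → z.re < 0) := by
  constructor
  · intro z₁ z₂ hz₁ hz₂ h1 h2
    rw [hK] at h1 h2
    exact gp1_unique hμ hsupp hint n hn z₁ z₂ hz₁ hz₂ h1 h2
  · intro z hz hzero
    rw [hK] at hzero
    exact (gp1_eqs hμ hsupp hint n hn z hz hzero).2
end

section
/- Let μ be a nonzero positive measure on (0,∞) with ∫ dμ(t)/t < ∞, K its Cauchy transform, a > 0, n ≥ 1. Then G_n(z) = z² + a n² − n² K(z) has no zeros in the closed first quadrant intersected with the open upper half-plane; i.e., any zero of G_n in ℂ₊ satisfies Re z < 0. -/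
open MeasureTheory Complex

theorem GP2_zero_in_upper_half_plane_second_quadrant
    (μ : Measure ℝ) (hμ : μ ≠ 0) (hsupp : μ (Set.Iic 0) = 0)
    (hint : ∫⁻ t in Set.Ioi (0 : ℝ), ENNReal.ofReal t⁻¹ ∂μ < ⊤)
    (K : ℂ → ℂ) (hK : ∀ z, K z = ∫ t in Set.Ioi (0 : ℝ), (z + (t : ℂ))⁻¹ ∂μ)
    (a : ℝ) (ha : 0 < a) (n : ℕ) (hn : 1 ≤ n) :
    ∀ z : ℂ, 0 < z.im →
      z ^ 2 + (a : ℂ) * (n : ℂ) ^ 2 - (n : ℂ) ^ 2 * K z = 0 → z.re < 0 := by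
  intro z hz hG
  by_contra hre
  push_neg at hre
  -- μ (Ioi 0) > 0
  have hIoi : 0 < μ (Set.Ioi (0:ℝ)) := by
    rcases eq_or_ne (μ (Set.Ioi (0:ℝ))) 0 with h | h
    · exfalso
      apply hμ
      rw [← Measure.measure_univ_eq_zero, ← Set.Iic_union_Ioi (a := (0:ℝ))]
      exact le_antisymm ((measure_union_le _ _).trans (by simp [hsupp, h])) (zero_le)
    · exact pos_iff_ne_zero.mpr h
  -- basic facts
  have hne : ∀ t : ℝ, z + (t:ℂ) ≠ 0 := by
    intro t h
    have : (z + (t:ℂ)).im = 0 := by rw [h]; simp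
    simp at this
    linarith
  have hnormSq : ∀ t : ℝ, 0 < Complex.normSq (z + (t:ℂ)) := fun t =>
    Complex.normSq_pos.mpr (hne t)
  -- integrability of (z+t)⁻¹ on Ioi 0
  have hinv_int : IntegrableOn (fun t : ℝ => t⁻¹) (Set.Ioi (0:ℝ)) μ := by
    refine ⟨(measurable_inv.aestronglyMeasurable), ?_⟩
    rw [HasFiniteIntegral]
    calc ∫⁻ t in Set.Ioi (0:ℝ), ‖t⁻¹‖₊ ∂μ
        = ∫⁻ t in Set.Ioi (0:ℝ), ENNReal.ofReal t⁻¹ ∂μ := by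
          refine lintegral_congr_ae ?_
          filter_upwards [ae_restrict_mem measurableSet_Ioi] with t ht
          rw [← enorm_eq_nnnorm, ← ofReal_norm, Real.norm_eq_abs,
            _root_.abs_of_nonneg (inv_nonneg.mpr (le_of_lt ht))]
      _ < ⊤ := hint
  have hf_int : IntegrableOn (fun t : ℝ => (z + (t:ℂ))⁻¹) (Set.Ioi (0:ℝ)) μ := by
    refine Integrable.mono' hinv_int ?_ ?_
    · exact Continuous.aestronglyMeasurable
        (((continuous_const.add Complex.continuous_ofReal).inv₀ fun t => hne t))
    · filter_upwards [ae_restrict_mem measurableSet_Ioi] with t ht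
      rw [norm_inv]
      have h1 : t ≤ ‖z + (t:ℂ)‖ := by
        have := Complex.re_le_norm (z + (t:ℂ))
        simp only [Complex.add_re, Complex.ofReal_re] at this
        linarith
      have ht0 : (0:ℝ) < t := ht
      calc ‖z + (t:ℂ)‖⁻¹ ≤ t⁻¹ := by
            apply inv_anti₀ ht0
            simpa using h1
        _ = t⁻¹ := rfl
  -- imaginary part of K z
  have hKim : (K z).im = ∫ t in Set.Ioi (0:ℝ), (-(z.im) / Complex.normSq (z + (t:ℂ))) ∂μ := by
    have h1 := integral_im (𝕜 := ℂ) hf_int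
    simp only [RCLike.im_to_complex] at h1
    rw [hK z, ← h1]
    refine integral_congr_ae (Filter.Eventually.of_forall fun t => ?_)
    simp [Complex.inv_im]
  have hgpos : ∀ t : ℝ, 0 < z.im / Complex.normSq (z + (t:ℂ)) := fun t =>
    div_pos hz (hnormSq t)
  have hg_int : IntegrableOn (fun t : ℝ => z.im / Complex.normSq (z + (t:ℂ))) (Set.Ioi (0:ℝ)) μ := by
    have := (hf_int.im).neg
    refine this.congr (Filter.Eventually.of_forall fun t => ?_)
    simp only [Pi.neg_apply, RCLike.im_to_complex, Complex.inv_im, Complex.add_im,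
      Complex.ofReal_im, add_zero, neg_div, neg_neg]
  have hgI : 0 < ∫ t in Set.Ioi (0:ℝ), z.im / Complex.normSq (z + (t:ℂ)) ∂μ := by
    rw [setIntegral_pos_iff_support_of_nonneg_ae
      (Filter.Eventually.of_forall fun t => (hgpos t).le) hg_int]
    have : Function.support (fun t : ℝ => z.im / Complex.normSq (z + (t:ℂ))) = Set.univ :=
      Set.eq_univ_of_forall fun t => (hgpos t).ne'
    rw [this, Set.univ_inter]
    exact hIoi
  have hKim_neg : (K z).im < 0 := by
    rw [hKim]
    have heq : ∫ t in Set.Ioi (0:ℝ), (-(z.im) / Complex.normSq (z + (t:ℂ))) ∂μ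
        = -∫ t in Set.Ioi (0:ℝ), z.im / Complex.normSq (z + (t:ℂ)) ∂μ := by
      rw [← integral_neg]
      refine integral_congr_ae (Filter.Eventually.of_forall fun t => ?_)
      ring
    rw [heq]
    linarith
  -- imaginary part of the equation
  have him : (z ^ 2 + (a : ℂ) * (n : ℂ) ^ 2 - (n : ℂ) ^ 2 * K z).im = 0 := by
    rw [hG]; rfl
  have hexp : (z ^ 2 + (a : ℂ) * (n : ℂ) ^ 2 - (n : ℂ) ^ 2 * K z).im
      = 2 * z.re * z.im - (n:ℝ)^2 * (K z).im := by
    simp [Complex.sub_im, Complex.add_im, Complex.mul_im, Complex.mul_re, pow_two]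
    ring
  rw [hexp] at him
  have hn' : (0:ℝ) < (n:ℝ)^2 := by positivity
  nlinarith [mul_nonneg (mul_nonneg (by norm_num : (0:ℝ) ≤ 2) hre) hz.le,
    mul_pos hn' (neg_pos.mpr hKim_neg)]
end

section
/- Let μ be a nonzero positive measure on (0,∞) with ∫ dμ(t)/t < ∞, K its Cauchy transform, a > 0, n ≥ 1. Then G_n(z) = z² + a n² − n² K(z) has at most one zero in the upper half-plane ℂ₊. -/
open MeasureTheory Complex

lemma GP2aux_bound {z : ℂ} (hz : 0 < z.im) :
    ∃ c : ℝ, 0 < c ∧ ∀ t ∈ Set.Ioi (0:ℝ),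
      ‖(z + (t:ℂ))⁻¹‖ ≤ c * t⁻¹ ∧ ‖(z + (t:ℂ))⁻¹‖ ≤ z.im⁻¹ := by
  refine ⟨(2*z.im + 2*|z.re|)/z.im, by positivity, ?_⟩
  intro t ht
  have ht0 : (0:ℝ) < t := ht
  have hy : z.im ≤ ‖z + (t:ℂ)‖ := by
    calc z.im = |(z + (t:ℂ)).im| := by simp [abs_of_pos hz]
    _ ≤ ‖z + (t:ℂ)‖ := Complex.abs_im_le_norm _
    _ = ‖z + (t:ℂ)‖ := rfl
  have hn : 0 < ‖z + (t:ℂ)‖ := lt_of_lt_of_le hz hy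
  have key : z.im * t ≤ (2*z.im + 2*|z.re|) * ‖z + (t:ℂ)‖ := by
    rcases le_or_gt t (2*|z.re|) with h | h
    · nlinarith [abs_nonneg z.re, mul_le_mul_of_nonneg_left hy (by positivity : (0:ℝ) ≤ 2*z.im + 2*|z.re|)]
    · have hre : z.re + t ≤ ‖z + (t:ℂ)‖ := by
        calc z.re + t = (z + (t:ℂ)).re := by simp
        _ ≤ ‖z + (t:ℂ)‖ := Complex.re_le_norm _
        _ = ‖z + (t:ℂ)‖ := rfl
      nlinarith [neg_abs_le z.re, abs_nonneg z.re, hn.le,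
        mul_le_mul_of_nonneg_left hre (by positivity : (0:ℝ) ≤ 2*z.im),
        mul_nonneg (mul_nonneg (by norm_num : (0:ℝ) ≤ 2) (abs_nonneg z.re)) hn.le]
  constructor
  · rw [norm_inv, ← one_div, div_mul_eq_mul_div,
      div_le_div_iff₀ hn (by positivity)]
    rw [one_mul]
    have h2 : z.im * t * t⁻¹ ≤ (2*z.im + 2*|z.re|) * ‖z + (t:ℂ)‖ * t⁻¹ :=
      mul_le_mul_of_nonneg_right key (by positivity)
    rw [mul_assoc, mul_inv_cancel₀ ht0.ne', mul_one] at h2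
    exact h2.trans_eq (by ring)
  · rw [norm_inv]
    exact inv_anti₀ hz hy

lemma GP2aux_int (μ : Measure ℝ)
    (hint : ∫⁻ t in Set.Ioi (0 : ℝ), ENNReal.ofReal t⁻¹ ∂μ < ⊤)
    {E : Type*} [NormedAddCommGroup E] (f : ℝ → E)
    (hf : AEStronglyMeasurable f (μ.restrict (Set.Ioi 0)))
    (c : ℝ) (hc : 0 ≤ c) (hb : ∀ t ∈ Set.Ioi (0:ℝ), ‖f t‖ ≤ c * t⁻¹) :
    IntegrableOn f (Set.Ioi 0) μ := by
  refine ⟨hf, ?_⟩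
  rw [hasFiniteIntegral_iff_norm]
  calc ∫⁻ t in Set.Ioi (0:ℝ), ENNReal.ofReal ‖f t‖ ∂μ
      ≤ ∫⁻ t in Set.Ioi (0:ℝ), ENNReal.ofReal c * ENNReal.ofReal t⁻¹ ∂μ := by
        refine setLIntegral_mono (measurable_const.mul (ENNReal.measurable_ofReal.comp (measurable_id.inv))) (fun t ht => ?_)
        rw [← ENNReal.ofReal_mul hc]
        exact ENNReal.ofReal_le_ofReal (hb t ht)
    _ = ENNReal.ofReal c * ∫⁻ t in Set.Ioi (0:ℝ), ENNReal.ofReal t⁻¹ ∂μ :=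
        lintegral_const_mul' _ _ ENNReal.ofReal_ne_top
    _ < ⊤ := ENNReal.mul_lt_top ENNReal.ofReal_lt_top hint



theorem GP2_at_most_one_zero_upper_half_plane
    (μ : Measure ℝ) (hμ : μ ≠ 0) (hsupp : μ (Set.Iic 0) = 0)
    (hint : ∫⁻ t in Set.Ioi (0 : ℝ), ENNReal.ofReal t⁻¹ ∂μ < ⊤)
    (K : ℂ → ℂ) (hK : ∀ z, K z = ∫ t in Set.Ioi (0 : ℝ), (z + (t : ℂ))⁻¹ ∂μ)
    (a : ℝ) (ha : 0 < a) (n : ℕ) (hn : 1 ≤ n) :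
    ∀ z₁ z₂ : ℂ, 0 < z₁.im → 0 < z₂.im →
      z₁ ^ 2 + (a : ℂ) * (n : ℂ) ^ 2 - (n : ℂ) ^ 2 * K z₁ = 0 →
      z₂ ^ 2 + (a : ℂ) * (n : ℂ) ^ 2 - (n : ℂ) ^ 2 * K z₂ = 0 → z₁ = z₂ := by
  intro z₁ z₂ hy1 hy2 he1 he2
  by_contra hne
  -- nonvanishing of z + t
  have hnz : ∀ (z : ℂ), 0 < z.im → ∀ t : ℝ, z + (t:ℂ) ≠ 0 := by
    intro z hz t h
    have h2 : (z + (t:ℂ)).im = 0 := by rw [h]; simp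
    simp only [Complex.add_im, Complex.ofReal_im, add_zero] at h2
    linarith
  have hmeas : ∀ z : ℂ, AEStronglyMeasurable (fun t : ℝ => (z + (t:ℂ))⁻¹)
      (μ.restrict (Set.Ioi 0)) := fun z =>
    ((measurable_const.add Complex.measurable_ofReal).inv).aestronglyMeasurable
  obtain ⟨c₁, hc₁, hb₁⟩ := GP2aux_bound hy1
  obtain ⟨c₂, hc₂, hb₂⟩ := GP2aux_bound hy2
  have hint₁ : IntegrableOn (fun t : ℝ => (z₁ + (t:ℂ))⁻¹) (Set.Ioi 0) μ :=
    GP2aux_int μ hint _ (hmeas z₁) c₁ hc₁.le (fun t ht => (hb₁ t ht).1)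
  have hint₂ : IntegrableOn (fun t : ℝ => (z₂ + (t:ℂ))⁻¹) (Set.Ioi 0) μ :=
    GP2aux_int μ hint _ (hmeas z₂) c₂ hc₂.le (fun t ht => (hb₂ t ht).1)
  -- squared integrands
  set I₁ : ℝ := ∫ t in Set.Ioi (0:ℝ), ‖(z₁ + (t:ℂ))⁻¹‖^2 ∂μ with hI₁
  set I₂ : ℝ := ∫ t in Set.Ioi (0:ℝ), ‖(z₂ + (t:ℂ))⁻¹‖^2 ∂μ with hI₂
  have hsqint : ∀ (z : ℂ), 0 < z.im → ∀ c : ℝ, 0 < c →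
      (∀ t ∈ Set.Ioi (0:ℝ), ‖(z + (t:ℂ))⁻¹‖ ≤ c * t⁻¹ ∧ ‖(z + (t:ℂ))⁻¹‖ ≤ z.im⁻¹) →
      IntegrableOn (fun t : ℝ => ‖(z + (t:ℂ))⁻¹‖^2) (Set.Ioi 0) μ := by
    intro z hz c hc hb
    refine GP2aux_int μ hint _
      ((((measurable_const.add Complex.measurable_ofReal).inv).norm.pow_const 2).aestronglyMeasurable)
      (z.im⁻¹ * c) (mul_nonneg (inv_nonneg.mpr hz.le) hc.le) (fun t ht => ?_)
    have b1 := (hb t ht).1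
    have b2 := (hb t ht).2
    have h0 : (0:ℝ) ≤ ‖(z + (t:ℂ))⁻¹‖ := norm_nonneg _
    rw [Real.norm_eq_abs, _root_.abs_of_nonneg (by positivity : (0:ℝ) ≤ ‖(z + (t:ℂ))⁻¹‖^2)]
    calc ‖(z + (t:ℂ))⁻¹‖^2 ≤ z.im⁻¹ * (c * t⁻¹) := by
          nlinarith [inv_pos.mpr hz]
      _ = z.im⁻¹ * c * t⁻¹ := by ring
  have hI1int := hsqint z₁ hy1 c₁ hc₁ hb₁
  have hI2int := hsqint z₂ hy2 c₂ hc₂ hb₂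
  -- product integrand
  have hJint : IntegrableOn (fun t : ℝ => ((z₁ + (t:ℂ)) * (z₂ + (t:ℂ)))⁻¹) (Set.Ioi 0) μ := by
    refine GP2aux_int μ hint _
      (((measurable_const.add Complex.measurable_ofReal).mul
        (measurable_const.add Complex.measurable_ofReal)).inv.aestronglyMeasurable)
      (z₂.im⁻¹ * c₁) (mul_nonneg (inv_nonneg.mpr hy2.le) hc₁.le) (fun t ht => ?_)
    rw [mul_inv, norm_mul]
    calc ‖(z₁ + (t:ℂ))⁻¹‖ * ‖(z₂ + (t:ℂ))⁻¹‖ ≤ (c₁ * t⁻¹) * z₂.im⁻¹ :=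
          mul_le_mul (hb₁ t ht).1 (hb₂ t ht).2 (norm_nonneg _)
            (mul_nonneg hc₁.le (inv_nonneg.mpr (le_of_lt ht)))
      _ = z₂.im⁻¹ * c₁ * t⁻¹ := by ring
  -- imaginary part of K
  have hKim : ∀ (z : ℂ), 0 < z.im →
      IntegrableOn (fun t : ℝ => (z + (t:ℂ))⁻¹) (Set.Ioi 0) μ →
      (K z).im = -z.im * ∫ t in Set.Ioi (0:ℝ), ‖(z + (t:ℂ))⁻¹‖^2 ∂μ := by
    intro z hz hzint
    have hpt : ∀ t : ℝ, ((z + (t:ℂ))⁻¹).im = -z.im * ‖(z + (t:ℂ))⁻¹‖^2 := by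
      intro t
      have hw : (z + (t:ℂ)) ≠ 0 := hnz z hz t
      have hw' : ‖z + (t:ℂ)‖ ≠ 0 := norm_ne_zero_iff.mpr hw
      rw [Complex.inv_im, norm_inv, Complex.add_im, Complex.ofReal_im, add_zero,
        Complex.normSq_eq_norm_sq]
      field_simp
    calc (K z).im = ∫ t in Set.Ioi (0:ℝ), ((z + (t:ℂ))⁻¹).im ∂μ := by
          rw [hK]
          have h2 := integral_im (𝕜 := ℂ) hzint
          simp only [RCLike.im_eq_complex_im] at h2
          exact h2.symm
      _ = ∫ t in Set.Ioi (0:ℝ), -z.im * ‖(z + (t:ℂ))⁻¹‖^2 ∂μ := by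
          simp_rw [hpt]
      _ = -z.im * ∫ t in Set.Ioi (0:ℝ), ‖(z + (t:ℂ))⁻¹‖^2 ∂μ := by
          rw [integral_const_mul]
  -- imaginary part of the equations
  have hx : ∀ (z : ℂ), 0 < z.im →
      z ^ 2 + (a : ℂ) * (n : ℂ) ^ 2 - (n : ℂ) ^ 2 * K z = 0 →
      IntegrableOn (fun t : ℝ => (z + (t:ℂ))⁻¹) (Set.Ioi 0) μ →
      2 * z.re = -(n:ℝ)^2 * ∫ t in Set.Ioi (0:ℝ), ‖(z + (t:ℂ))⁻¹‖^2 ∂μ := by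
    intro z hz he hzint
    have h := congrArg Complex.im he
    have hki := hKim z hz hzint
    simp only [pow_two, Complex.sub_im, Complex.add_im, Complex.mul_im, Complex.mul_re,
      Complex.ofReal_im, Complex.ofReal_re, Complex.natCast_im, Complex.natCast_re,
      Complex.zero_im, hki] at h
    have h2 : (2 * z.re) * z.im = (-(n:ℝ)^2 * ∫ t in Set.Ioi (0:ℝ), ‖(z + (t:ℂ))⁻¹‖^2 ∂μ) * z.im := by
      ring_nf at h ⊢
      linarith
    exact mul_right_cancel₀ hz.ne' h2
  have hx1 := hx z₁ hy1 he1 hint₁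
  have hx2 := hx z₂ hy2 he2 hint₂
  -- subtraction identity
  set J : ℂ := ∫ t in Set.Ioi (0:ℝ), ((z₁ + (t:ℂ)) * (z₂ + (t:ℂ)))⁻¹ ∂μ with hJ
  have hdiff : K z₁ - K z₂ = (z₂ - z₁) * J := by
    rw [hK, hK, ← integral_sub hint₁ hint₂, hJ, ← integral_const_mul]
    congr 1
    funext t
    have h1 := hnz z₁ hy1 t
    have h2 := hnz z₂ hy2 t
    field_simp
    ring
  have hsum : z₁ + z₂ = -(n:ℂ)^2 * J := by
    have hzne : z₁ - z₂ ≠ 0 := sub_ne_zero.mpr hne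
    have hmul : (z₁ - z₂) * (z₁ + z₂) = (z₁ - z₂) * (-(n:ℂ)^2 * J) := by
      linear_combination he1 - he2 + (n:ℂ)^2 * hdiff
    exact mul_left_cancel₀ hzne hmul
  -- norm estimate
  have hnormJ : ‖J‖ ≤ (I₁ + I₂)/2 := by
    calc ‖J‖ ≤ ∫ t in Set.Ioi (0:ℝ), ‖((z₁ + (t:ℂ)) * (z₂ + (t:ℂ)))⁻¹‖ ∂μ :=
          norm_integral_le_integral_norm _
      _ ≤ ∫ t in Set.Ioi (0:ℝ), (‖(z₁ + (t:ℂ))⁻¹‖^2 + ‖(z₂ + (t:ℂ))⁻¹‖^2)/2 ∂μ := by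
          refine setIntegral_mono_on hJint.norm ((hI1int.add hI2int).div_const 2)
            measurableSet_Ioi (fun t ht => ?_)
          rw [mul_inv, norm_mul]
          nlinarith [norm_nonneg ((z₁ + (t:ℂ))⁻¹), norm_nonneg ((z₂ + (t:ℂ))⁻¹),
            sq_nonneg (‖(z₁ + (t:ℂ))⁻¹‖ - ‖(z₂ + (t:ℂ))⁻¹‖)]
      _ = (I₁ + I₂)/2 := by
          rw [integral_div, integral_add hI1int hI2int]
  have hnorm : ‖z₁ + z₂‖ ≤ -(z₁.re + z₂.re) := by
    have hJn : ‖z₁ + z₂‖ = (n:ℝ)^2 * ‖J‖ := by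
      rw [hsum, norm_mul, norm_neg, norm_pow, Complex.norm_natCast]
    rw [hJn]
    have := mul_le_mul_of_nonneg_left hnormJ (by positivity : (0:ℝ) ≤ (n:ℝ)^2)
    calc (n:ℝ)^2 * ‖J‖ ≤ (n:ℝ)^2 * ((I₁ + I₂)/2) := this
      _ = -(z₁.re + z₂.re) := by
          rw [← hI₁, ← hI₂] at *
          linarith [hx1, hx2]
  -- final contradiction
  have hsq : ‖z₁ + z₂‖^2 = (z₁.re + z₂.re)^2 + (z₁.im + z₂.im)^2 := by
    rw [Complex.sq_norm, Complex.normSq_apply]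
    simp only [Complex.add_re, Complex.add_im]
    ring
  nlinarith [norm_nonneg (z₁ + z₂), mul_self_le_mul_self (norm_nonneg (z₁ + z₂)) hnorm,
    hy1, hy2, sq_nonneg (z₁.im + z₂.im)]
end

section
/- Let μ be a nonzero positive measure on (0,∞) with ∫ dμ(t)/t < ∞, K its Cauchy transform, ε > 0, n ≥ 1. Then H_n(z) = z² + ε n² z + n² − n² K(z) has at most one zero in ℂ₊, and any such zero satisfies Re z < 0. -/
open MeasureTheory Complex


lemma add_t_ne_zero {z : ℂ} (hz : z.im ≠ 0) (t : ℝ) : z + (t : ℂ) ≠ 0 := by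
  intro h
  have h2 : (z + (t : ℂ)).im = 0 := by rw [h]; simp
  simp [Complex.add_im] at h2
  exact hz h2

lemma im_le_abs_add (z : ℂ) (t : ℝ) : |z.im| ≤ ‖z + t‖ := by
  have h := Complex.abs_im_le_norm (z + t)
  simpa using h

/-- The constant dominating `t / |z + t|`. -/
noncomputable def KVauxC (z : ℂ) : ℝ := max 2 (2 * ‖z‖ / |z.im|)

lemma KVauxC_pos (z : ℂ) : 0 < KVauxC z := lt_of_lt_of_le two_pos (le_max_left _ _)

lemma t_le_C_mul {z : ℂ} (hz : z.im ≠ 0) {t : ℝ} (ht : 0 < t) :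
    t ≤ KVauxC z * ‖z + t‖ := by
  have him : (0:ℝ) < |z.im| := abs_pos.mpr hz
  have habs : |z.im| ≤ ‖z + t‖ := im_le_abs_add z t
  have habs0 : (0:ℝ) < ‖z + t‖ := lt_of_lt_of_le him habs
  rcases le_or_gt t (2 * ‖z‖) with h | h
  · have h1 : (2 * ‖z‖ / |z.im|) * |z.im| = 2 * ‖z‖ := by
      field_simp
    calc t ≤ 2 * ‖z‖ := h
      _ = (2 * ‖z‖ / |z.im|) * |z.im| := h1.symm
      _ ≤ KVauxC z * ‖z + t‖ := by
          apply mul_le_mul (le_max_right _ _) habs him.le (KVauxC_pos z).le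
  · -- t > 2|z|, so |z+t| ≥ t - |z| ≥ t/2
    have h2 : (t:ℝ) ≤ ‖z + t‖ + ‖z‖ := by
      have h3 : ‖(z + t) + (-z)‖ ≤ ‖z + t‖ + ‖-z‖ :=
        norm_add_le _ _
      have h4 : ‖(z + t) + (-z)‖ = t := by
        have : (z + t) + (-z) = (t : ℂ) := by ring
        rw [this, Complex.norm_real, Real.norm_eq_abs, abs_of_pos ht]
      rw [h4, norm_neg] at h3
      exact h3
    have h4 : t / 2 ≤ ‖z + t‖ := by
      have : ‖z‖ ≤ t / 2 := by linarith
      linarith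
    calc t = 2 * (t / 2) := by ring
      _ ≤ 2 * ‖z + t‖ := by linarith
      _ ≤ KVauxC z * ‖z + t‖ := by
          apply mul_le_mul_of_nonneg_right (le_max_left _ _) habs0.le

lemma inv_abs_le {z : ℂ} (hz : z.im ≠ 0) {t : ℝ} (ht : 0 < t) :
    (‖z + t‖)⁻¹ ≤ KVauxC z * t⁻¹ := by
  have him : (0:ℝ) < |z.im| := abs_pos.mpr hz
  have habs0 : (0:ℝ) < ‖z + t‖ := lt_of_lt_of_le him (im_le_abs_add z t)
  have key := t_le_C_mul hz ht
  have h5 : t / ‖z + t‖ ≤ KVauxC z := (div_le_iff₀ habs0).mpr (by linarith)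
  have h6 : (‖z + t‖)⁻¹ = t⁻¹ * (t / ‖z + t‖) := by
    field_simp
  rw [h6, mul_comm (KVauxC z) t⁻¹]
  exact mul_le_mul_of_nonneg_left h5 (by positivity)

lemma continuous_inv_single {z : ℂ} (hz : z.im ≠ 0) :
    Continuous (fun t : ℝ => (z + (t : ℂ))⁻¹) := by
  apply Continuous.inv₀
  · exact continuous_const.add Complex.continuous_ofReal
  · intro t; exact add_t_ne_zero hz t

lemma integrable_inv_t (μ : Measure ℝ)
    (hint : ∫⁻ t in Set.Ioi (0 : ℝ), ENNReal.ofReal t⁻¹ ∂μ < ⊤) :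
    IntegrableOn (fun t : ℝ => t⁻¹) (Set.Ioi 0) μ := by
  refine ⟨measurable_inv.aestronglyMeasurable, ?_⟩
  have h : ∫⁻ t in Set.Ioi (0:ℝ), ‖t⁻¹‖₊ ∂μ = ∫⁻ t in Set.Ioi (0:ℝ), ENNReal.ofReal t⁻¹ ∂μ := by
    apply setLIntegral_congr_fun measurableSet_Ioi
    intro t ht
    exact Real.enorm_eq_ofReal (inv_nonneg.mpr (le_of_lt ht))
  show (∫⁻ t in Set.Ioi (0:ℝ), (‖t⁻¹‖₊ : ENNReal) ∂μ) < ⊤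
  exact h.trans_lt hint

lemma integrable_single (μ : Measure ℝ)
    (hint : ∫⁻ t in Set.Ioi (0 : ℝ), ENNReal.ofReal t⁻¹ ∂μ < ⊤)
    {z : ℂ} (hz : z.im ≠ 0) :
    IntegrableOn (fun t : ℝ => (z + (t : ℂ))⁻¹) (Set.Ioi 0) μ := by
  apply Integrable.mono' ((integrable_inv_t μ hint).const_mul (KVauxC z))
  · exact (continuous_inv_single hz).aestronglyMeasurable.restrict
  · filter_upwards [ae_restrict_mem measurableSet_Ioi] with t ht
    have ht' : (0:ℝ) < t := ht
    have h1 : ‖(z + (t:ℂ))⁻¹‖ = (‖z + t‖)⁻¹ := by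
      simp
    rw [h1]
    exact inv_abs_le hz ht'

lemma integrable_pair (μ : Measure ℝ)
    (hint : ∫⁻ t in Set.Ioi (0 : ℝ), ENNReal.ofReal t⁻¹ ∂μ < ⊤)
    {z₁ z₂ : ℂ} (h₁ : z₁.im ≠ 0) (h₂ : z₂.im ≠ 0) :
    IntegrableOn (fun t : ℝ => ((z₁ + (t:ℂ)) * (z₂ + (t:ℂ)))⁻¹) (Set.Ioi 0) μ := by
  apply Integrable.mono' (((integrable_inv_t μ hint).const_mul (KVauxC z₁)).const_mul |z₂.im|⁻¹)
  · apply Continuous.aestronglyMeasurable ?_ |>.restrict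
    apply Continuous.inv₀
    · exact ((continuous_const.add Complex.continuous_ofReal).mul
        (continuous_const.add Complex.continuous_ofReal))
    · intro t
      exact mul_ne_zero (add_t_ne_zero h₁ t) (add_t_ne_zero h₂ t)
  · filter_upwards [ae_restrict_mem measurableSet_Ioi] with t ht
    have ht' : (0:ℝ) < t := ht
    have him : (0:ℝ) < |z₂.im| := abs_pos.mpr h₂
    have h1 : ‖((z₁ + (t:ℂ)) * (z₂ + (t:ℂ)))⁻¹‖
        = (‖z₁ + t‖)⁻¹ * (‖z₂ + t‖)⁻¹ := by
      rw [norm_inv, norm_mul]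
      ring
    rw [h1]
    have h2 : (‖z₂ + t‖)⁻¹ ≤ |z₂.im|⁻¹ := by
      apply inv_anti₀ him (im_le_abs_add z₂ t)
    calc (‖z₁ + t‖)⁻¹ * (‖z₂ + t‖)⁻¹
        ≤ (KVauxC z₁ * t⁻¹) * |z₂.im|⁻¹ := by
          apply mul_le_mul (inv_abs_le h₁ ht') h2 (by positivity) (mul_nonneg (KVauxC_pos z₁).le (by positivity))
      _ = |z₂.im|⁻¹ * (KVauxC z₁ * t⁻¹) := by ring
  
lemma integrable_normSq (μ : Measure ℝ)
    (hint : ∫⁻ t in Set.Ioi (0 : ℝ), ENNReal.ofReal t⁻¹ ∂μ < ⊤)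
    {z : ℂ} (hz : z.im ≠ 0) :
    IntegrableOn (fun t : ℝ => (Complex.normSq (z + (t:ℂ)))⁻¹) (Set.Ioi 0) μ := by
  have hconj : ((starRingEnd ℂ) z).im ≠ 0 := by
    simpa using hz
  have h := (integrable_pair μ hint hz hconj).re
  apply h.congr
  filter_upwards with t
  have e : (starRingEnd ℂ) z + (t:ℂ) = (starRingEnd ℂ) (z + (t:ℂ)) := by
    simp
  have : (z + (t:ℂ)) * ((starRingEnd ℂ) z + (t:ℂ)) = ((Complex.normSq (z + t) : ℝ) : ℂ) := by
    rw [e, Complex.mul_conj]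
  rw [this]
  simp [← Complex.ofReal_inv]

lemma normSq_sub' (a b : ℂ) :
    Complex.normSq (a - b) = Complex.normSq a + Complex.normSq b
      - 2 * (a * (starRingEnd ℂ) b).re := by
  simp only [Complex.normSq_apply, Complex.sub_re, Complex.sub_im, Complex.mul_re,
    Complex.conj_re, Complex.conj_im]
  ring

lemma pointwise_normSq (z₁ z₂ : ℂ) (t : ℝ) :
    Complex.normSq ((z₁ + (t:ℂ))⁻¹ - ((starRingEnd ℂ) z₂ + (t:ℂ))⁻¹)
      = (Complex.normSq (z₁ + (t:ℂ)))⁻¹ + (Complex.normSq (z₂ + (t:ℂ)))⁻¹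
        - 2 * (((z₁ + (t:ℂ)) * (z₂ + (t:ℂ)))⁻¹).re := by
  have e : (starRingEnd ℂ) z₂ + (t:ℂ) = (starRingEnd ℂ) (z₂ + (t:ℂ)) := by simp
  rw [e, ← map_inv₀, normSq_sub']
  rw [Complex.normSq_inv, Complex.normSq_conj, Complex.normSq_inv, Complex.conj_conj,
    ← mul_inv]

theorem KV_at_most_one_zero_upper_half_plane
    (μ : Measure ℝ) (hμ : μ ≠ 0) (hsupp : μ (Set.Iic 0) = 0)
    (hint : ∫⁻ t in Set.Ioi (0 : ℝ), ENNReal.ofReal t⁻¹ ∂μ < ⊤)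
    (K : ℂ → ℂ) (hK : ∀ z, K z = ∫ t in Set.Ioi (0 : ℝ), (z + (t : ℂ))⁻¹ ∂μ)
    (ε : ℝ) (hε : 0 < ε) (n : ℕ) (hn : 1 ≤ n)
    (H : ℂ → ℂ)
    (hH : ∀ z, H z = z ^ 2 + (ε : ℂ) * (n : ℂ) ^ 2 * z + (n : ℂ) ^ 2
        - (n : ℂ) ^ 2 * K z) :
    (∀ z₁ z₂ : ℂ, 0 < z₁.im → 0 < z₂.im → H z₁ = 0 → H z₂ = 0 → z₁ = z₂) ∧
    (∀ z : ℂ, 0 < z.im → H z = 0 → z.re < 0) := by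
  have hn2 : (1:ℝ) ≤ (n:ℝ)^2 := by
    have h1 : (1:ℝ) ≤ (n:ℝ) := by exact_mod_cast hn
    nlinarith
  -- the imaginary part of K
  have himK : ∀ z : ℂ, z.im ≠ 0 → (K z).im
      = -z.im * ∫ t in Set.Ioi (0:ℝ), (Complex.normSq (z + (t:ℂ)))⁻¹ ∂μ := by
    intro z hz
    rw [hK, ← RCLike.im_to_complex, ← integral_im (integrable_single μ hint hz),
      ← integral_const_mul]
    apply integral_congr_ae
    apply ae_of_all
    intro t
    simp only [RCLike.im_to_complex, Complex.inv_im]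
    have e2 : (z + (t:ℂ)).im = z.im := by simp
    rw [e2]
    ring
  -- the key identity from the imaginary part of H z = 0
  have key : ∀ z : ℂ, 0 < z.im → H z = 0 →
      2*z.re + ε*(n:ℝ)^2 + (n:ℝ)^2
        * ∫ t in Set.Ioi (0:ℝ), (Complex.normSq (z + (t:ℂ)))⁻¹ ∂μ = 0 := by
    intro z hz h0
    set I : ℝ := ∫ t in Set.Ioi (0:ℝ), (Complex.normSq (z + (t:ℂ)))⁻¹ ∂μ with hI
    rw [hH] at h0
    have him := congrArg Complex.im h0
    have h1 : (z^2).im = 2*z.re*z.im := by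
      rw [sq, Complex.mul_im]; ring
    have h2 : ((ε:ℂ) * (n:ℂ)^2 * z).im = (ε*(n:ℝ)^2) * z.im := by
      have e : (ε:ℂ) * (n:ℂ)^2 = ((ε*(n:ℝ)^2 : ℝ) : ℂ) := by push_cast; ring
      rw [e, Complex.mul_im, Complex.ofReal_re, Complex.ofReal_im]; ring
    have h3 : ((n:ℂ)^2).im = 0 := by
      rw [sq, Complex.mul_im]; simp
    have h4 : ((n:ℂ)^2 * K z).im = (n:ℝ)^2 * (K z).im := by
      have e : (n:ℂ)^2 = (((n:ℝ)^2 : ℝ) : ℂ) := by push_cast; ring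
      rw [e, Complex.mul_im, Complex.ofReal_re, Complex.ofReal_im]; ring
    have hexp : (z ^ 2 + (ε:ℂ) * (n:ℂ) ^ 2 * z + (n:ℂ) ^ 2 - (n:ℂ) ^ 2 * K z).im
        = z.im * (2*z.re + ε*(n:ℝ)^2 + (n:ℝ)^2 * I) := by
      rw [Complex.sub_im, Complex.add_im, Complex.add_im, h1, h2, h3, h4,
        himK z (ne_of_gt hz), ← hI]
      ring
    have hfactor : z.im * (2*z.re + ε*(n:ℝ)^2 + (n:ℝ)^2 * I) = 0 := by
      rw [← hexp, him]
      simp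
    rcases mul_eq_zero.mp hfactor with h | h
    · exact absurd h (ne_of_gt hz)
    · exact h
  constructor
  · -- uniqueness
    intro z₁ z₂ hz₁ hz₂ h₁ h₂
    by_contra hne
    have him₁ : z₁.im ≠ 0 := ne_of_gt hz₁
    have him₂ : z₂.im ≠ 0 := ne_of_gt hz₂
    set J : ℂ := ∫ t in Set.Ioi (0:ℝ), ((z₁ + (t:ℂ)) * (z₂ + (t:ℂ)))⁻¹ ∂μ with hJ
    -- the difference of K values
    have hsub : ∀ t : ℝ, (z₁ + (t:ℂ))⁻¹ - (z₂ + (t:ℂ))⁻¹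
        = (z₂ - z₁) * ((z₁ + (t:ℂ)) * (z₂ + (t:ℂ)))⁻¹ := by
      intro t
      field_simp [add_t_ne_zero him₁ t, add_t_ne_zero him₂ t]
      ring
    have hKd : K z₁ - K z₂ = (z₂ - z₁) * J := by
      rw [hK, hK, ← integral_sub (integrable_single μ hint him₁)
        (integrable_single μ hint him₂)]
      simp only [hsub]
      rw [integral_const_mul, hJ]
    -- factor H z₁ - H z₂
    have hz1' := h₁; have hz2' := h₂
    rw [hH] at hz1' hz2'
    have hfac : (z₁ - z₂) * (z₁ + z₂ + (ε:ℂ)*(n:ℂ)^2 + (n:ℂ)^2 * J) = 0 := by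
      linear_combination hz1' - hz2' + (n:ℂ)^2 * hKd
    have hB : z₁ + z₂ + (ε:ℂ)*(n:ℂ)^2 + (n:ℂ)^2 * J = 0 := by
      rcases mul_eq_zero.mp hfac with h | h
      · exact absurd h (sub_ne_zero.mpr hne)
      · exact h
    -- real part of B
    have hBre := congrArg Complex.re hB
    have h2 : ((ε:ℂ) * (n:ℂ)^2).re = ε*(n:ℝ)^2 := by
      have e : (ε:ℂ) * (n:ℂ)^2 = ((ε*(n:ℝ)^2 : ℝ) : ℂ) := by push_cast; ring
      rw [e, Complex.ofReal_re]
    have h4 : ((n:ℂ)^2 * J).re = (n:ℝ)^2 * J.re := by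
      have e : (n:ℂ)^2 = (((n:ℝ)^2 : ℝ) : ℂ) := by push_cast; ring
      rw [e, Complex.mul_re, Complex.ofReal_re, Complex.ofReal_im]; ring
    rw [Complex.add_re, Complex.add_re, Complex.add_re, h2, h4, Complex.zero_re] at hBre
    -- J.re as an integral
    set ReJ : ℝ := ∫ t in Set.Ioi (0:ℝ), (((z₁ + (t:ℂ)) * (z₂ + (t:ℂ)))⁻¹).re ∂μ with hReJdef
    have hJre : J.re = ReJ := by
      rw [hJ, ← RCLike.re_to_complex, ← integral_re (integrable_pair μ hint him₁ him₂)]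
      rfl
    set I₁ : ℝ := ∫ t in Set.Ioi (0:ℝ), (Complex.normSq (z₁ + (t:ℂ)))⁻¹ ∂μ with hI₁
    set I₂ : ℝ := ∫ t in Set.Ioi (0:ℝ), (Complex.normSq (z₂ + (t:ℂ)))⁻¹ ∂μ with hI₂
    have k₁ := key z₁ hz₁ h₁
    have k₂ := key z₂ hz₂ h₂
    rw [← hI₁] at k₁
    rw [← hI₂] at k₂
    rw [hJre] at hBre
    -- conclude ReJ = (I₁ + I₂)/2
    have hn2pos : (0:ℝ) < (n:ℝ)^2 := by linarith
    have hReJ : ReJ = (I₁ + I₂) / 2 := by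
      have hmul : (n:ℝ)^2 * (ReJ - (I₁ + I₂)/2) = 0 := by
        linear_combination hBre - k₁/2 - k₂/2
      rcases mul_eq_zero.mp hmul with h | h
      · exact absurd h (ne_of_gt hn2pos)
      · linarith
    -- the nonnegative function with zero integral
    set f : ℝ → ℝ := fun t =>
      Complex.normSq ((z₁ + (t:ℂ))⁻¹ - ((starRingEnd ℂ) z₂ + (t:ℂ))⁻¹) with hf
    set g : ℝ → ℝ := fun t =>
      ((Complex.normSq (z₁ + (t:ℂ)))⁻¹ + (Complex.normSq (z₂ + (t:ℂ)))⁻¹)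
        - 2 * (((z₁ + (t:ℂ)) * (z₂ + (t:ℂ)))⁻¹).re with hg
    have hfg : ∀ t, f t = g t := by
      intro t
      rw [hf, hg]
      simp only
      rw [pointwise_normSq z₁ z₂ t]
    have hintg : IntegrableOn g (Set.Ioi 0) μ :=
      (((integrable_normSq μ hint him₁).add (integrable_normSq μ hint him₂)).sub
        (((integrable_pair μ hint him₁ him₂).re).const_mul 2))
    have hintf : IntegrableOn f (Set.Ioi 0) μ :=
      hintg.congr (ae_of_all _ fun t => (hfg t).symm)
    have hintg0 : ∫ t in Set.Ioi (0:ℝ), g t ∂μ = 0 := by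
      have hA : IntegrableOn (fun t : ℝ =>
          (Complex.normSq (z₁ + (t:ℂ)))⁻¹ + (Complex.normSq (z₂ + (t:ℂ)))⁻¹) (Set.Ioi 0) μ :=
        (integrable_normSq μ hint him₁).add (integrable_normSq μ hint him₂)
      have hC : IntegrableOn (fun t : ℝ =>
          2 * (((z₁ + (t:ℂ)) * (z₂ + (t:ℂ)))⁻¹).re) (Set.Ioi 0) μ :=
        ((integrable_pair μ hint him₁ him₂).re).const_mul 2
      have e1 : (∫ t in Set.Ioi (0:ℝ),
            (((Complex.normSq (z₁ + (t:ℂ)))⁻¹ + (Complex.normSq (z₂ + (t:ℂ)))⁻¹)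
              - 2 * (((z₁ + (t:ℂ)) * (z₂ + (t:ℂ)))⁻¹).re) ∂μ)
          = (∫ t in Set.Ioi (0:ℝ),
              ((Complex.normSq (z₁ + (t:ℂ)))⁻¹ + (Complex.normSq (z₂ + (t:ℂ)))⁻¹) ∂μ)
            - ∫ t in Set.Ioi (0:ℝ), 2 * (((z₁ + (t:ℂ)) * (z₂ + (t:ℂ)))⁻¹).re ∂μ :=
        integral_sub hA hC
      have e2 : (∫ t in Set.Ioi (0:ℝ),
            ((Complex.normSq (z₁ + (t:ℂ)))⁻¹ + (Complex.normSq (z₂ + (t:ℂ)))⁻¹) ∂μ)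
          = I₁ + I₂ :=
        integral_add (integrable_normSq μ hint him₁) (integrable_normSq μ hint him₂)
      have e3 : (∫ t in Set.Ioi (0:ℝ), 2 * (((z₁ + (t:ℂ)) * (z₂ + (t:ℂ)))⁻¹).re ∂μ)
          = 2 * ReJ := integral_const_mul 2 _
      rw [hg]
      simp only
      rw [e1, e2, e3, hReJ]
      ring
    have hintf0 : ∫ t in Set.Ioi (0:ℝ), f t ∂μ = 0 := by
      rw [integral_congr_ae (ae_of_all _ hfg)]
      exact hintg0
    have hae : f =ᵐ[μ.restrict (Set.Ioi 0)] 0 :=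
      (integral_eq_zero_iff_of_nonneg (fun t => Complex.normSq_nonneg _) hintf).mp hintf0
    have hfalse : ∀ᵐ t ∂(μ.restrict (Set.Ioi 0)), False := by
      filter_upwards [hae] with t htf
      have h0 : (z₁ + (t:ℂ))⁻¹ - ((starRingEnd ℂ) z₂ + (t:ℂ))⁻¹ = 0 :=
        Complex.normSq_eq_zero.mp htf
      have h1 : (z₁ + (t:ℂ))⁻¹ = ((starRingEnd ℂ) z₂ + (t:ℂ))⁻¹ :=
        sub_eq_zero.mp h0
      have h2 : z₁ + (t:ℂ) = (starRingEnd ℂ) z₂ + (t:ℂ) := inv_injective h1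
      have h3 : z₁ = (starRingEnd ℂ) z₂ := by
        have := add_right_cancel h2
        exact this
      have h4 : z₁.im = -z₂.im := by
        rw [h3]; simp
      linarith
    have hres0 : μ (Set.Ioi (0:ℝ)) = 0 := by
      rw [ae_iff] at hfalse
      simpa using hfalse
    have huniv : μ Set.univ = 0 := by
      have hsplit : (Set.univ : Set ℝ) = Set.Iic 0 ∪ Set.Ioi 0 := by
        ext x; simp [le_or_gt]
      rw [hsplit]
      have := measure_union_le (μ := μ) (Set.Iic (0:ℝ)) (Set.Ioi 0)
      rw [hsupp, hres0] at this
      simpa using this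
    exact hμ (Measure.measure_univ_eq_zero.mp huniv)
  · -- Re z < 0
    intro z hz h0
    have hk := key z hz h0
    have hI : 0 ≤ ∫ t in Set.Ioi (0:ℝ), (Complex.normSq (z + (t:ℂ)))⁻¹ ∂μ := by
      apply setIntegral_nonneg measurableSet_Ioi
      intro t ht
      exact inv_nonneg.mpr (Complex.normSq_nonneg _)
    nlinarith
end

section
/- Let μ be a finite nonzero positive measure on (d₀,∞), d₀ > 0, with total mass A, and K its Cauchy transform. If for each large n, z_n ∈ ℂ₊ is a zero of F_n(z) = z + n²K(z), then z_n = i√A·n + o(n) as n → ∞. -/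
open MeasureTheory Complex Filter

lemma my_CS {α : Type*} [MeasurableSpace α] (ν : Measure α) [IsFiniteMeasure ν] {f : α → ℝ}
    (hf : Integrable f ν) (hf2 : Integrable (fun t => f t ^ 2) ν) (hfnn : 0 ≤ᵐ[ν] f) :
    ∫ t, f t ∂ν ≤ Real.sqrt ((ν Set.univ).toReal) * Real.sqrt (∫ t, f t ^ 2 ∂ν) := by
  set m := (ν Set.univ).toReal with hm
  have hm0 : 0 ≤ m := ENNReal.toReal_nonneg
  have hIf2 : 0 ≤ ∫ t, f t ^ 2 ∂ν := integral_nonneg fun t => sq_nonneg _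
  have hIf : 0 ≤ ∫ t, f t ∂ν := integral_nonneg_of_ae hfnn
  rcases eq_or_lt_of_le hm0 with h0 | hpos
  · have : ν = 0 := by
      have := ENNReal.toReal_eq_zero_iff (ν Set.univ)
      rw [← hm, ← h0] at this
      rcases this.mp rfl with h | h
      · exact Measure.measure_univ_eq_zero.mp h
      · exact absurd h (measure_ne_top ν _)
    subst this
    simp
  · set If := ∫ t, f t ∂ν with hIfdef
    set If2 := ∫ t, f t ^ 2 ∂ν with hIf2def
    have key : If ^ 2 ≤ m * If2 := by
      have hexp : ∫ t, (f t - If / m) ^ 2 ∂ν = If2 - 2 * (If / m) * If + (If / m) ^ 2 * m := by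
        have : ∀ t, (f t - If / m) ^ 2 = f t ^ 2 - (2 * (If / m)) * f t + (If / m) ^ 2 := by
          intro t; ring
        simp_rw [this]
        rw [integral_add, integral_sub hf2 (hf.const_mul _), MeasureTheory.integral_const_mul, integral_const]
        · simp [smul_eq_mul, measureReal_def, ← hm, ← hIfdef]; ring
        · exact hf2.sub (hf.const_mul _)
        · exact integrable_const _
      have h0 : 0 ≤ If2 - 2 * (If / m) * If + (If / m) ^ 2 * m := by
        rw [← hexp]; exact integral_nonneg fun t => sq_nonneg _
      have hmne : m ≠ 0 := ne_of_gt hpos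
      have e1 : (If / m) ^ 2 * m = If ^ 2 / m := by field_simp
      have e2 : 2 * (If / m) * If = 2 * (If ^ 2 / m) := by field_simp
      have h1 : If ^ 2 / m ≤ If2 := by linarith
      calc If ^ 2 = If ^ 2 / m * m := by field_simp
        _ ≤ If2 * m := by exact mul_le_mul_of_nonneg_right h1 hm0
        _ = m * If2 := mul_comm _ _
    calc If = Real.sqrt (If ^ 2) := by rw [Real.sqrt_sq hIf]
      _ ≤ Real.sqrt (m * If2) := Real.sqrt_le_sqrt key
      _ = Real.sqrt m * Real.sqrt If2 := Real.sqrt_mul hm0 _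

set_option maxHeartbeats 2000000 in
theorem GP1_zeros_asymptotics
    (μ : Measure ℝ) (hμ : μ ≠ 0) [IsFiniteMeasure μ] (d₀ : ℝ) (hd₀ : 0 < d₀)
    (hsupp : μ (Set.Iic d₀) = 0)
    (A : ℝ) (hA : A = (μ (Set.Ioi (0 : ℝ))).toReal)
    (K : ℂ → ℂ) (hK : ∀ z, K z = ∫ t in Set.Ioi (0 : ℝ), (z + (t : ℂ))⁻¹ ∂μ)
    (z : ℕ → ℂ) (N : ℕ)
    (hz : ∀ n, N ≤ n → 0 < (z n).im ∧ z n + (n : ℂ) ^ 2 * K (z n) = 0) :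
    Tendsto (fun n : ℕ =>
        (z n - Complex.I * (Real.sqrt A : ℂ) * (n : ℂ)) / (n : ℂ))
      atTop (nhds 0) := by
  set ν : Measure ℝ := μ.restrict (Set.Ioi 0) with hν
  have hνuniv : ν Set.univ = μ (Set.Ioi 0) := by
    rw [hν, Measure.restrict_apply_univ]
  have hA' : A = (ν Set.univ).toReal := by rw [hνuniv]; exact hA
  -- a.e. t, d₀ < t
  have hae : ∀ᵐ t ∂ν, d₀ < t := by
    rw [ae_iff]
    have : {t : ℝ | ¬ d₀ < t} = Set.Iic d₀ := by ext t; simp [Set.mem_Iic]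
    rw [this, hν, Measure.restrict_apply measurableSet_Iic]
    exact measure_mono_null Set.inter_subset_left hsupp
  have haepos : ∀ᵐ t ∂ν, 0 < t := hae.mono fun t ht => lt_trans hd₀ ht
  -- A > 0
  have hApos : 0 < A := by
    rw [hA]
    have h1 : μ (Set.Iic 0) = 0 :=
      measure_mono_null (Set.Iic_subset_Iic.mpr hd₀.le) hsupp
    have h2 : μ Set.univ ≤ μ (Set.Iic 0) + μ (Set.Ioi 0) := by
      rw [← Set.Iic_union_Ioi (a := (0:ℝ))]; exact measure_union_le _ _
    rw [h1, zero_add] at h2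
    have h3 : 0 < μ Set.univ := Measure.measure_univ_pos.mpr hμ
    exact ENNReal.toReal_pos (ne_of_gt (lt_of_lt_of_le h3 h2)) (measure_ne_top μ _)
  have hsA : 0 < Real.sqrt A := Real.sqrt_pos.mpr hApos
  -- basic facts for z in upper half plane
  have hne : ∀ (w : ℂ), 0 < w.im → ∀ t : ℝ, w + (t : ℂ) ≠ 0 := by
    intro w hw t h
    have : (w + (t : ℂ)).im = w.im := by simp
    rw [h] at this; simp at this; rw [← this] at hw; exact lt_irrefl 0 hw
  have hnormge : ∀ (w : ℂ), 0 < w.im → ∀ t : ℝ, w.im ≤ ‖w + (t : ℂ)‖ := by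
    intro w hw t
    calc w.im ≤ |(w + (t:ℂ)).im| := by simp [abs_of_pos hw, le_abs_self]
      _ ≤ ‖w + (t:ℂ)‖ := Complex.abs_im_le_norm _
      _ = ‖w + (t:ℂ)‖ := rfl
  have hnormpos : ∀ (w : ℂ), 0 < w.im → ∀ t : ℝ, 0 < ‖w + (t : ℂ)‖ := by
    intro w hw t; exact lt_of_lt_of_le hw (hnormge w hw t)
  -- integrability of (w+t)⁻¹
  have hInt1 : ∀ (w : ℂ), 0 < w.im → Integrable (fun t : ℝ => (w + (t : ℂ))⁻¹) ν := by
    intro w hw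
    have hc : Continuous (fun t : ℝ => (w + (t : ℂ))⁻¹) :=
      (continuous_const.add Complex.continuous_ofReal).inv₀ (fun t => hne w hw t)
    refine (integrable_const (w.im)⁻¹).mono' hc.aestronglyMeasurable ?_
    refine Filter.Eventually.of_forall (fun t => ?_)
    rw [norm_inv]
    exact inv_anti₀ hw (hnormge w hw t)
  have hIntn : ∀ (w : ℂ), 0 < w.im → Integrable (fun t : ℝ => ‖w + (t : ℂ)‖⁻¹) ν := by
    intro w hw
    have hc : Continuous (fun t : ℝ => ‖w + (t : ℂ)‖⁻¹) := by
      refine Continuous.inv₀ ?_ (fun t => ne_of_gt (hnormpos w hw t))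
      exact (continuous_const.add Complex.continuous_ofReal).norm
    refine (integrable_const (w.im)⁻¹).mono' hc.aestronglyMeasurable ?_
    refine Filter.Eventually.of_forall (fun t => ?_)
    rw [Real.norm_eq_abs, _root_.abs_of_nonneg (inv_nonneg.mpr (norm_nonneg _))]
    exact inv_anti₀ hw (hnormge w hw t)
  have hIntn2 : ∀ (w : ℂ), 0 < w.im → Integrable (fun t : ℝ => (‖w + (t : ℂ)‖⁻¹) ^ 2) ν := by
    intro w hw
    have hc : Continuous (fun t : ℝ => (‖w + (t : ℂ)‖⁻¹) ^ 2) := by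
      refine Continuous.pow ?_ 2
      refine Continuous.inv₀ ?_ (fun t => ne_of_gt (hnormpos w hw t))
      exact (continuous_const.add Complex.continuous_ofReal).norm
    refine (integrable_const ((w.im)⁻¹ ^ 2)).mono' hc.aestronglyMeasurable ?_
    refine Filter.Eventually.of_forall (fun t => ?_)
    rw [Real.norm_eq_abs, _root_.abs_of_nonneg (pow_nonneg (inv_nonneg.mpr (norm_nonneg _)) 2)]
    refine pow_le_pow_left₀ (inv_nonneg.mpr (norm_nonneg _)) ?_ 2
    exact inv_anti₀ hw (hnormge w hw t)
  -- J and the imaginary-part identity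
  set J : ℂ → ℝ := fun w => ∫ t, (‖w + (t:ℂ)‖⁻¹) ^ 2 ∂ν with hJdef
  have hsqnorm : ∀ (w : ℂ) (t : ℝ), (‖w + (t:ℂ)‖⁻¹) ^ 2 = (Complex.normSq (w + t))⁻¹ := by
    intro w t
    rw [inv_pow, Complex.sq_norm]
  have hKim : ∀ w : ℂ, 0 < w.im → (K w).im = -w.im * J w := by
    intro w hw
    have him : (∫ t, (w + (t:ℂ))⁻¹ ∂ν).im = ∫ t, ((w + (t:ℂ))⁻¹).im ∂ν := by
      rw [← Complex.imCLM_apply, ← ContinuousLinearMap.integral_comp_comm _ (hInt1 w hw)]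
      rfl
    rw [hK w, him]
    have hpt : ∀ t : ℝ, ((w + (t:ℂ))⁻¹).im = -w.im * (‖w + (t:ℂ)‖⁻¹) ^ 2 := by
      intro t
      rw [Complex.inv_im, hsqnorm]
      have h1 : (w + (t:ℂ)).im = w.im := by simp
      rw [h1, div_eq_mul_inv, neg_mul]
    simp_rw [hpt]
    rw [MeasureTheory.integral_const_mul]
  have hJn : ∀ n : ℕ, N ≤ n → 1 ≤ n → J (z n) = ((n:ℝ) ^ 2)⁻¹ := by
    intro n hn hn1
    obtain ⟨him, heq⟩ := hz n hn
    have h1 : ((z n + (n:ℂ)^2 * K (z n)).im) = 0 := by rw [heq]; simp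
    have h2 : ((n:ℂ)^2 * K (z n)).im = (n:ℝ)^2 * (K (z n)).im := by
      have : ((n:ℂ))^2 = (((n:ℝ)^2 : ℝ) : ℂ) := by push_cast; ring
      rw [this, Complex.im_ofReal_mul]
    rw [Complex.add_im, h2, hKim _ him] at h1
    have hn2 : (0:ℝ) < (n:ℝ)^2 := by positivity
    have h3 : (z n).im * (1 - (n:ℝ)^2 * J (z n)) = 0 := by ring_nf; ring_nf at h1; linarith
    rcases mul_eq_zero.mp h3 with h | h
    · exact absurd h (ne_of_gt him)
    · field_simp
      linarith
  have hKn : ∀ n : ℕ, N ≤ n → 1 ≤ n → K (z n) = -(z n) / (n:ℂ)^2 := by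
    intro n hn hn1
    obtain ⟨him, heq⟩ := hz n hn
    have hncne : ((n:ℂ))^2 ≠ 0 := by
      have : (n:ℂ) ≠ 0 := Nat.cast_ne_zero.mpr (by omega)
      exact pow_ne_zero 2 this
    rw [eq_div_iff hncne]
    linear_combination heq
  -- upper bound on ‖z n‖
  have hnrm : ∀ n : ℕ, N ≤ n → 1 ≤ n → ‖z n‖ ≤ Real.sqrt A * n := by
    intro n hn hn1
    obtain ⟨him, heq⟩ := hz n hn
    have hKnorm : ‖K (z n)‖ ≤ Real.sqrt A * ((n:ℝ))⁻¹ := by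
      calc ‖K (z n)‖ ≤ ∫ t, ‖(z n + (t:ℂ))⁻¹‖ ∂ν := by
            rw [hK]; exact norm_integral_le_integral_norm _
        _ = ∫ t, ‖z n + (t:ℂ)‖⁻¹ ∂ν := by simp_rw [norm_inv]
        _ ≤ Real.sqrt ((ν Set.univ).toReal) * Real.sqrt (∫ t, (‖z n + (t:ℂ)‖⁻¹) ^ 2 ∂ν) := by
            refine my_CS ν (hIntn _ him) (hIntn2 _ him) ?_
            exact Filter.Eventually.of_forall (fun t => inv_nonneg.mpr (norm_nonneg _))
        _ = Real.sqrt A * Real.sqrt (((n:ℝ)^2)⁻¹) := by rw [← hA', ← hJn n hn hn1]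
        _ = Real.sqrt A * ((n:ℝ))⁻¹ := by
            congr 1
            rw [Real.sqrt_inv, Real.sqrt_sq (by positivity)]
    have hzeq : z n = -((n:ℂ)^2 * K (z n)) := by linear_combination heq
    calc ‖z n‖ = ‖(n:ℂ)^2 * K (z n)‖ := by nth_rewrite 1 [hzeq]; rw [norm_neg]
      _ = (n:ℝ)^2 * ‖K (z n)‖ := by
          rw [norm_mul, norm_pow]; norm_num
      _ ≤ (n:ℝ)^2 * (Real.sqrt A * ((n:ℝ))⁻¹) := by
          exact mul_le_mul_of_nonneg_left hKnorm (by positivity)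
      _ = Real.sqrt A * n := by
          have hne0 : ((n:ℝ)) ≠ 0 := by positivity
          field_simp
  have hIic : ν (Set.Iic d₀) = 0 := by
    rw [hν, Measure.restrict_apply measurableSet_Iic]
    exact measure_mono_null Set.inter_subset_left hsupp
  have hνuniv_pos : 0 < ν Set.univ := by
    rcases (eq_or_lt_of_le (show (0:ENNReal) ≤ ν Set.univ from bot_le)) with h | h
    · exfalso
      rw [hA', ← h] at hApos
      simp at hApos
    · exact h
  have hIoid : 0 < ν (Set.Ioi d₀) := by
    have h2 : ν Set.univ ≤ ν (Set.Iic d₀) + ν (Set.Ioi d₀) := by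
      rw [← Set.Iic_union_Ioi (a := d₀)]; exact measure_union_le _ _
    rw [hIic, zero_add] at h2
    exact lt_of_lt_of_le hνuniv_pos h2
  -- lower bound mechanism: if ‖z n‖ ≤ M then c M ≤ (n²)⁻¹
  have hlow : ∀ M : ℝ, 0 < M → ∃ c : ℝ, 0 < c ∧
      ∀ n : ℕ, N ≤ n → 1 ≤ n → ‖z n‖ ≤ M → c ≤ ((n:ℝ) ^ 2)⁻¹ := by
    intro M hM
    set f : ℝ → ℝ := fun t => ((M + t) ^ 2)⁻¹ with hf
    have hfmeas : Measurable f := (((measurable_const.add measurable_id).pow_const 2).inv)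
    have hfint : Integrable f ν := by
      refine (integrable_const (((M + d₀) ^ 2)⁻¹)).mono' hfmeas.aestronglyMeasurable ?_
      refine hae.mono (fun t ht => ?_)
      rw [Real.norm_eq_abs, _root_.abs_of_nonneg (by positivity)]
      have h1 : (M + d₀) ^ 2 ≤ (M + t) ^ 2 := by nlinarith
      exact inv_anti₀ (by positivity) h1
    refine ⟨∫ t, f t ∂ν, ?_, ?_⟩
    · rw [MeasureTheory.integral_pos_iff_support_of_nonneg_ae
        (Filter.Eventually.of_forall (fun t => by positivity)) hfint]
      refine lt_of_lt_of_le hIoid (measure_mono ?_)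
      intro t ht
      have : 0 < M + t := by have := lt_trans hd₀ ht; linarith
      simp only [Function.support, Set.mem_setOf_eq, hf]
      positivity
    · intro n hn hn1 hM'
      rw [← hJn n hn hn1]
      refine integral_mono_ae hfint (hIntn2 _ (hz n hn).1) ?_
      refine hae.mono (fun t ht => ?_)
      have ht0 : 0 < t := lt_trans hd₀ ht
      show (((M + t) ^ 2)⁻¹ : ℝ) ≤ ‖z n + (t:ℂ)‖⁻¹ ^ 2
      rw [hsqnorm]
      have h1 : Complex.normSq (z n + t) ≤ (M + t) ^ 2 := by
        rw [← Complex.sq_norm]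
        have h2 : ‖z n + (t:ℂ)‖ ≤ M + t := by
          calc ‖z n + (t:ℂ)‖ ≤ ‖z n‖ + ‖(t:ℂ)‖ := norm_add_le _ _
            _ ≤ M + t := by
                refine add_le_add hM' ?_
                simp [Complex.norm_real, _root_.abs_of_pos ht0]
        exact pow_le_pow_left₀ (norm_nonneg _) h2 2
      refine inv_anti₀ ?_ h1
      have := hnormpos (z n) (hz n hn).1 t
      rw [← Complex.sq_norm]
      positivity
  -- pointwise identity and integrability for t * (w+t)⁻¹
  have hpt : ∀ w : ℂ, 0 < w.im → ∀ t : ℝ, (t:ℂ) * (w + t)⁻¹ = 1 - w * (w + t)⁻¹ := by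
    intro w hw t
    have h := hne w hw t
    field_simp
    ring
  have hIntt : ∀ w : ℂ, 0 < w.im → Integrable (fun t : ℝ => (t:ℂ) * (w + (t:ℂ))⁻¹) ν := by
    intro w hw
    have : (fun t : ℝ => (t:ℂ) * (w + (t:ℂ))⁻¹) = fun t : ℝ => 1 - w * (w + (t:ℂ))⁻¹ :=
      funext (hpt w hw)
    rw [this]
    exact (integrable_const 1).sub ((hInt1 w hw).const_mul w)
  -- the R identity
  have hR : ∀ n : ℕ, N ≤ n → 1 ≤ n →
      ∫ t, (t:ℂ) * (z n + (t:ℂ))⁻¹ ∂ν = (A:ℂ) + (z n) ^ 2 / (n:ℂ) ^ 2 := by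
    intro n hn hn1
    obtain ⟨him, heq⟩ := hz n hn
    have h1 : ∫ t, (t:ℂ) * (z n + (t:ℂ))⁻¹ ∂ν = ∫ t, (1 - z n * (z n + (t:ℂ))⁻¹) ∂ν := by
      congr 1
      exact funext (hpt _ him)
    rw [h1, integral_sub (integrable_const 1) ((hInt1 _ him).const_mul _),
      MeasureTheory.integral_const_mul, integral_const, measureReal_def, Complex.real_smul, ← hK]
    rw [hKn n hn hn1]
    have hncne : ((n:ℂ))^2 ≠ 0 := by
      have : (n:ℂ) ≠ 0 := Nat.cast_ne_zero.mpr (by omega)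
      exact pow_ne_zero 2 this
    rw [hA']
    field_simp
    ring
  -- the main bound on the R integral at a zero
  have hRbound : ∀ T : ℝ, 0 ≤ T → ∀ n : ℕ, N ≤ n → 1 ≤ n → T < ‖z n‖ →
      ‖∫ t, (t:ℂ) * (z n + (t:ℂ))⁻¹ ∂ν‖ ≤
        A * (T / (‖z n‖ - T)) +
          (Real.sqrt A * Real.sqrt ((ν (Set.Ioi T)).toReal) + (ν (Set.Ioi T)).toReal) := by
    intro T hT n hn hn1 hTz
    obtain ⟨him, heq⟩ := hz n hn
    have hint := hIntt (z n) him
    have hsplit : (∫ t, (t:ℂ) * (z n + (t:ℂ))⁻¹ ∂ν) =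
        (∫ t in Set.Ioi T, (t:ℂ) * (z n + (t:ℂ))⁻¹ ∂ν) +
          ∫ t in Set.Iic T, (t:ℂ) * (z n + (t:ℂ))⁻¹ ∂ν := by
      have h0 := (integral_add_compl (measurableSet_Ioi (a := T)) hint).symm
      rwa [Set.compl_Ioi] at h0
    have hnormpt : ∀ t : ℝ, 0 < t → ‖(t:ℂ) * (z n + (t:ℂ))⁻¹‖ = t * ‖z n + (t:ℂ)‖⁻¹ := by
      intro t ht
      rw [norm_mul, norm_inv, Complex.norm_real, Real.norm_eq_abs, _root_.abs_of_pos ht]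
    have hIicB : ‖∫ t in Set.Iic T, (t:ℂ) * (z n + (t:ℂ))⁻¹ ∂ν‖ ≤ A * (T / (‖z n‖ - T)) := by
      have hden : (0:ℝ) < ‖z n‖ - T := by linarith
      have hC : (0:ℝ) ≤ T / (‖z n‖ - T) := div_nonneg hT hden.le
      calc ‖∫ t in Set.Iic T, (t:ℂ) * (z n + (t:ℂ))⁻¹ ∂ν‖
          ≤ ∫ t in Set.Iic T, ‖(t:ℂ) * (z n + (t:ℂ))⁻¹‖ ∂ν := norm_integral_le_integral_norm _
        _ ≤ ∫ _t in Set.Iic T, (T / (‖z n‖ - T)) ∂ν := by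
            refine integral_mono_ae (hint.restrict.norm) (integrable_const _) ?_
            refine ((ae_restrict_of_ae hae).and (ae_restrict_mem measurableSet_Iic)).mono ?_
            rintro t ⟨ht1, ht2⟩
            show ‖(t:ℂ) * (z n + (t:ℂ))⁻¹‖ ≤ T / (‖z n‖ - T)
            have ht0 : 0 < t := lt_trans hd₀ ht1
            have htT : t ≤ T := ht2
            have hwt : ‖z n‖ - T ≤ ‖z n + (t:ℂ)‖ := by
              have h4 : ‖z n‖ ≤ ‖z n + (t:ℂ)‖ + t := by
                calc ‖z n‖ = ‖(z n + (t:ℂ)) - (t:ℂ)‖ := by congr 1; ring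
                  _ ≤ ‖z n + (t:ℂ)‖ + ‖(t:ℂ)‖ := norm_sub_le _ _
                  _ = ‖z n + (t:ℂ)‖ + t := by
                      rw [Complex.norm_real, Real.norm_eq_abs, _root_.abs_of_pos ht0]
              linarith
            rw [hnormpt t ht0]
            rw [div_eq_mul_inv]
            refine mul_le_mul htT (inv_anti₀ hden hwt) (inv_nonneg.mpr (norm_nonneg _)) hT
        _ = (ν (Set.Iic T)).toReal * (T / (‖z n‖ - T)) := by
            rw [integral_const, smul_eq_mul, measureReal_restrict_apply_univ, measureReal_def]
        _ ≤ A * (T / (‖z n‖ - T)) := by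
            refine mul_le_mul_of_nonneg_right ?_ hC
            rw [hA']
            exact ENNReal.toReal_mono (measure_ne_top ν _) (measure_mono (Set.subset_univ _))
    have hIoiB : ‖∫ t in Set.Ioi T, (t:ℂ) * (z n + (t:ℂ))⁻¹ ∂ν‖ ≤
        Real.sqrt A * Real.sqrt ((ν (Set.Ioi T)).toReal) + (ν (Set.Ioi T)).toReal := by
      have hCS : (∫ t in Set.Ioi T, ‖z n + (t:ℂ)‖⁻¹ ∂ν) ≤
          Real.sqrt ((ν (Set.Ioi T)).toReal) * ((n:ℝ))⁻¹ := by
        calc (∫ t in Set.Ioi T, ‖z n + (t:ℂ)‖⁻¹ ∂ν)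
            ≤ Real.sqrt (((ν.restrict (Set.Ioi T)) Set.univ).toReal) *
              Real.sqrt (∫ t in Set.Ioi T, (‖z n + (t:ℂ)‖⁻¹) ^ 2 ∂ν) := by
              refine my_CS _ ((hIntn _ him).restrict) ((hIntn2 _ him).restrict) ?_
              exact Filter.Eventually.of_forall (fun t => inv_nonneg.mpr (norm_nonneg _))
          _ ≤ Real.sqrt ((ν (Set.Ioi T)).toReal) * ((n:ℝ))⁻¹ := by
              rw [Measure.restrict_apply_univ]
              refine mul_le_mul_of_nonneg_left ?_ (Real.sqrt_nonneg _)
              have h5 : (∫ t in Set.Ioi T, (‖z n + (t:ℂ)‖⁻¹) ^ 2 ∂ν) ≤ ((n:ℝ)^2)⁻¹ := by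
                rw [← hJn n hn hn1]
                refine setIntegral_le_integral (hIntn2 _ him) ?_
                exact Filter.Eventually.of_forall (fun t => by positivity)
              calc Real.sqrt (∫ t in Set.Ioi T, (‖z n + (t:ℂ)‖⁻¹) ^ 2 ∂ν)
                  ≤ Real.sqrt (((n:ℝ)^2)⁻¹) := Real.sqrt_le_sqrt h5
                _ = ((n:ℝ))⁻¹ := by rw [Real.sqrt_inv, Real.sqrt_sq (by positivity)]
      calc ‖∫ t in Set.Ioi T, (t:ℂ) * (z n + (t:ℂ))⁻¹ ∂ν‖
          ≤ ∫ t in Set.Ioi T, ‖(t:ℂ) * (z n + (t:ℂ))⁻¹‖ ∂ν := norm_integral_le_integral_norm _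
        _ ≤ ∫ t in Set.Ioi T, (‖z n‖ * ‖z n + (t:ℂ)‖⁻¹ + 1) ∂ν := by
            refine integral_mono_ae (hint.restrict.norm)
              (((hIntn _ him).restrict.const_mul _).add (integrable_const 1)) ?_
            refine (ae_restrict_of_ae haepos).mono (fun t ht0 => ?_)
            show ‖(t:ℂ) * (z n + (t:ℂ))⁻¹‖ ≤ ‖z n‖ * ‖z n + (t:ℂ)‖⁻¹ + 1
            rw [hnormpt t ht0]
            have h6 : t ≤ ‖z n‖ + ‖z n + (t:ℂ)‖ := by
              calc t = ‖(t:ℂ)‖ := by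
                    rw [Complex.norm_real, Real.norm_eq_abs, _root_.abs_of_pos ht0]
                _ = ‖(z n + (t:ℂ)) - z n‖ := by congr 1; ring
                _ ≤ ‖z n + (t:ℂ)‖ + ‖z n‖ := norm_sub_le _ _
                _ = ‖z n‖ + ‖z n + (t:ℂ)‖ := by ring
            have h7 : (0:ℝ) < ‖z n + (t:ℂ)‖ := hnormpos _ him t
            have h8 : t * ‖z n + (t:ℂ)‖⁻¹ ≤ (‖z n‖ + ‖z n + (t:ℂ)‖) * ‖z n + (t:ℂ)‖⁻¹ :=
              mul_le_mul_of_nonneg_right h6 (inv_nonneg.mpr (norm_nonneg _))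
            calc t * ‖z n + (t:ℂ)‖⁻¹ ≤ (‖z n‖ + ‖z n + (t:ℂ)‖) * ‖z n + (t:ℂ)‖⁻¹ := h8
              _ = ‖z n‖ * ‖z n + (t:ℂ)‖⁻¹ + ‖z n + (t:ℂ)‖ * ‖z n + (t:ℂ)‖⁻¹ := by ring
              _ = ‖z n‖ * ‖z n + (t:ℂ)‖⁻¹ + 1 := by rw [mul_inv_cancel₀ (ne_of_gt h7)]
        _ = ‖z n‖ * (∫ t in Set.Ioi T, ‖z n + (t:ℂ)‖⁻¹ ∂ν) + (ν (Set.Ioi T)).toReal := by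
            rw [integral_add ((hIntn _ him).restrict.const_mul _) (integrable_const 1),
              MeasureTheory.integral_const_mul, integral_const, smul_eq_mul,
              measureReal_restrict_apply_univ, measureReal_def, mul_one]
        _ ≤ ‖z n‖ * (Real.sqrt ((ν (Set.Ioi T)).toReal) * ((n:ℝ))⁻¹) + (ν (Set.Ioi T)).toReal := by
            refine add_le_add (mul_le_mul_of_nonneg_left hCS (norm_nonneg _)) le_rfl
        _ ≤ Real.sqrt A * Real.sqrt ((ν (Set.Ioi T)).toReal) + (ν (Set.Ioi T)).toReal := by
            refine add_le_add ?_ le_rfl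
            have hnn : (0:ℝ) < (n:ℝ) := by
              have : (1:ℝ) ≤ (n:ℝ) := by exact_mod_cast hn1
              linarith
            have h9 : ‖z n‖ * ((n:ℝ))⁻¹ ≤ Real.sqrt A := by
              calc ‖z n‖ * ((n:ℝ))⁻¹ ≤ (Real.sqrt A * (n:ℝ)) * ((n:ℝ))⁻¹ :=
                    mul_le_mul_of_nonneg_right (hnrm n hn hn1) (inv_nonneg.mpr hnn.le)
                _ = Real.sqrt A := by field_simp
            calc ‖z n‖ * (Real.sqrt ((ν (Set.Ioi T)).toReal) * ((n:ℝ))⁻¹)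
                = (‖z n‖ * ((n:ℝ))⁻¹) * Real.sqrt ((ν (Set.Ioi T)).toReal) := by ring
              _ ≤ Real.sqrt A * Real.sqrt ((ν (Set.Ioi T)).toReal) :=
                  mul_le_mul_of_nonneg_right h9 (Real.sqrt_nonneg _)
    calc ‖∫ t, (t:ℂ) * (z n + (t:ℂ))⁻¹ ∂ν‖
        ≤ ‖∫ t in Set.Ioi T, (t:ℂ) * (z n + (t:ℂ))⁻¹ ∂ν‖ +
          ‖∫ t in Set.Iic T, (t:ℂ) * (z n + (t:ℂ))⁻¹ ∂ν‖ := by rw [hsplit]; exact norm_add_le _ _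
      _ ≤ A * (T / (‖z n‖ - T)) +
          (Real.sqrt A * Real.sqrt ((ν (Set.Ioi T)).toReal) + (ν (Set.Ioi T)).toReal) := by
          linarith [hIicB, hIoiB]
  -- ### final assembly
  rw [Metric.tendsto_atTop]
  intro ε hε
  set δ : ℝ := min ((ε / 4) ^ 2) (ε * Real.sqrt A / 4) with hδdef
  have hδpos : 0 < δ := lt_min (by positivity) (by positivity)
  have htail : Tendsto (fun k : ℕ => ν (Set.Ioi (k:ℝ))) atTop (nhds 0) := by
    have h1 := MeasureTheory.tendsto_measure_iInter_atTop (μ := ν)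
      (s := fun k : ℕ => Set.Ioi (k:ℝ))
      (fun k => measurableSet_Ioi.nullMeasurableSet)
      (fun a b hab => Set.Ioi_subset_Ioi (by exact_mod_cast hab))
      ⟨0, measure_ne_top ν _⟩
    have h2 : (⋂ k : ℕ, Set.Ioi ((k:ℝ))) = ∅ := by
      ext x
      simp only [Set.mem_iInter, Set.mem_Ioi, Set.mem_empty_iff_false, iff_false, not_forall,
        not_lt]
      obtain ⟨k, hk⟩ := exists_nat_gt x
      exact ⟨k, hk.le⟩
    rw [h2, measure_empty] at h1
    exact h1
  obtain ⟨k, hk⟩ :=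
    (htail.eventually_lt_const (ENNReal.ofReal_pos.mpr hδpos)).exists
  set T : ℝ := (k:ℝ) with hTdef
  have hT0 : (0:ℝ) ≤ T := Nat.cast_nonneg k
  have hεT : (ν (Set.Ioi T)).toReal < δ := ENNReal.toReal_lt_of_lt_ofReal hk
  set D : ℝ := 4 * (A * T + 1) / (ε * Real.sqrt A) with hDdef
  have hDpos : 0 < D := by positivity
  have hM1 : A * (T / D) ≤ ε * Real.sqrt A / 4 := by
    rw [mul_div_assoc', div_le_iff₀ hDpos]
    have hid : ε * Real.sqrt A / 4 * D = A * T + 1 := by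
      rw [hDdef]
      field_simp
    rw [hid]
    linarith
  set M : ℝ := T + D with hMdef
  have hMpos : 0 < M := by positivity
  obtain ⟨c, hcpos, hcle⟩ := hlow M hMpos
  obtain ⟨n₀, hn₀⟩ := exists_nat_gt (1 / c)
  refine ⟨max N (n₀ + 1), fun n hnge => ?_⟩
  have hnN : N ≤ n := le_trans (le_max_left _ _) hnge
  have hn1 : 1 ≤ n := by
    have := le_trans (le_max_right _ _) hnge
    omega
  obtain ⟨him, heq⟩ := hz n hnN
  have hnR : (1:ℝ) ≤ (n:ℝ) := by exact_mod_cast hn1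
  have hnpos : (0:ℝ) < (n:ℝ) := by linarith
  have hzM : M < ‖z n‖ := by
    by_contra hcon
    push_neg at hcon
    have h2 := hcle n hnN hn1 hcon
    have h3 : (n₀:ℝ) < (n:ℝ) := by
      exact_mod_cast (by omega : n₀ < n)
    have h4 : 1 / c < (n:ℝ) := lt_trans hn₀ h3
    have h6 : c * (n:ℝ)^2 ≤ 1 := by
      have h5 := mul_le_mul_of_nonneg_right h2 (by positivity : (0:ℝ) ≤ (n:ℝ)^2)
      rwa [inv_mul_cancel₀ (by positivity : ((n:ℝ)^2) ≠ 0)] at h5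
    have h7 : 1 < (n:ℝ) * c := (div_lt_iff₀ hcpos).mp h4
    nlinarith [h6, h7, hnR, hcpos]
  have hTz : T < ‖z n‖ := by
    have : T < M := by rw [hMdef]; linarith
    linarith
  have hRb := hRbound T hT0 n hnN hn1 hTz
  rw [hR n hnN hn1] at hRb
  have e1 : A * (T / (‖z n‖ - T)) ≤ ε * Real.sqrt A / 4 := by
    have hd1 : D ≤ ‖z n‖ - T := by rw [hMdef] at hzM; linarith
    have hdd : T / (‖z n‖ - T) ≤ T / D := by
      refine div_le_div_of_nonneg_left hT0 hDpos hd1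
    calc A * (T / (‖z n‖ - T)) ≤ A * (T / D) :=
          mul_le_mul_of_nonneg_left hdd hApos.le
      _ ≤ ε * Real.sqrt A / 4 := hM1
  have e2 : Real.sqrt A * Real.sqrt ((ν (Set.Ioi T)).toReal) ≤ ε * Real.sqrt A / 4 := by
    have h5 : (ν (Set.Ioi T)).toReal ≤ (ε/4)^2 := le_of_lt (lt_of_lt_of_le hεT (min_le_left _ _))
    have h6 : Real.sqrt ((ν (Set.Ioi T)).toReal) ≤ ε / 4 := by
      calc Real.sqrt ((ν (Set.Ioi T)).toReal) ≤ Real.sqrt ((ε/4)^2) := Real.sqrt_le_sqrt h5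
        _ = ε/4 := Real.sqrt_sq (by positivity)
    calc Real.sqrt A * Real.sqrt ((ν (Set.Ioi T)).toReal) ≤ Real.sqrt A * (ε/4) :=
          mul_le_mul_of_nonneg_left h6 (Real.sqrt_nonneg _)
      _ = ε * Real.sqrt A / 4 := by ring
  have e3 : (ν (Set.Ioi T)).toReal ≤ ε * Real.sqrt A / 4 :=
    le_of_lt (lt_of_lt_of_le hεT (min_le_right _ _))
  have hεs : 0 < ε * Real.sqrt A := by positivity
  have hRtot : ‖(A:ℂ) + (z n)^2 / (n:ℂ)^2‖ < ε * Real.sqrt A := by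
    calc ‖(A:ℂ) + (z n)^2 / (n:ℂ)^2‖
        ≤ A * (T / (‖z n‖ - T)) +
          (Real.sqrt A * Real.sqrt ((ν (Set.Ioi T)).toReal) + (ν (Set.Ioi T)).toReal) := hRb
      _ < ε * Real.sqrt A := by linarith
  -- algebra with u = z n / n
  have hnc : ((n:ℂ)) ≠ 0 := Nat.cast_ne_zero.mpr (by omega)
  have hscast : ((Real.sqrt A : ℝ):ℂ)^2 = (A:ℂ) := by
    rw [← Complex.ofReal_pow, Real.sq_sqrt hApos.le]
  set u : ℂ := z n / (n:ℂ) with hudef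
  have hgoal_eq : (z n - Complex.I * ((Real.sqrt A : ℝ):ℂ) * (n:ℂ)) / (n:ℂ) =
      u - Complex.I * ((Real.sqrt A : ℝ):ℂ) := by
    rw [hudef, sub_div, mul_div_assoc, div_self hnc, mul_one]
  have husq : u^2 = (z n)^2/(n:ℂ)^2 := by rw [hudef, div_pow]
  have hprod : u^2 + (A:ℂ) =
      (u - Complex.I * ((Real.sqrt A : ℝ):ℂ)) * (u + Complex.I * ((Real.sqrt A : ℝ):ℂ)) := by
    calc u^2 + (A:ℂ) = u^2 + ((Real.sqrt A : ℝ):ℂ)^2 := by rw [hscast]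
      _ = u^2 - (Complex.I)^2 * ((Real.sqrt A : ℝ):ℂ)^2 := by rw [Complex.I_sq]; ring
      _ = (u - Complex.I * ((Real.sqrt A : ℝ):ℂ)) * (u + Complex.I * ((Real.sqrt A : ℝ):ℂ)) := by
          ring
  have huim : 0 ≤ u.im := by
    have h10 : u.im = (z n).im / (n:ℝ) := by
      rw [hudef]
      rw [show ((n:ℕ):ℂ) = (((n:ℝ)):ℂ) by push_cast; rfl]
      rw [Complex.div_ofReal_im]
    rw [h10]
    exact div_nonneg him.le hnpos.le
  have hplus : Real.sqrt A ≤ ‖u + Complex.I * ((Real.sqrt A : ℝ):ℂ)‖ := by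
    have h11 : (u + Complex.I * ((Real.sqrt A : ℝ):ℂ)).im = u.im + Real.sqrt A := by simp
    calc Real.sqrt A ≤ u.im + Real.sqrt A := by linarith
      _ = (u + Complex.I * ((Real.sqrt A : ℝ):ℂ)).im := h11.symm
      _ ≤ |(u + Complex.I * ((Real.sqrt A : ℝ):ℂ)).im| := le_abs_self _
      _ ≤ ‖u + Complex.I * ((Real.sqrt A : ℝ):ℂ)‖ := Complex.abs_im_le_norm _
      _ = ‖u + Complex.I * ((Real.sqrt A : ℝ):ℂ)‖ := rfl
  have hfin : ‖u - Complex.I * ((Real.sqrt A : ℝ):ℂ)‖ * Real.sqrt A ≤ ‖u^2 + (A:ℂ)‖ := by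
    rw [hprod, norm_mul]
    exact mul_le_mul_of_nonneg_left hplus (norm_nonneg _)
  have hlt : ‖u^2 + (A:ℂ)‖ < ε * Real.sqrt A := by
    rw [husq, add_comm]
    exact hRtot
  show dist ((z n - Complex.I * ((Real.sqrt A : ℝ):ℂ) * (n:ℂ)) / (n:ℂ)) 0 < ε
  rw [dist_zero_right, hgoal_eq]
  have hmul : ‖u - Complex.I * ((Real.sqrt A : ℝ):ℂ)‖ * Real.sqrt A < ε * Real.sqrt A :=
    lt_of_le_of_lt hfin hlt
  exact lt_of_mul_lt_mul_right hmul hsA.le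
end

section
/- Let μ be a nonzero positive measure with compact support contained in [d₀, d], 0 < d₀ < d < ∞, K its Cauchy transform, and ε > 0. Then for all sufficiently large n, all zeros of H_n(z) = z² + ε n² z + n² − n² K(z) are real. Consequently the set ⋃_n {zeros of H_n} contains only finitely many non-real points. -/
open MeasureTheory Complex

lemma KV_integrable (μ : Measure ℝ) [IsFiniteMeasure μ] (z : ℂ) (hz : z.im ≠ 0) :
    Integrable (fun t : ℝ => (z + (t:ℂ))⁻¹) μ := by
  have hne : ∀ t : ℝ, z + (t:ℂ) ≠ 0 := by
    intro t h
    exact hz (by simpa using congrArg Complex.im h)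
  have hcont : Continuous (fun t : ℝ => (z + (t:ℂ))⁻¹) :=
    (continuous_const.add Complex.continuous_ofReal).inv₀ hne
  refine (integrable_const (|z.im|⁻¹)).mono' hcont.aestronglyMeasurable ?_
  refine Filter.Eventually.of_forall fun t => ?_
  rw [norm_inv]
  have h1 : |z.im| ≤ ‖z + (t:ℂ)‖ := by simpa using Complex.abs_im_le_norm (z + t)
  simpa using inv_anti₀ (abs_pos.mpr hz) h1

lemma KV_normSq_integrable (μ : Measure ℝ) [IsFiniteMeasure μ] (z : ℂ) (hz : z.im ≠ 0) :
    Integrable (fun t : ℝ => Complex.normSq ((z + (t:ℂ))⁻¹)) μ := by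
  have hcont : Continuous (fun t : ℝ => (z + (t:ℂ))⁻¹) := by
    refine (continuous_const.add Complex.continuous_ofReal).inv₀ fun t h => ?_
    exact hz (by simpa using congrArg Complex.im h)
  refine (integrable_const ((z.im)⁻¹^2)).mono'
    (Complex.continuous_normSq.comp hcont).aestronglyMeasurable ?_
  refine Filter.Eventually.of_forall fun t => ?_
  have h1 : |z.im| ≤ ‖z + (t:ℂ)‖ := by simpa using Complex.abs_im_le_norm (z + t)
  have h2 : 0 < |z.im| := abs_pos.mpr hz
  have hb : ‖(z + (t:ℂ))⁻¹‖ ≤ |z.im|⁻¹ := by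
    rw [norm_inv]; simpa using inv_anti₀ h2 h1
  rw [Real.norm_of_nonneg (Complex.normSq_nonneg _), ← Complex.sq_norm]
  calc ‖(z + (t:ℂ))⁻¹‖ ^ 2 ≤ (|z.im|⁻¹)^2 := by
        apply pow_le_pow_left₀ (norm_nonneg _)
          (by simpa using hb)
    _ = z.im⁻¹ ^ 2 := by rw [← abs_inv]; exact (sq_abs _)

lemma KV_zero_eqs (μ : Measure ℝ) [IsFiniteMeasure μ] (ε : ℝ) (n : ℕ)
    (z : ℂ) (hz : z.im ≠ 0)
    (heq : z ^ 2 + (ε : ℂ) * (n:ℂ) ^ 2 * z + (n:ℂ) ^ 2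
      = (n:ℂ) ^ 2 * ∫ t, (z + (t:ℂ))⁻¹ ∂μ) :
    2 * z.re + ε * (n:ℝ) ^ 2
        = -((n:ℝ) ^ 2) * ∫ t, Complex.normSq ((z + (t:ℂ))⁻¹) ∂μ ∧
    z.re ^ 2 - z.im ^ 2 + ε * (n:ℝ) ^ 2 * z.re + (n:ℝ) ^ 2
        = (n:ℝ) ^ 2 * ∫ t, ((z + (t:ℂ))⁻¹).re ∂μ := by
  have hint := KV_integrable μ z hz
  have him : (∫ t, (z + (t:ℂ))⁻¹ ∂μ).im = ∫ t, ((z + (t:ℂ))⁻¹).im ∂μ :=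
    (integral_im hint).symm
  have hre : (∫ t, (z + (t:ℂ))⁻¹ ∂μ).re = ∫ t, ((z + (t:ℂ))⁻¹).re ∂μ :=
    (integral_re hint).symm
  have himval : ∫ t, ((z + (t:ℂ))⁻¹).im ∂μ
      = -z.im * ∫ t, Complex.normSq ((z + (t:ℂ))⁻¹) ∂μ := by
    rw [← integral_const_mul]
    congr 1
    funext t
    rw [Complex.inv_im, Complex.normSq_inv]
    simp [div_eq_mul_inv]
  constructor
  · have h1 := congrArg Complex.im heq
    simp only [Complex.add_im, Complex.mul_im, Complex.mul_re] at h1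
    rw [him, himval] at h1
    simp only [pow_two, Complex.mul_im, Complex.mul_re, Complex.ofReal_re, Complex.ofReal_im,
      Complex.natCast_re, Complex.natCast_im] at h1
    have h2 : z.im * (2 * z.re + ε * (n:ℝ)^2)
        = z.im * (-((n:ℝ) ^ 2) * ∫ t, Complex.normSq ((z + (t:ℂ))⁻¹) ∂μ) := by
      ring_nf
      ring_nf at h1
      linarith [h1]
    exact mul_left_cancel₀ hz h2
  · have h1 := congrArg Complex.re heq
    simp only [Complex.add_re, Complex.mul_re, Complex.mul_im] at h1
    rw [hre] at h1
    simp only [pow_two, Complex.mul_re, Complex.mul_im, Complex.ofReal_re, Complex.ofReal_im,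
      Complex.natCast_re, Complex.natCast_im] at h1
    ring_nf
    ring_nf at h1
    linarith [h1]

lemma KV_unique (μ : Measure ℝ) [IsFiniteMeasure μ] (hμ : μ ≠ 0) (ε : ℝ) (n : ℕ)
    (z₁ z₂ : ℂ) (hs : 0 < z₁.im * z₂.im)
    (e₁ : z₁ ^ 2 + (ε : ℂ) * (n:ℂ) ^ 2 * z₁ + (n:ℂ) ^ 2
      = (n:ℂ) ^ 2 * ∫ t, (z₁ + (t:ℂ))⁻¹ ∂μ)
    (e₂ : z₂ ^ 2 + (ε : ℂ) * (n:ℂ) ^ 2 * z₂ + (n:ℂ) ^ 2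
      = (n:ℂ) ^ 2 * ∫ t, (z₂ + (t:ℂ))⁻¹ ∂μ)
    (hn2 : ((n:ℝ)^2) ≠ 0) : z₁ = z₂ := by
  by_contra hne
  have hz₁ : z₁.im ≠ 0 := fun h => by rw [h] at hs; simp at hs
  have hz₂ : z₂.im ≠ 0 := fun h => by rw [h] at hs; simp at hs
  have hne₁ : ∀ t : ℝ, z₁ + (t:ℂ) ≠ 0 := fun t h => hz₁ (by simpa using congrArg Complex.im h)
  have hne₂ : ∀ t : ℝ, z₂ + (t:ℂ) ≠ 0 := fun t h => hz₂ (by simpa using congrArg Complex.im h)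
  have hint₁ := KV_integrable μ z₁ hz₁
  have hint₂ := KV_integrable μ z₂ hz₂
  have hb₁ : ∀ t : ℝ, ‖(z₁ + (t:ℂ))⁻¹‖ ≤ |z₁.im|⁻¹ := by
    intro t; rw [norm_inv]
    have h1 : |z₁.im| ≤ ‖z₁ + (t:ℂ)‖ := by simpa using Complex.abs_im_le_norm (z₁ + t)
    simpa using inv_anti₀ (abs_pos.mpr hz₁) h1
  have hb₂ : ∀ t : ℝ, ‖(z₂ + (t:ℂ))⁻¹‖ ≤ |z₂.im|⁻¹ := by
    intro t; rw [norm_inv]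
    have h1 : |z₂.im| ≤ ‖z₂ + (t:ℂ)‖ := by simpa using Complex.abs_im_le_norm (z₂ + t)
    simpa using inv_anti₀ (abs_pos.mpr hz₂) h1
  have hcont : Continuous (fun t : ℝ => (z₁ + (t:ℂ))⁻¹ * (z₂ + (t:ℂ))⁻¹) := by
    refine Continuous.mul ?_ ?_ <;>
      exact (continuous_const.add Complex.continuous_ofReal).inv₀ (by assumption)
  have hintp : Integrable (fun t : ℝ => (z₁ + (t:ℂ))⁻¹ * (z₂ + (t:ℂ))⁻¹) μ := by
    refine (integrable_const (|z₁.im|⁻¹ * |z₂.im|⁻¹)).mono' hcont.aestronglyMeasurable ?_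
    refine Filter.Eventually.of_forall fun t => ?_
    rw [norm_mul]
    exact mul_le_mul (hb₁ t) (hb₂ t) (norm_nonneg _) (inv_nonneg.mpr (abs_nonneg _))
  have hdiff : (z₁ - z₂) * ((z₁ + z₂) + (ε:ℂ) * (n:ℂ)^2)
      = (n:ℂ)^2 * ((z₂ - z₁) * ∫ t, (z₁ + (t:ℂ))⁻¹ * (z₂ + (t:ℂ))⁻¹ ∂μ) := by
    have hsub : (∫ t, (z₁ + (t:ℂ))⁻¹ ∂μ) - (∫ t, (z₂ + (t:ℂ))⁻¹ ∂μ)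
        = (z₂ - z₁) * ∫ t, (z₁ + (t:ℂ))⁻¹ * (z₂ + (t:ℂ))⁻¹ ∂μ := by
      rw [← integral_sub hint₁ hint₂, ← integral_const_mul]
      congr 1; funext t
      have h1 := hne₁ t
      have h2 := hne₂ t
      field_simp
      ring
    calc (z₁ - z₂) * ((z₁ + z₂) + (ε:ℂ) * (n:ℂ)^2)
        = (z₁ ^ 2 + (ε : ℂ) * (n:ℂ) ^ 2 * z₁ + (n:ℂ) ^ 2)
          - (z₂ ^ 2 + (ε : ℂ) * (n:ℂ) ^ 2 * z₂ + (n:ℂ) ^ 2) := by ring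
      _ = (n:ℂ)^2 * ((∫ t, (z₁ + (t:ℂ))⁻¹ ∂μ) - (∫ t, (z₂ + (t:ℂ))⁻¹ ∂μ)) := by
          rw [e₁, e₂]; ring
      _ = _ := by rw [hsub]
  have hC : (z₁ + z₂) + (ε:ℂ) * (n:ℂ)^2
      = -((n:ℂ)^2) * ∫ t, (z₁ + (t:ℂ))⁻¹ * (z₂ + (t:ℂ))⁻¹ ∂μ := by
    have h0 : z₁ - z₂ ≠ 0 := sub_ne_zero.mpr hne
    apply mul_left_cancel₀ h0
    rw [hdiff]; ring
  have hre_int : Integrable (fun t : ℝ => ((z₁ + (t:ℂ))⁻¹ * ((z₂ + (t:ℂ))⁻¹)).re) μ := by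
    simpa using hintp.re
  have hCre : z₁.re + z₂.re + ε * (n:ℝ)^2
      = -((n:ℝ)^2) * ∫ t, ((z₁ + (t:ℂ))⁻¹ * (z₂ + (t:ℂ))⁻¹).re ∂μ := by
    have h := congrArg Complex.re hC
    have hre' : (∫ t, (z₁ + (t:ℂ))⁻¹ * (z₂ + (t:ℂ))⁻¹ ∂μ).re
        = ∫ t, ((z₁ + (t:ℂ))⁻¹ * (z₂ + (t:ℂ))⁻¹).re ∂μ := by
      simpa using (integral_re hintp).symm
    rw [show (-((n:ℂ)^2) * ∫ t, (z₁ + (t:ℂ))⁻¹ * (z₂ + (t:ℂ))⁻¹ ∂μ)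
        = ((-((n:ℝ)^2) : ℝ) : ℂ) * ∫ t, (z₁ + (t:ℂ))⁻¹ * (z₂ + (t:ℂ))⁻¹ ∂μ by push_cast; ring,
      Complex.re_ofReal_mul, hre'] at h
    have hL : ((z₁ + z₂) + (ε:ℂ)*(n:ℂ)^2).re = z₁.re + z₂.re + ε*(n:ℝ)^2 := by
      rw [show ((ε:ℂ)*(n:ℂ)^2) = ((ε*(n:ℝ)^2 : ℝ):ℂ) by push_cast; ring,
        Complex.add_re, Complex.ofReal_re, Complex.add_re]
    rw [hL] at h
    linarith [h]
  have A₁ := (KV_zero_eqs μ ε n z₁ hz₁ e₁).1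
  have A₂ := (KV_zero_eqs μ ε n z₂ hz₂ e₂).1
  set g : ℝ → ℝ := fun t =>
    Complex.normSq ((z₁ + (t:ℂ))⁻¹ - (starRingEnd ℂ) ((z₂ + (t:ℂ))⁻¹)) with hg
  have hgptw : ∀ t : ℝ, g t = Complex.normSq ((z₁ + (t:ℂ))⁻¹)
      + Complex.normSq ((z₂ + (t:ℂ))⁻¹) - 2 * (((z₁ + (t:ℂ))⁻¹) * ((z₂ + (t:ℂ))⁻¹)).re := by
    intro t
    simp only [hg, Complex.normSq_apply, Complex.mul_re, Complex.sub_re, Complex.sub_im,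
      Complex.conj_re, Complex.conj_im]
    ring
  have h1i := KV_normSq_integrable μ z₁ hz₁
  have h2i := KV_normSq_integrable μ z₂ hz₂
  have hgint : Integrable g μ := by
    have : Integrable (fun t : ℝ => Complex.normSq ((z₁ + (t:ℂ))⁻¹)
        + Complex.normSq ((z₂ + (t:ℂ))⁻¹)
        - 2 * (((z₁ + (t:ℂ))⁻¹) * ((z₂ + (t:ℂ))⁻¹)).re) μ :=
      (h1i.add h2i).sub (hre_int.const_mul 2)
    exact this.congr (Filter.Eventually.of_forall fun t => (hgptw t).symm)
  have hgzero : ∫ t, g t ∂μ = 0 := by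
    have hsplit : ∫ t, g t ∂μ = (∫ t, Complex.normSq ((z₁ + (t:ℂ))⁻¹) ∂μ)
        + (∫ t, Complex.normSq ((z₂ + (t:ℂ))⁻¹) ∂μ)
        - 2 * ∫ t, (((z₁ + (t:ℂ))⁻¹) * ((z₂ + (t:ℂ))⁻¹)).re ∂μ := by
      calc ∫ t, g t ∂μ
          = ∫ t, (Complex.normSq ((z₁ + (t:ℂ))⁻¹) + Complex.normSq ((z₂ + (t:ℂ))⁻¹))
              - 2 * (((z₁ + (t:ℂ))⁻¹) * ((z₂ + (t:ℂ))⁻¹)).re ∂μ :=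
            integral_congr_ae (Filter.Eventually.of_forall hgptw)
        _ = (∫ t, (Complex.normSq ((z₁ + (t:ℂ))⁻¹) + Complex.normSq ((z₂ + (t:ℂ))⁻¹)) ∂μ)
              - ∫ t, 2 * (((z₁ + (t:ℂ))⁻¹) * ((z₂ + (t:ℂ))⁻¹)).re ∂μ :=
            integral_sub (h1i.add h2i) (hre_int.const_mul 2)
        _ = _ := by rw [integral_add h1i h2i, integral_const_mul]
    have e1 : ∫ t, Complex.normSq ((z₁ + (t:ℂ))⁻¹) ∂μ
        = -(2 * z₁.re + ε * (n:ℝ)^2) / (n:ℝ)^2 := by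
      rw [eq_div_iff hn2]; linear_combination A₁
    have e2 : ∫ t, Complex.normSq ((z₂ + (t:ℂ))⁻¹) ∂μ
        = -(2 * z₂.re + ε * (n:ℝ)^2) / (n:ℝ)^2 := by
      rw [eq_div_iff hn2]; linear_combination A₂
    have e3 : ∫ t, (((z₁ + (t:ℂ))⁻¹) * ((z₂ + (t:ℂ))⁻¹)).re ∂μ
        = -(z₁.re + z₂.re + ε * (n:ℝ)^2) / (n:ℝ)^2 := by
      rw [eq_div_iff hn2]; linear_combination hCre
    rw [hsplit, e1, e2, e3]
    field_simp
    ring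
  have hae : g =ᵐ[μ] 0 :=
    (integral_eq_zero_iff_of_nonneg (fun t => Complex.normSq_nonneg _) hgint).mp hgzero
  have hex : ∃ t : ℝ, g t = 0 := by
    by_contra hno
    push_neg at hno
    apply hμ
    apply Measure.measure_univ_eq_zero.mp
    have h0 : μ {a : ℝ | ¬ g a = 0} = 0 := by
      simpa [Filter.EventuallyEq, ae_iff] using hae
    have huniv : {a : ℝ | ¬ g a = 0} = Set.univ :=
      Set.eq_univ_iff_forall.mpr fun a => hno a
    rwa [huniv] at h0
  obtain ⟨t, ht⟩ := hex
  have hsub0 : (z₁ + (t:ℂ))⁻¹ - (starRingEnd ℂ) ((z₂ + (t:ℂ))⁻¹) = 0 :=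
    Complex.normSq_eq_zero.mp ht
  have heqc : (z₁ + (t:ℂ))⁻¹ = (starRingEnd ℂ) ((z₂ + (t:ℂ))⁻¹) := sub_eq_zero.mp hsub0
  rw [map_inv₀] at heqc
  have hzz : z₁ + (t:ℂ) = (starRingEnd ℂ) (z₂ + (t:ℂ)) := inv_injective heqc
  have him : z₁.im = -z₂.im := by
    have := congrArg Complex.im hzz
    simpa using this
  rw [him] at hs
  nlinarith [sq_nonneg z₂.im]

set_option maxHeartbeats 1000000 in
lemma KV_no_nonreal (μ : Measure ℝ) [IsFiniteMeasure μ] (d₀ d : ℝ)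
    (hae : ∀ᵐ t ∂μ, t ∈ Set.Icc d₀ d) (ε : ℝ) (hε : 0 < ε) (n : ℕ)
    (hn1 : (1:ℝ) ≤ (n:ℝ))
    (hc1 : 1 ≤ ε * (n:ℝ)^2/2 - d)
    (hc2 : 2 * (μ Set.univ).toReal / ε ≤ ε * (n:ℝ)^2/2 - d)
    (hc3 : 16 * (1 + (μ Set.univ).toReal) ≤ (n:ℝ)^2 * ε^2)
    (z : ℂ)
    (heq : z ^ 2 + (ε : ℂ) * (n:ℂ) ^ 2 * z + (n:ℂ) ^ 2
      = (n:ℂ) ^ 2 * ∫ t, (z + (t:ℂ))⁻¹ ∂μ) : z.im = 0 := by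
  by_contra hz
  obtain ⟨A, B⟩ := KV_zero_eqs μ ε n z hz heq
  have hM0' : 0 ≤ (μ Set.univ).toReal := ENNReal.toReal_nonneg
  obtain ⟨M, hM⟩ : ∃ M : ℝ, (μ Set.univ).toReal = M := ⟨_, rfl⟩
  obtain ⟨I, hIdef⟩ : ∃ I : ℝ, (∫ t, Complex.normSq ((z + (t:ℂ))⁻¹) ∂μ) = I := ⟨_, rfl⟩
  obtain ⟨Rk, hRkdef⟩ : ∃ r : ℝ, (∫ t, ((z + (t:ℂ))⁻¹).re ∂μ) = r := ⟨_, rfl⟩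
  obtain ⟨R, hRdef⟩ : ∃ R : ℝ, ε * (n:ℝ)^2/2 - d = R := ⟨_, rfl⟩
  rw [hM] at hc2 hc3 hM0'
  rw [hIdef] at A
  rw [hRkdef] at B
  rw [hRdef] at hc1 hc2
  have hM0 : 0 ≤ M := hM0'
  have hR0 : 0 < R := lt_of_lt_of_le one_pos hc1
  have hI0 : 0 ≤ I := hIdef ▸ integral_nonneg fun t => Complex.normSq_nonneg _
  have hn2pos : (0:ℝ) < (n:ℝ)^2 := by positivity
  have hx : z.re ≤ -(ε * (n:ℝ)^2/2) := by nlinarith [mul_nonneg hn2pos.le hI0]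
  have habs : ∀ᵐ (t : ℝ) ∂μ, R ≤ -(z.re + t) ∧ R ≤ ‖z + (t:ℂ)‖ := by
    filter_upwards [hae] with t ht
    have h1 : z.re + t ≤ -R := by
      have h2 := ht.2
      rw [← hRdef]
      nlinarith [hx]
    constructor
    · linarith
    · calc R ≤ -(z.re + t) := by linarith
        _ = |z.re + t| := by rw [abs_of_nonpos (by linarith)]
        _ = |(z + (t:ℂ)).re| := by norm_num
        _ ≤ ‖z + (t:ℂ)‖ := Complex.abs_re_le_norm _
  have hIb : I ≤ M * (R^2)⁻¹ := by
    have hmono : ∀ᵐ (t : ℝ) ∂μ, Complex.normSq ((z + (t:ℂ))⁻¹) ≤ (R^2)⁻¹ := by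
      filter_upwards [habs] with t ht
      rw [Complex.normSq_inv]
      refine inv_anti₀ (pow_pos hR0 2) ?_
      rw [← Complex.sq_norm]
      nlinarith [ht.2, hR0]
    calc I ≤ ∫ _t : ℝ, (R^2)⁻¹ ∂μ := by
          rw [← hIdef]
          exact integral_mono_ae (KV_normSq_integrable μ z hz) (integrable_const _) hmono
      _ = M * (R^2)⁻¹ := by rw [integral_const, smul_eq_mul, measureReal_def, hM]
  have hIε : I ≤ ε / 2 := by
    have h2M : 2 * M ≤ ε * R := by
      rw [div_le_iff₀ hε] at hc2
      nlinarith [hc2]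
    have h1 : M ≤ ε * R / 2 := by linarith
    have h2 : M * (R^2)⁻¹ ≤ (ε * R / 2) * (R^2)⁻¹ :=
      mul_le_mul_of_nonneg_right h1 (by positivity)
    have h3 : (ε * R / 2) * (R^2)⁻¹ = ε / 2 * R⁻¹ := by
      field_simp
    have h4 : R⁻¹ ≤ 1 := by rw [inv_le_one_iff₀]; right; linarith
    have h5 : ε / 2 * R⁻¹ ≤ ε / 2 * 1 :=
      mul_le_mul_of_nonneg_left h4 (by positivity)
    calc I ≤ M * (R^2)⁻¹ := hIb
      _ ≤ ε / 2 := by rw [h3] at h2; linarith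
  have hRkb : -M ≤ Rk := by
    have hmono : ∀ᵐ (t : ℝ) ∂μ, -(R⁻¹) ≤ ((z + (t:ℂ))⁻¹).re := by
      filter_upwards [habs] with t ht
      have habs' : ‖(z + (t:ℂ))⁻¹‖ ≤ R⁻¹ := by
        rw [norm_inv]
        exact inv_anti₀ hR0 (by simpa using ht.2)
      have := Complex.abs_re_le_norm ((z + (t:ℂ))⁻¹)
      have := neg_abs_le ((z + (t:ℂ))⁻¹).re
      linarith
    have hre_int : Integrable (fun t : ℝ => ((z + (t:ℂ))⁻¹).re) μ := by
      simpa using (KV_integrable μ z hz).re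
    have : ∫ _t : ℝ, -(R⁻¹) ∂μ ≤ Rk := by
      rw [← hRkdef]
      exact integral_mono_ae (integrable_const _) hre_int hmono
    rw [integral_const, smul_eq_mul, measureReal_def, hM] at this
    have hRinv : R⁻¹ ≤ 1 := by
      rw [inv_le_one_iff₀]; right; linarith
    have hMR : M * R⁻¹ ≤ M * 1 := mul_le_mul_of_nonneg_left hRinv hM0
    linarith [this, hMR]
  have h4 : 4*(z.im^2) = -(ε^2*(n:ℝ)^4) + (n:ℝ)^4*I^2 + 4*(n:ℝ)^2 - 4*(n:ℝ)^2*Rk := by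
    linear_combination (-4)*B + (2*z.re + ε*(n:ℝ)^2 - (n:ℝ)^2*I)*A
  have hy2 : 0 < z.im^2 := lt_of_le_of_ne (sq_nonneg _) (Ne.symm (pow_ne_zero 2 hz))
  have hI2 : (n:ℝ)^4*I^2 ≤ (n:ℝ)^4*(ε^2/4) := by
    have h1 : I^2 ≤ (ε/2)^2 := pow_le_pow_left₀ hI0 hIε 2
    have h2 : I^2 ≤ ε^2/4 := by
      calc I^2 ≤ (ε/2)^2 := h1
        _ = ε^2/4 := by ring
    exact mul_le_mul_of_nonneg_left h2 (pow_nonneg (Nat.cast_nonneg n) 4)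
  have hc3' : 4*(n:ℝ)^2*(1+M) ≤ (n:ℝ)^4*ε^2/4 := by
    have := mul_le_mul_of_nonneg_left hc3 (le_of_lt (by positivity : (0:ℝ) < (n:ℝ)^2/4))
    linarith [this]
  have hA : (n:ℝ)^2 * -M ≤ (n:ℝ)^2 * Rk := mul_le_mul_of_nonneg_left hRkb hn2pos.le
  have hεn : (0:ℝ) < ε^2*(n:ℝ)^4 := by positivity
  linarith [h4, hy2, hI2, hc3', hA, hεn]

lemma KV_halfplane_finite (S : Set ℂ) (hS : ∀ z ∈ S, z.im ≠ 0)
    (huniq : ∀ z₁ ∈ S, ∀ z₂ ∈ S, 0 < z₁.im * z₂.im → z₁ = z₂) : S.Finite := by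
  have hP : (S ∩ {z : ℂ | 0 < z.im}).Subsingleton := fun z₁ h₁ z₂ h₂ =>
    huniq z₁ h₁.1 z₂ h₂.1 (mul_pos h₁.2 h₂.2)
  have hQ : (S ∩ {z : ℂ | z.im < 0}).Subsingleton := fun z₁ h₁ z₂ h₂ =>
    huniq z₁ h₁.1 z₂ h₂.1 (mul_pos_of_neg_of_neg h₁.2 h₂.2)
  refine Set.Finite.subset (hP.finite.union hQ.finite) fun z hz => ?_
  rcases lt_or_gt_of_ne (hS z hz) with h | h
  · exact Or.inr ⟨hz, h⟩
  · exact Or.inl ⟨hz, h⟩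

theorem KV_finitely_many_nonreal_zeros
    (μ : Measure ℝ) (hμ : μ ≠ 0) (d₀ d : ℝ) (hd₀ : 0 < d₀) (hd : d₀ < d)
    (hsupp : μ (Set.Icc d₀ d)ᶜ = 0)
    (K : ℂ → ℂ) (hK : ∀ z, K z = ∫ t in Set.Ioi (0 : ℝ), (z + (t : ℂ))⁻¹ ∂μ)
    (ε : ℝ) (hε : 0 < ε)
    (H : ℕ → ℂ → ℂ)
    (hH : ∀ n z, H n z = z ^ 2 + (ε : ℂ) * (n : ℂ) ^ 2 * z + (n : ℂ) ^ 2
        - (n : ℂ) ^ 2 * K z) :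
    (∃ N : ℕ, ∀ n : ℕ, N ≤ n → ∀ z : ℂ, H n z = 0 → z.im = 0) ∧
    {z : ℂ | z.im ≠ 0 ∧ ∃ n : ℕ, 1 ≤ n ∧ H n z = 0}.Finite := by
  have hd0 : 0 < d := lt_trans hd₀ hd
  -- μ lives on (0, ∞)
  have hres : μ.restrict (Set.Ioi (0:ℝ)) = μ := by
    apply Measure.restrict_eq_self_of_ae_mem
    rw [ae_iff]
    refine measure_mono_null (fun t ht => ?_) hsupp
    simp only [Set.mem_setOf_eq, Set.mem_Ioi, not_lt] at ht
    simp only [Set.mem_compl_iff, Set.mem_Icc, not_and, not_le]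
    intro h; linarith
  have hae : ∀ᵐ t ∂μ, t ∈ Set.Icc d₀ d := by
    rw [ae_iff]
    simpa [Set.compl_def] using hsupp
  have hK' : ∀ z : ℂ, K z = ∫ t, (z + (t:ℂ))⁻¹ ∂μ := fun z => by
    rw [hK z, hres]
  have hzeroeq : ∀ n : ℕ, ∀ z : ℂ, H n z = 0 →
      z ^ 2 + (ε:ℂ) * (n:ℂ)^2 * z + (n:ℂ)^2 = (n:ℂ)^2 * ∫ t, (z + (t:ℂ))⁻¹ ∂μ := by
    intro n z h
    rw [hH, hK'] at h
    linear_combination h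
  by_cases hfin : μ Set.univ < ⊤
  · -- finite measure case
    haveI : IsFiniteMeasure μ := ⟨hfin⟩
    have hM0 : 0 ≤ (μ Set.univ).toReal := ENNReal.toReal_nonneg
    -- choice of N
    obtain ⟨C, hC⟩ : ∃ C : ℝ, (2+2*d)/ε + (4*(μ Set.univ).toReal + 2*d*ε)/ε^2
        + 16*(1+(μ Set.univ).toReal)/ε^2 = C := ⟨_, rfl⟩
    have hT1 : 0 ≤ (2+2*d)/ε := div_nonneg (by linarith) hε.le
    have hT2 : 0 ≤ (4*(μ Set.univ).toReal + 2*d*ε)/ε^2 :=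
      div_nonneg (by nlinarith [hM0, hd0, hε]) (by positivity)
    have hT3 : 0 ≤ 16*(1+(μ Set.univ).toReal)/ε^2 :=
      div_nonneg (by linarith) (by positivity)
    have hpart1 : ∀ n : ℕ, ⌈C⌉₊ + 1 ≤ n → ∀ z : ℂ, H n z = 0 → z.im = 0 := by
      intro n hn z hzero
      have hn1 : (1:ℝ) ≤ (n:ℝ) := by
        have : 1 ≤ n := le_trans (Nat.le_add_left 1 _) hn
        exact_mod_cast this
      have hCn : C ≤ (n:ℝ) := by
        calc C ≤ (⌈C⌉₊ : ℝ) := Nat.le_ceil C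
          _ ≤ (n:ℝ) := by exact_mod_cast le_trans (Nat.le_succ _) hn
      have hnn : (n:ℝ) ≤ (n:ℝ)^2 := by nlinarith [hn1]
      have hCn2 : C ≤ (n:ℝ)^2 := le_trans hCn hnn
      refine KV_no_nonreal μ d₀ d hae ε hε n hn1 ?_ ?_ ?_ z (hzeroeq n z hzero)
      · have h1 : (2+2*d)/ε ≤ (n:ℝ)^2 := by linarith [hC ▸ hCn2, hT2, hT3]
        rw [div_le_iff₀ hε] at h1
        nlinarith [h1]
      · have h2 : (4*(μ Set.univ).toReal + 2*d*ε)/ε^2 ≤ (n:ℝ)^2 := by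
          linarith [hC ▸ hCn2, hT1, hT3]
        rw [div_le_iff₀ (by positivity : (0:ℝ) < ε^2)] at h2
        rw [div_le_iff₀ hε]
        nlinarith [h2]
      · have h3 : 16*(1+(μ Set.univ).toReal)/ε^2 ≤ (n:ℝ)^2 := by
          linarith [hC ▸ hCn2, hT1, hT2]
        rw [div_le_iff₀ (by positivity : (0:ℝ) < ε^2)] at h3
        linarith [h3]
    refine ⟨⟨⌈C⌉₊ + 1, hpart1⟩, ?_⟩
    have hTfin : ∀ n : ℕ, {z : ℂ | z.im ≠ 0 ∧ H n z = 0}.Finite := by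
      intro n
      refine KV_halfplane_finite _ (fun z hz => hz.1) ?_
      rintro z₁ ⟨hz₁, h₁⟩ z₂ ⟨hz₂, h₂⟩ hs
      rcases Nat.eq_zero_or_pos n with rfl | hn
      · exfalso
        have := hzeroeq 0 z₁ h₁
        simp only [Nat.cast_zero, ne_eq, OfNat.ofNat_ne_zero, not_false_eq_true,
          zero_pow, mul_zero, zero_mul, add_zero, zero_add] at this
        exact hz₁ (by simp [pow_eq_zero_iff] at this; simp [this])
      · have hn2 : ((n:ℝ)^2) ≠ 0 := by
          have : (0:ℝ) < (n:ℝ) := by exact_mod_cast hn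
          positivity
        exact KV_unique μ hμ ε n z₁ z₂ hs (hzeroeq n z₁ h₁) (hzeroeq n z₂ h₂) hn2
    have hsub : {z : ℂ | z.im ≠ 0 ∧ ∃ n : ℕ, 1 ≤ n ∧ H n z = 0}
        ⊆ ⋃ n ∈ Finset.range (⌈C⌉₊ + 2), {z : ℂ | z.im ≠ 0 ∧ H n z = 0} := by
      rintro z ⟨hz, n, hn1, hzero⟩
      by_cases hn : n ≤ ⌈C⌉₊ + 1
      · exact Set.mem_biUnion (Finset.mem_range.mpr (by omega)) ⟨hz, hzero⟩
      · exact absurd (hpart1 n (by omega) z hzero) hz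
    exact Set.Finite.subset
      (Set.Finite.biUnion (Finset.range (⌈C⌉₊ + 2)).finite_toSet fun n _ => hTfin n) hsub
  · -- infinite measure case : K z = 0 for nonreal z
    have htop : μ Set.univ = ⊤ := by
      have := not_lt.mp hfin
      exact top_le_iff.mp this
    have hK0 : ∀ z : ℂ, z.im ≠ 0 → (∫ t, (z + (t:ℂ))⁻¹ ∂μ) = 0 := by
      intro z hz
      apply integral_undef
      intro hint
      have hne : ∀ t : ℝ, z + (t:ℂ) ≠ 0 := fun t h => hz (by simpa using congrArg Complex.im h)
      have hb : ∀ᵐ (t : ℝ) ∂μ, ‖((‖z‖ + d)⁻¹ : ℝ)‖ ≤ ‖(z + (t:ℂ))⁻¹‖ := by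
        filter_upwards [hae] with t ht
        have h1 : ‖z + (t:ℂ)‖ ≤ ‖z‖ + d := by
          calc ‖z + (t:ℂ)‖ ≤ ‖z‖ + ‖(t:ℂ)‖ :=
                norm_add_le z (t:ℂ)
            _ ≤ ‖z‖ + d := by
                have : ‖(t:ℂ)‖ = |t| := by rw [Complex.norm_real, Real.norm_eq_abs]
                rw [this, abs_of_pos (lt_of_lt_of_le hd₀ ht.1)]
                linarith [ht.2]
        have hpos : 0 < ‖z + (t:ℂ)‖ := norm_pos_iff.mpr (hne t)
        rw [Real.norm_of_nonneg (by positivity), norm_inv]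
        exact inv_anti₀ hpos h1
      have hconst : Integrable (fun _ : ℝ => ((‖z‖ + d)⁻¹ : ℝ)) μ :=
        Integrable.mono hint aestronglyMeasurable_const hb
      rcases integrable_const_iff.mp hconst with h | h
      · have hzd : (0:ℝ) < ‖z‖ + d :=
          add_pos_of_nonneg_of_pos (norm_nonneg z) hd0
        exact absurd h (by positivity)
      · haveI := h; exact hfin (measure_lt_top μ Set.univ)
    have hquad : ∀ n : ℕ, ∀ z : ℂ, z.im ≠ 0 → H n z = 0 →
        z ^ 2 + (ε:ℂ) * (n:ℂ)^2 * z + (n:ℂ)^2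
          = (n:ℂ)^2 * ∫ t, (z + (t:ℂ))⁻¹ ∂(0 : Measure ℝ) := by
      intro n z hz h
      rw [integral_zero_measure, mul_zero]
      have := hzeroeq n z h
      rw [hK0 z hz] at this
      simpa using this
    have hpart1 : ∀ n : ℕ, ⌈2/ε⌉₊ + 1 ≤ n → ∀ z : ℂ, H n z = 0 → z.im = 0 := by
      intro n hn z hzero
      by_contra hz
      obtain ⟨A, B⟩ := KV_zero_eqs (0 : Measure ℝ) ε n z hz (hquad n z hz hzero)
      rw [integral_zero_measure] at A B
      have hn1 : (1:ℝ) ≤ (n:ℝ) := by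
        have : 1 ≤ n := le_trans (Nat.le_add_left 1 _) hn
        exact_mod_cast this
      have hεn : 2 ≤ ε * (n:ℝ) := by
        have h1 : (2/ε : ℝ) ≤ (n:ℝ) := by
          calc (2/ε : ℝ) ≤ (⌈(2/ε : ℝ)⌉₊ : ℝ) := Nat.le_ceil _
            _ ≤ (n:ℝ) := by exact_mod_cast le_trans (Nat.le_succ _) hn
        rw [div_le_iff₀ hε] at h1
        linarith [h1]
      have h5 : 4*z.im^2 = -(ε^2*(n:ℝ)^4) + 4*(n:ℝ)^2 := by
        linear_combination (-4)*B + (2*z.re + ε*(n:ℝ)^2)*A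
      have hy2 : 0 < z.im^2 := lt_of_le_of_ne (sq_nonneg _) (Ne.symm (pow_ne_zero 2 hz))
      have h4' : 4 ≤ (ε*(n:ℝ)) * (ε*(n:ℝ)) := by nlinarith [hεn]
      have h6 : 4*(n:ℝ)^2 ≤ ε^2*(n:ℝ)^4 := by
        have := mul_le_mul_of_nonneg_right h4' (sq_nonneg (n:ℝ))
        nlinarith [this]
      linarith [h5, hy2, h6]
    refine ⟨⟨⌈2/ε⌉₊ + 1, hpart1⟩, ?_⟩
    have hTfin : ∀ n : ℕ, {z : ℂ | z.im ≠ 0 ∧ H n z = 0}.Finite := by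
      intro n
      refine KV_halfplane_finite _ (fun z hz => hz.1) ?_
      rintro z₁ ⟨hz₁, h₁⟩ z₂ ⟨hz₂, h₂⟩ hs
      have q₁ : z₁ ^ 2 + (ε:ℂ) * (n:ℂ)^2 * z₁ + (n:ℂ)^2 = 0 := by
        have := hzeroeq n z₁ h₁
        rw [hK0 z₁ hz₁] at this
        simpa using this
      have q₂ : z₂ ^ 2 + (ε:ℂ) * (n:ℂ)^2 * z₂ + (n:ℂ)^2 = 0 := by
        have := hzeroeq n z₂ h₂
        rw [hK0 z₂ hz₂] at this
        simpa using this
      by_contra hne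
      have hprod : (z₁ - z₂) * (z₁ + z₂ + (ε:ℂ)*(n:ℂ)^2) = 0 := by
        linear_combination q₁ - q₂
      rcases mul_eq_zero.mp hprod with h | h
      · exact hne (sub_eq_zero.mp h)
      · have him : z₁.im + z₂.im = 0 := by
          have h' := congrArg Complex.im h
          have : ((ε:ℂ)*(n:ℂ)^2).im = 0 := by
            rw [show ((ε:ℂ)*(n:ℂ)^2) = ((ε*(n:ℝ)^2 : ℝ):ℂ) by push_cast; ring]
            exact Complex.ofReal_im _
          simpa [Complex.add_im, this] using h'
        have h2 : z₂.im = -z₁.im := by linarith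
        rw [h2] at hs
        nlinarith [sq_nonneg z₁.im]
    have hsub : {z : ℂ | z.im ≠ 0 ∧ ∃ n : ℕ, 1 ≤ n ∧ H n z = 0}
        ⊆ ⋃ n ∈ Finset.range (⌈2/ε⌉₊ + 2), {z : ℂ | z.im ≠ 0 ∧ H n z = 0} := by
      rintro z ⟨hz, n, hn1, hzero⟩
      by_cases hn : n ≤ ⌈2/ε⌉₊ + 1
      · exact Set.mem_biUnion (Finset.mem_range.mpr (by omega)) ⟨hz, hzero⟩
      · exact absurd (hpart1 n (by omega) z hzero) hz
    exact Set.Finite.subset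
      (Set.Finite.biUnion (Finset.range (⌈2/ε⌉₊ + 2)).finite_toSet fun n _ => hTfin n) hsub
end
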